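/- arXiv:1003.1550 — 7 statements merged into one kernel-verified Lean document; each statement's English description precedes it below -/
import Mathlib

section
/- If a social choice function f is implementable (in dominant strategies), then f satisfies positive association of differences (PAD): for all type profiles s, t ∈ 𝕋ⁿ such that f(t) = a and s^a − t^a ≫ s^b − t^b for all b ≠ a, one has f(s) = a. -/
open Function

/-- A type profile: column `t a` is the utility vector in `ℝⁿ` for alternative `a`;
agent `i`'s type (row) is `fun a => t a i`. -/
abbrev Profile (n : ℕ) (A : Type*) := A → Fin n → ℝ

/-- Payment rule `p` implements `f` in dominant strategies on the domain `Dom`: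
no agent `i` can gain by a unilateral deviation (a change of his own row only). -/
def ImplementsOn {n : ℕ} {A : Type*} (Dom : Set (Profile n A)) (f : Profile n A → A)
    (p : Profile n A → Fin n → ℝ) : Prop :=
  ∀ t ∈ Dom, ∀ s ∈ Dom, ∀ i : Fin n,
    (∀ j : Fin n, j ≠ i → ∀ a : A, s a j = t a j) →
    t (f t) i + p t i ≥ t (f s) i + p s i

/-- `f` is implementable in dominant strategies on `Dom`. -/
def ImplementableOn {n : ℕ} {A : Type*} (Dom : Set (Profile n A))
    (f : Profile n A → A) : Prop :=
  ∃ p, ImplementsOn Dom f p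

/-- The choice set `C^f(t)`: alternatives `a` such that raising the column of `a`
by any strictly positive `ε` (staying inside the domain) makes `f` choose `a`. -/
def ChoiceSetOn {n : ℕ} {A : Type*} [DecidableEq A] (Dom : Set (Profile n A))
    (f : Profile n A → A) (t : Profile n A) : Set A :=
  {a | ∀ ε : Fin n → ℝ, (∀ i, 0 < ε i) →
    Function.update t a (t a + ε) ∈ Dom →
    f (Function.update t a (t a + ε)) = a}

/-- `f` is neutral: permuting the columns of a profile permutes the choice set
accordingly (the profile `s` induced by `ρ` has `s^{ρ a} = t^a`, i.e. `s b = t (ρ⁻¹ b)`). -/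
def NeutralOn {n : ℕ} {A : Type*} [DecidableEq A] (Dom : Set (Profile n A))
    (f : Profile n A → A) : Prop :=
  ∀ t ∈ Dom, ∀ ρ : Equiv.Perm A,
    ChoiceSetOn Dom f (fun b => t (ρ.symm b)) = ρ '' ChoiceSetOn Dom f t

/-- The `m`-dimensional open interval domain: agent `i`'s values all lie in the
open interval `(α i, β i)` (endpoints possibly infinite). -/
def IntervalDom (n : ℕ) (A : Type*) (α β : Fin n → EReal) : Set (Profile n A) :=
  {t | ∀ (a : A) (i : Fin n), α i < (t a i : EReal) ∧ (t a i : EReal) < β i}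

/-- The set `𝔻` of feasible utility vectors. -/
def DSet {n : ℕ} (α β : Fin n → EReal) : Set (Fin n → ℝ) :=
  {x | ∀ i : Fin n, α i < (x i : EReal) ∧ (x i : EReal) < β i}

/-- The strict relation `P^f` induced by `f` on utility vectors. -/
def PRel {n : ℕ} {A : Type*} [DecidableEq A] (Dom : Set (Profile n A))
    (f : Profile n A → A) (x y : Fin n → ℝ) : Prop :=
  ∃ t ∈ Dom, ∃ a b : A, a ≠ b ∧ t a = x ∧ t b = y ∧
    a ∈ ChoiceSetOn Dom f t ∧ b ∉ ChoiceSetOn Dom f t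

/-- The indifference relation `I^f` induced by `f` on utility vectors. -/
def IRel {n : ℕ} {A : Type*} [DecidableEq A] (Dom : Set (Profile n A))
    (f : Profile n A → A) (x y : Fin n → ℝ) : Prop :=
  ∃ t ∈ Dom, ∃ a b : A, a ≠ b ∧ t a = x ∧ t b = y ∧
    a ∈ ChoiceSetOn Dom f t ∧ b ∈ ChoiceSetOn Dom f t

/-- The induced social welfare relation `R^f`. -/
def RRel {n : ℕ} {A : Type*} [DecidableEq A] (Dom : Set (Profile n A))
    (f : Profile n A → A) (x y : Fin n → ℝ) : Prop :=
  PRel Dom f x y ∨ IRel Dom f x y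

/-- The domain `𝕋ⁿ = T₁ × … × Tₙ`: each agent `i`'s row lies in `T i ⊆ ℝ^m`. -/
def ProdDom {n : ℕ} {A : Type*} (T : Fin n → Set (A → ℝ)) : Set (Profile n A) :=
  {t | ∀ i : Fin n, (fun a => t a i) ∈ T i}

/-- every implementable social choice function satisfies PAD. -/
theorem implementable_satisfies_PAD
    {n : ℕ} {A : Type*} [Fintype A]
    (hn : 0 < n) (hA : 3 ≤ Fintype.card A)
    (T : Fin n → Set (A → ℝ)) (f : Profile n A → A)
    (hf : ImplementableOn (ProdDom T) f)
    (s t : Profile n A) (hs : s ∈ ProdDom T) (ht : t ∈ ProdDom T)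
    (a : A) (hfa : f t = a)
    (hdom : ∀ b : A, b ≠ a → ∀ i : Fin n, s b i - t b i < s a i - t a i) :
    f s = a := by
  obtain ⟨p, hp⟩ := hf
  -- hybrid profiles: first k agents use s, rest use t
  set u : ℕ → Profile n A := fun k c i => if i.val < k then s c i else t c i with hu
  have hmem : ∀ k, u k ∈ ProdDom T := by
    intro k i
    by_cases h : i.val < k
    · have : (fun c => u k c i) = fun c => s c i := by
        funext c; simp [hu, h]
      rw [this]; exact hs i
    · have : (fun c => u k c i) = fun c => t c i := by
        funext c; simp [hu, h]
      rw [this]; exact ht i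
  have key : ∀ k ≤ n, f (u k) = a := by
    intro k hk
    induction k with
    | zero =>
      have : u 0 = t := by funext c i; simp [hu]
      rw [this]; exact hfa
    | succ k ih =>
      have hkn : k < n := Nat.lt_of_succ_le hk
      have ihk : f (u k) = a := ih (le_of_lt hkn)
      set i : Fin n := ⟨k, hkn⟩ with hi
      have hoff : ∀ j : Fin n, j ≠ i → ∀ c : A, u k c j = u (k + 1) c j := by
        intro j hj c
        have hjk : j.val ≠ k := fun h => hj (Fin.ext h)
        by_cases h : j.val < k
        · simp [hu, h, Nat.lt_succ_of_lt h]
        · have h2 : ¬ j.val < k + 1 := by omega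
          simp [hu, h, h2]
      have hrow_s : ∀ c, u (k + 1) c i = s c i := by
        intro c; simp [hu, hi]
      have hrow_t : ∀ c, u k c i = t c i := by
        intro c; simp [hu, hi]
      have h1 := hp (u (k + 1)) (hmem _) (u k) (hmem _) i hoff
      have h2 := hp (u k) (hmem _) (u (k + 1)) (hmem _) i
        (fun j hj c => (hoff j hj c).symm)
      rw [hrow_s, hrow_s, ihk] at h1
      rw [hrow_t, hrow_t, ihk] at h2
      by_contra hne
      have := hdom (f (u (k + 1))) hne i
      linarith
  have hun : u n = s := by
    funext c i; simp [hu, i.isLt]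
  have := key n le_rfl
  rwa [hun] at this
end

section
/- Suppose each T_i is an m-dimensional open interval domain and f is an implementable social choice function. Then for every type profile t ∈ 𝕋ⁿ, the chosen alternative lies in the choice set: f(t) ∈ C^f(t). In particular every choice set C^f(t) is non-empty. -/
open Function

/-- on open interval domains, the chosen alternative lies in the
choice set; in particular choice sets are non-empty. -/
theorem chosen_mem_choiceSet
    {n : ℕ} {A : Type*} [Fintype A] [DecidableEq A]
    (hn : 0 < n) (hA : 3 ≤ Fintype.card A)
    (α β : Fin n → EReal) (hαβ : ∀ i, α i < β i)
    (f : Profile n A → A)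
    (hf : ImplementableOn (IntervalDom n A α β) f)
    (t : Profile n A) (ht : t ∈ IntervalDom n A α β) :
    f t ∈ ChoiceSetOn (IntervalDom n A α β) f t ∧
      (ChoiceSetOn (IntervalDom n A α β) f t).Nonempty := by
  obtain ⟨p, hp⟩ := hf
  have key : f t ∈ ChoiceSetOn (IntervalDom n A α β) f t := by
    intro ε hε hdom'
    set a := f t with ha
    set t' := Function.update t a (t a + ε) with ht'
    -- hybrid profiles
    set g : ℕ → Profile n A := fun k b i => if (i : ℕ) < k then t' b i else t b i with hg
    have hg0 : g 0 = t := by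
      funext b i; simp [hg]
    have hgn : g n = t' := by
      funext b i; simp [hg, i.isLt]
    have hgDom : ∀ k, g k ∈ IntervalDom n A α β := by
      intro k b i
      simp only [hg]
      split
      · exact hdom' b i
      · exact ht b i
    have ht'a : ∀ i : Fin n, t' a i = t a i + ε i := by
      intro i; simp [ht']
    have ht'b : ∀ b, b ≠ a → ∀ i : Fin n, t' b i = t b i := by
      intro b hb i; simp [ht', Function.update_of_ne hb]
    have main : ∀ k, k ≤ n → f (g k) = a := by
      intro k
      induction k with
      | zero => intro _; rw [hg0]
      | succ k ih =>
        intro hk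
        have hk' : k < n := hk
        have iha := ih (le_of_lt hk')
        set i : Fin n := ⟨k, hk'⟩ with hi
        by_contra hb
        set b := f (g (k+1)) with hbdef
        have hrow : ∀ j : Fin n, j ≠ i → ∀ c : A, g k c j = g (k+1) c j := by
          intro j hj c
          have hjk : (j : ℕ) ≠ k := by
            intro h; exact hj (Fin.ext h)
          simp only [hg]
          by_cases hlt : (j : ℕ) < k
          · rw [if_pos hlt, if_pos (Nat.lt_succ_of_lt hlt)]
          · rw [if_neg hlt, if_neg (by omega)]
        have hival : (i : ℕ) = k := rfl
        have h1 := hp (g (k+1)) (hgDom _) (g k) (hgDom _) i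
          (fun j hj c => hrow j hj c)
        have h2 := hp (g k) (hgDom _) (g (k+1)) (hgDom _) i
          (fun j hj c => (hrow j hj c).symm)
        rw [iha] at h1 h2
        have e1 : g (k+1) a i = t a i + ε i := by
          simp only [hg]
          rw [if_pos (by omega : (i : ℕ) < k + 1)]
          exact ht'a i
        have e2 : g k a i = t a i := by
          simp only [hg]
          rw [if_neg (by omega : ¬ (i : ℕ) < k)]
        have e3 : g (k+1) b i = t b i := by
          simp only [hg]
          rw [if_pos (by omega : (i : ℕ) < k + 1)]
          exact ht'b b hb i
        have e4 : g k b i = t b i := by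
          simp only [hg]
          rw [if_neg (by omega : ¬ (i : ℕ) < k)]
        rw [e1, ← hbdef, e3] at h1
        rw [e2, ← hbdef, e4] at h2
        have := hε i
        linarith
    have := main n le_rfl
    rw [hgn] at this
    exact this
  exact ⟨key, ⟨f t, key⟩⟩
end

section
/- Suppose each T_i is an m-dimensional open interval domain and f is an implementable social choice function. If f is neutral, then f satisfies non-imposition: for every alternative a ∈ A there exists a type profile t ∈ 𝕋ⁿ with f(t) = a. -/
open Function

/-- One-step monotonicity: if a single agent strictly increases only the value of
the chosen alternative `b`, then `f` still chooses `b`. -/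
lemma step_lemma {n : ℕ} {A : Type*} {Dom : Set (Profile n A)}
    {f : Profile n A → A} {p : Profile n A → Fin n → ℝ}
    (himp : ImplementsOn Dom f p)
    {t t' : Profile n A} (ht : t ∈ Dom) (ht' : t' ∈ Dom) {i : Fin n} {b : A}
    (hrow : ∀ j : Fin n, j ≠ i → ∀ a : A, t' a j = t a j)
    (hcol : ∀ a : A, a ≠ b → t' a i = t a i)
    (hlt : t b i < t' b i) (hfb : f t = b) : f t' = b := by
  have h1 := himp t' ht' t ht i (fun j hj a => (hrow j hj a).symm)
  have h2 := himp t ht t' ht' i (fun j hj a => (hrow j hj a))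
  by_contra hc
  have e1 : t' (f t') i = t (f t') i := hcol _ hc
  rw [hfb] at h1 h2
  linarith [h1, h2, e1]

/-- `f t` is in the choice set of `t` on an interval domain. -/
lemma f_mem_choiceSet {n : ℕ} {A : Type*} [DecidableEq A]
    {α β : Fin n → EReal} {f : Profile n A → A}
    (hf : ImplementableOn (IntervalDom n A α β) f)
    {t : Profile n A} (ht : t ∈ IntervalDom n A α β) :
    f t ∈ ChoiceSetOn (IntervalDom n A α β) f t := by
  obtain ⟨p, himp⟩ := hf
  intro ε hε hmem
  set b := f t with hb
  set T : ℕ → Profile n A :=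
    fun k a j => t a j + (if a = b ∧ j.val < k then ε j else 0) with hT
  have hT0 : T 0 = t := by
    funext a j; simp [hT]
  have hTmem : ∀ k, T k ∈ IntervalDom n A α β := by
    intro k a j
    by_cases h : a = b ∧ j.val < k
    · have := hmem b j
      simpa [hT, h, Function.update_self, h.1] using (by
        have := hmem a j
        simpa [h.1, Function.update_self] using this)
    · simpa [hT, h] using ht a j
  have hTn : T n = Function.update t b (t b + ε) := by
    funext a j
    by_cases h : a = b
    · simp [hT, h, j.isLt, Function.update_self]
    · simp [hT, h, Function.update_of_ne h]
  have key : ∀ k, k ≤ n → f (T k) = b := by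
    intro k
    induction k with
    | zero => intro _; rw [hT0]
    | succ k ih =>
      intro hk1
      have hk : k < n := hk1
      have ihk := ih (le_of_lt hk)
      refine step_lemma (i := ⟨k, hk⟩) himp (hTmem k) (hTmem (k+1)) ?_ ?_ ?_ ihk
      · intro j hj a
        have hjv : (j : ℕ) ≠ k := fun h => hj (Fin.ext h)
        have : (j : ℕ) < k + 1 ↔ (j : ℕ) < k := by omega
        simp [hT, this]
      · intro a ha
        simp [hT, ha]
      · have hjk : ((⟨k, hk⟩ : Fin n) : ℕ) = k := rfl
        simp only [hT, hjk]
        simp [hε ⟨k, hk⟩]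
  have := key n le_rfl
  rwa [hTn] at this

/-- on open interval domains, an implementable and neutral social
choice function satisfies non-imposition. -/
theorem neutral_implies_nonImposition
    {n : ℕ} {A : Type*} [Fintype A] [DecidableEq A]
    (hn : 0 < n) (hA : 3 ≤ Fintype.card A)
    (α β : Fin n → EReal) (hαβ : ∀ i, α i < β i)
    (f : Profile n A → A)
    (hf : ImplementableOn (IntervalDom n A α β) f)
    (hneu : NeutralOn (IntervalDom n A α β) f) :
    ∀ a : A, ∃ t ∈ IntervalDom n A α β, f t = a := by
  intro a
  have hx : ∀ i, ∃ r : ℝ, α i < (r : EReal) ∧ (r : EReal) < β i :=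
    fun i => EReal.exists_between_coe_real (hαβ i)
  choose x hx1 hx2 using hx
  set t : Profile n A := fun _ => x with htdef
  have ht : t ∈ IntervalDom n A α β := fun c i => ⟨hx1 i, hx2 i⟩
  have hb0 := f_mem_choiceSet hf ht
  have hperm := hneu t ht (Equiv.swap (f t) a)
  have hconst : (fun c => t ((Equiv.swap (f t) a).symm c)) = t := rfl
  rw [hconst] at hperm
  have ha : a ∈ ChoiceSetOn (IntervalDom n A α β) f t := by
    rw [hperm]
    exact ⟨f t, hb0, Equiv.swap_apply_left (f t) a⟩
  have hε : ∀ i, ∃ r : ℝ, x i < r ∧ (r : EReal) < β i := by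
    intro i
    obtain ⟨r, h1, h2⟩ := EReal.exists_between_coe_real (hx2 i)
    exact ⟨r, EReal.coe_lt_coe_iff.1 h1, h2⟩
  choose r hr1 hr2 using hε
  set ε : Fin n → ℝ := fun i => r i - x i with hεdef
  have hεpos : ∀ i, 0 < ε i := fun i => sub_pos.2 (hr1 i)
  have hmem : Function.update t a (t a + ε) ∈ IntervalDom n A α β := by
    intro c i
    by_cases h : c = a
    · rw [h, Function.update_self]
      have hv : (t a + ε) i = r i := by simp [hεdef, htdef]
      rw [hv]
      refine ⟨lt_trans (hx1 i) ?_, hr2 i⟩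
      exact_mod_cast hr1 i
    · rw [Function.update_of_ne h]; exact ⟨hx1 i, hx2 i⟩
  exact ⟨Function.update t a (t a + ε), hmem, ha ε hεpos hmem⟩
end

section
/- (Binary Independence) Suppose each T_i is an m-dimensional open interval domain and f is an implementable social choice function. Let t = (t^a, t^b, t^{−ab}) and s = (s^a = t^a, s^b = t^b, s^{−ab}) be two type profiles that agree on the columns of alternatives a and b. Then: (a) if a, b ∈ C^f(t), then a ∈ C^f(s) if and only if b ∈ C^f(s); (b) if a ∈ C^f(t) but b ∉ C^f(t), then b ∉ C^f(s). -/
open Function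

set_option linter.unusedSectionVars false
set_option linter.unusedVariables false
section BinIndep

variable {n : ℕ} {A : Type*} [Fintype A] [DecidableEq A]
variable {α β : Fin n → EReal} {f : Profile n A → A}

lemma exists_room (x : ℝ) (b : EReal) (h : (x : EReal) < b) :
    ∃ γ : ℝ, 0 < γ ∧ ((x + γ : ℝ) : EReal) < b := by
  induction b using EReal.rec with
  | bot => exact absurd h (by simp)
  | coe r =>
      have hx : x < r := by exact_mod_cast h
      exact ⟨(r - x) / 2, by linarith, by exact_mod_cast (by linarith : x + (r - x)/2 < r)⟩
  | top => exact ⟨1, one_pos, EReal.coe_lt_top _⟩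

lemma keep_winner {p : Profile n A → Fin n → ℝ}
    (hp : ImplementsOn (IntervalDom n A α β) f p)
    {t z : Profile n A} (ht : t ∈ IntervalDom n A α β) (hz : z ∈ IntervalDom n A α β)
    {w : A} (hst : ∀ c, c ≠ w → ∀ i, z c i - t c i < z w i - t w i)
    (hft : f t = w) : f z = w := by
  set h : ℕ → Profile n A := fun k a i => if (i : ℕ) < k then z a i else t a i with hh
  have hmem : ∀ k, h k ∈ IntervalDom n A α β := by
    intro k a i
    by_cases hi : (i : ℕ) < k
    · simpa [hh, hi] using hz a i
    · simpa [hh, hi] using ht a i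
  have key : ∀ k, f (h k) = w := by
    intro k
    induction k with
    | zero =>
        have h0 : h 0 = t := by
          funext a i; simp [hh]
        rw [h0]; exact hft
    | succ k ih =>
        by_cases hk : k < n
        · set i : Fin n := ⟨k, hk⟩ with hi
          have hrows : ∀ j : Fin n, j ≠ i → ∀ a, h k a j = h (k+1) a j := by
            intro j hj a
            have hjk : (j : ℕ) ≠ k := by
              intro hc; exact hj (Fin.ext (by simpa [hi] using hc))
            rcases Nat.lt_or_ge (j : ℕ) k with hlt | hge
            · simp [hh, hlt, Nat.lt_succ_of_lt hlt]
            · have h1 : ¬ ((j:ℕ) < k) := Nat.not_lt.mpr hge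
              have h2 : ¬ ((j:ℕ) < k + 1) := by omega
              simp [hh, h1, h2]
          have hA1 := hp (h (k+1)) (hmem _) (h k) (hmem _) i hrows
          have hA2 := hp (h k) (hmem _) (h (k+1)) (hmem _) i
            (fun j hj a => (hrows j hj a).symm)
          have ev1 : ∀ a, h (k+1) a i = z a i := by
            intro a; simp [hh, hi]
          have ev2 : ∀ a, h k a i = t a i := by
            intro a; simp [hh, hi]
          rw [ih] at hA1 hA2
          by_contra hne
          have hstr := hst (f (h (k+1))) hne i
          rw [ev1 (f (h (k+1))), ev1 w] at hA1
          rw [ev2 w, ev2 (f (h (k+1)))] at hA2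
          linarith
        · have heq : h (k+1) = h k := by
            funext a j
            have hj : (j : ℕ) < k := lt_of_lt_of_le j.isLt (le_of_not_gt hk)
            simp [hh, hj, Nat.lt_succ_of_lt hj]
          rw [heq]; exact ih
  have hzn : h n = z := by
    funext a i; simp [hh, i.isLt]
  rw [← hzn]; exact key n

lemma winner_mem {p : Profile n A → Fin n → ℝ}
    (hp : ImplementsOn (IntervalDom n A α β) f p)
    {t : Profile n A} (ht : t ∈ IntervalDom n A α β) {w : A} (hw : f t = w) :
    w ∈ ChoiceSetOn (IntervalDom n A α β) f t := by
  intro ε hε hmem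
  refine keep_winner hp ht hmem ?_ hw
  intro c hc i
  rw [Function.update_of_ne hc, Function.update_self]
  have := hε i
  simp only [Pi.add_apply]
  linarith

lemma choice_keep (hcard : 3 ≤ Fintype.card A) {p : Profile n A → Fin n → ℝ}
    (hp : ImplementsOn (IntervalDom n A α β) f p)
    {t z : Profile n A} {w : A}
    (hw : w ∈ ChoiceSetOn (IntervalDom n A α β) f t)
    (ht : t ∈ IntervalDom n A α β) (hz : z ∈ IntervalDom n A α β)
    (hst : ∀ c, c ≠ w → ∀ i, z c i - t c i < z w i - t w i) : f z = w := by
  have hne : (Finset.univ.erase w : Finset A).Nonempty := by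
    rw [← Finset.card_pos, Finset.card_erase_of_mem (Finset.mem_univ w), Finset.card_univ]
    omega
  choose γ hγpos hγlt using fun i => exists_room (t w i) (β i) (ht w i).2
  set gap : Fin n → ℝ := fun i =>
    (Finset.univ.erase w).inf' hne (fun c => (z w i - t w i) - (z c i - t c i)) with hgapdef
  have hgap : ∀ i, 0 < gap i := by
    intro i
    rw [hgapdef]
    rw [Finset.lt_inf'_iff]
    intro c hc
    have := hst c (Finset.ne_of_mem_erase hc) i
    linarith
  have hgaple : ∀ c, c ≠ w → ∀ i, gap i ≤ (z w i - t w i) - (z c i - t c i) := by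
    intro c hc i
    exact Finset.inf'_le _ (Finset.mem_erase.mpr ⟨hc, Finset.mem_univ c⟩)
  set ε : Fin n → ℝ := fun i => min (gap i) (γ i) / 2 with hεdef
  have hεpos : ∀ i, 0 < ε i := fun i => div_pos (lt_min (hgap i) (hγpos i)) two_pos
  set u := Function.update t w (t w + ε) with hu
  have humem : u ∈ IntervalDom n A α β := by
    intro c i
    by_cases hc : c = w
    · subst hc
      rw [hu, Function.update_self]
      have hεγ : ε i ≤ γ i := by
        have h1 := min_le_right (gap i) (γ i)
        have h2 := hγpos i
        have h3 := hgap i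
        rw [hεdef]; dsimp only; rw [div_le_iff₀ (by norm_num : (0:ℝ) < 2)]
        nlinarith [min_le_right (gap i) (γ i)]
      have hev : (t c + ε) i = t c i + ε i := rfl
      rw [hev]
      constructor
      · refine lt_of_lt_of_le (ht c i).1 ?_
        exact_mod_cast (by linarith [hεpos i] : (t c i : ℝ) ≤ t c i + ε i)
      · refine lt_of_le_of_lt ?_ (hγlt i)
        exact_mod_cast (by linarith : (t c i : ℝ) + ε i ≤ t c i + γ i)
    · rw [hu, Function.update_of_ne hc]; exact ht c i
  have hfu : f u = w := hw ε hεpos humem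
  refine keep_winner hp humem hz ?_ hfu
  intro c hc i
  have h1 : u c i = t c i := by rw [hu, Function.update_of_ne hc]
  have h2 : u w i = t w i + ε i := by rw [hu, Function.update_self]; rfl
  have h3 : ε i < gap i := by
    rw [hεdef]; simp only
    have := min_le_left (gap i) (γ i)
    linarith [hgap i, hγpos i]
  have := hgaple c hc i
  rw [h1, h2]
  linarith

lemma down_keep (hcard : 3 ≤ Fintype.card A) {p : Profile n A → Fin n → ℝ}
    (hp : ImplementsOn (IntervalDom n A α β) f p)
    {P Q : Profile n A} {b : A}
    (hb : b ∈ ChoiceSetOn (IntervalDom n A α β) f P)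
    (hP : P ∈ IntervalDom n A α β) (hQ : Q ∈ IntervalDom n A α β)
    (heq : Q b = P b) (hle : ∀ c, c ≠ b → ∀ i, Q c i ≤ P c i) :
    b ∈ ChoiceSetOn (IntervalDom n A α β) f Q := by
  intro ε hε hmem
  refine choice_keep hcard hp hb hP hmem ?_
  intro c hc i
  rw [Function.update_of_ne hc, Function.update_self]
  have := hle c hc i
  have := hε i
  simp only [Pi.add_apply]
  have hQb : Q b i = P b i := by rw [heq]
  rw [hQb]
  linarith

end BinIndep
section BinIndep2

variable {n : ℕ} {A : Type*} [Fintype A] [DecidableEq A]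
variable {α β : Fin n → EReal} {f : Profile n A → A}

lemma bump_mem {x u v : ℝ} {lo hi : EReal} (h1 : lo < (x : EReal))
    (h2 : ((x + u : ℝ) : EReal) < hi) (h3 : 0 ≤ v) (h4 : v ≤ u) :
    lo < ((x + v : ℝ) : EReal) ∧ ((x + v : ℝ) : EReal) < hi := by
  constructor
  · refine lt_of_lt_of_le h1 ?_
    exact_mod_cast (by linarith : x ≤ x + v)
  · refine lt_of_le_of_lt ?_ h2
    exact_mod_cast (by linarith : x + v ≤ x + u)

lemma caseA (hcard : 3 ≤ Fintype.card A) {p : Profile n A → Fin n → ℝ}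
    (hp : ImplementsOn (IntervalDom n A α β) f p)
    {t s : Profile n A} (ht : t ∈ IntervalDom n A α β) (hs : s ∈ IntervalDom n A α β)
    {a b : A} (hab : a ≠ b) (hsa : s a = t a) (hsb : s b = t b)
    (hlow : ∀ c, c ≠ a → c ≠ b → ∀ i, s c i ≤ t c i)
    {ε0 : Fin n → ℝ} (hε0 : ∀ i, 0 < ε0 i)
    (hβb : ∀ i, ((t b i + ε0 i : ℝ) : EReal) < β i)
    {Γa : Fin n → ℝ} (hΓa : ∀ i, 0 < Γa i)
    (hΓalt : ∀ i, ((t a i + Γa i : ℝ) : EReal) < β i)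
    {ε d : Fin n → ℝ} (hε : ∀ i, 0 < ε i) (hεle : ∀ i, ε i ≤ ε0 i)
    (hd0 : ∀ i, 0 ≤ d i) (hd1 : ∀ i, d i ≤ ε i / 8) (hd2 : ∀ i, d i ≤ Γa i / 8)
    (hz0mem : Function.update (Function.update t b (t b + ε)) a (t a + d) ∈ IntervalDom n A α β)
    (hfz0 : f (Function.update (Function.update t b (t b + ε)) a (t a + d)) = a) :
    b ∉ ChoiceSetOn (IntervalDom n A α β) f s := by
  have hba : b ≠ a := hab.symm
  set z0 := Function.update (Function.update t b (t b + ε)) a (t a + d) with hz0def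
  -- evals for z0
  have hz0a : ∀ i, z0 a i = t a i + d i := fun i => by
    rw [hz0def, Function.update_self]; rfl
  have hz0b : ∀ i, z0 b i = t b i + ε i := fun i => by
    rw [hz0def, Function.update_of_ne hba, Function.update_self]; rfl
  have hz0c : ∀ c, c ≠ a → c ≠ b → ∀ i, z0 c i = t c i := fun c hca hcb i => by
    rw [hz0def, Function.update_of_ne hca, Function.update_of_ne hcb]
  -- numbers
  set m0 : Fin n → ℝ := fun i => min (Γa i) (ε i) / 8 with hm0def
  have hm0pos : ∀ i, 0 < m0 i := fun i => div_pos (lt_min (hΓa i) (hε i)) (by norm_num)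
  have hm0Γ : ∀ i, m0 i ≤ Γa i / 8 := fun i =>
    div_le_div_of_nonneg_right (min_le_left _ _) (by norm_num) |>.trans_eq rfl
  have hm0ε : ∀ i, m0 i ≤ ε i / 8 := fun i =>
    div_le_div_of_nonneg_right (min_le_right _ _) (by norm_num) |>.trans_eq rfl
  set D : Fin n → ℝ := fun i => d i + m0 i with hDdef
  set A' : Fin n → ℝ := fun i => D i + m0 i / 2 with hA'def
  set η : Fin n → ℝ := fun i => m0 i / 4 with hηdef
  set B : Fin n → ℝ := fun i => D i + m0 i with hBdef
  -- profiles
  set z' := Function.update (Function.update s b (fun i => t b i + ε i / 2)) a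
      (fun i => t a i + D i) with hz'def
  have hz'a : ∀ i, z' a i = t a i + D i := fun i => by
    rw [hz'def, Function.update_self]
  have hz'b : ∀ i, z' b i = t b i + ε i / 2 := fun i => by
    rw [hz'def, Function.update_of_ne hba, Function.update_self]
  have hz'c : ∀ c, c ≠ a → c ≠ b → ∀ i, z' c i = s c i := fun c hca hcb i => by
    rw [hz'def, Function.update_of_ne hca, Function.update_of_ne hcb]
  have hz'mem : z' ∈ IntervalDom n A α β := by
    intro c i
    by_cases hca : c = a
    · subst hca
      rw [hz'a]
      refine bump_mem (ht c i).1 (hΓalt i) ?_ ?_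
      · have := hd0 i; have := hm0pos i; rw [hDdef]; dsimp only; linarith
      · have := hd2 i; have := hm0Γ i; have := hΓa i; rw [hDdef]; dsimp only; linarith
    · by_cases hcb : c = b
      · subst hcb
        rw [hz'b]
        refine bump_mem (ht c i).1 (hβb i) ?_ ?_
        · have := hε i; linarith
        · have := hεle i; have := hε i; linarith
      · rw [hz'c c hca hcb]; exact hs c i
  have haz0 : a ∈ ChoiceSetOn (IntervalDom n A α β) f z0 := winner_mem hp hz0mem hfz0
  have hfz' : f z' = a := by
    refine choice_keep hcard hp haz0 hz0mem hz'mem ?_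
    intro c hc i
    rw [hz'a, hz0a]
    by_cases hcb : c = b
    · subst hcb
      rw [hz'b i, hz0b i]
      have := hm0pos i; have := hε i
      rw [hDdef]; dsimp only; linarith
    · rw [hz'c c hc hcb, hz0c c hc hcb]
      have := hlow c hc hcb i
      have := hm0pos i
      rw [hDdef]; dsimp only; linarith
  have haz' : a ∈ ChoiceSetOn (IntervalDom n A α β) f z' := winner_mem hp hz'mem hfz'
  -- suppose b ∈ C(s)
  intro hbs
  have hηpos : ∀ i, 0 < η i := fun i => by
    have := hm0pos i; rw [hηdef]; dsimp only; linarith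
  set r := Function.update s b (s b + η) with hrdef
  have hra : ∀ i, r a i = t a i := fun i => by
    rw [hrdef, Function.update_of_ne hab, hsa]
  have hrb : ∀ i, r b i = t b i + η i := fun i => by
    rw [hrdef, Function.update_self]
    simp only [Pi.add_apply]
    rw [hsb]
  have hrc : ∀ c, c ≠ a → c ≠ b → ∀ i, r c i = s c i := fun c hca hcb i => by
    rw [hrdef, Function.update_of_ne hcb]
  have hrmem : r ∈ IntervalDom n A α β := by
    intro c i
    by_cases hcb : c = b
    · subst hcb
      rw [hrb]
      refine bump_mem (ht c i).1 (hβb i) (le_of_lt (hηpos i)) ?_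
      have h1 := hm0ε i; have h2 := hε i; have h3 := hεle i
      rw [hηdef]; dsimp only; linarith
    · rw [hrdef, Function.update_of_ne hcb]; exact hs c i
  have hfr : f r = b := by
    have := hbs η hηpos hrmem
    rw [hrdef]; exact this
  have hbr : b ∈ ChoiceSetOn (IntervalDom n A α β) f r := winner_mem hp hrmem hfr
  -- the crossing profile w
  set w := Function.update (Function.update s b (fun i => t b i + B i)) a
      (fun i => t a i + A' i) with hwdef
  have hwa : ∀ i, w a i = t a i + A' i := fun i => by
    rw [hwdef, Function.update_self]
  have hwb : ∀ i, w b i = t b i + B i := fun i => by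
    rw [hwdef, Function.update_of_ne hba, Function.update_self]
  have hwc : ∀ c, c ≠ a → c ≠ b → ∀ i, w c i = s c i := fun c hca hcb i => by
    rw [hwdef, Function.update_of_ne hca, Function.update_of_ne hcb]
  have hwmem : w ∈ IntervalDom n A α β := by
    intro c i
    by_cases hca : c = a
    · subst hca
      rw [hwa]
      refine bump_mem (ht c i).1 (hΓalt i) ?_ ?_
      · have := hd0 i; have := hm0pos i; rw [hA'def, hDdef]; dsimp only; linarith
      · have := hd2 i; have := hm0Γ i; have := hΓa i; rw [hA'def, hDdef]; dsimp only; linarith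
    · by_cases hcb : c = b
      · subst hcb
        rw [hwb]
        refine bump_mem (ht c i).1 (hβb i) ?_ ?_
        · have := hd0 i; have := hm0pos i; rw [hBdef, hDdef]; dsimp only; linarith
        · have h1 := hd1 i; have h2 := hm0ε i; have h3 := hεle i; have h4 := hε i
          rw [hBdef, hDdef]; dsimp only; linarith
      · rw [hwc c hca hcb]; exact (hs c i)
  have hfw1 : f w = a := by
    refine choice_keep hcard hp haz' hz'mem hwmem ?_
    intro c hc i
    rw [hwa, hz'a]
    by_cases hcb : c = b
    · subst hcb
      rw [hwb i, hz'b i]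
      have h1 := hd1 i; have h2 := hm0ε i; have h3 := hm0pos i
      rw [hA'def, hBdef, hDdef]; dsimp only; linarith
    · rw [hwc c hc hcb, hz'c c hc hcb]
      have := hm0pos i
      rw [hA'def]; dsimp only; linarith
  have hfw2 : f w = b := by
    refine choice_keep hcard hp hbr hrmem hwmem ?_
    intro c hc i
    rw [hwb, hrb]
    by_cases hca : c = a
    · subst hca
      rw [hwa i, hra i]
      have := hm0pos i
      rw [hA'def, hBdef, hηdef, hDdef]; dsimp only; linarith
    · rw [hwc c hca hc, hrc c hca hc]
      have h1 := hm0pos i; have h2 := hd0 i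
      rw [hBdef, hηdef, hDdef]; dsimp only; linarith
  exact hab (hfw1.symm.trans hfw2)

end BinIndep2
section BinIndep3

variable {n : ℕ} {A : Type*} [Fintype A] [DecidableEq A]
variable {α β : Fin n → EReal} {f : Profile n A → A}

lemma down_b (hcard : 3 ≤ Fintype.card A) {p : Profile n A → Fin n → ℝ}
    (hp : ImplementsOn (IntervalDom n A α β) f p)
    {t s : Profile n A} (ht : t ∈ IntervalDom n A α β) (hs : s ∈ IntervalDom n A α β)
    {a b : A} (hab : a ≠ b) (hsa : s a = t a) (hsb : s b = t b)
    (hlow : ∀ c, c ≠ a → c ≠ b → ∀ i, s c i ≤ t c i)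
    (haC : a ∈ ChoiceSetOn (IntervalDom n A α β) f t)
    (hbC : b ∉ ChoiceSetOn (IntervalDom n A α β) f t) :
    b ∉ ChoiceSetOn (IntervalDom n A α β) f s := by
  have hba : b ≠ a := hab.symm
  -- extract a witness bump where b loses
  have hbC' : ∃ ε : Fin n → ℝ, (∀ i, 0 < ε i) ∧
      Function.update t b (t b + ε) ∈ IntervalDom n A α β ∧
      f (Function.update t b (t b + ε)) ≠ b := by
    by_contra hcon
    push_neg at hcon
    exact hbC (fun ε hε hm => hcon ε hε hm)
  obtain ⟨ε0, hε0, hy0mem, hy0ne⟩ := hbC'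
  -- rooms above every column of t
  choose Γ hΓpos hΓlt using fun (c : A) (i : Fin n) => exists_room (t c i) (β i) (ht c i).2
  have hβb : ∀ i, ((t b i + ε0 i : ℝ) : EReal) < β i := by
    intro i
    have := (hy0mem b i).2
    simpa [Function.update_self] using this
  set Y0 := Function.update t b (t b + ε0) with hY0def
  have hY0a : Y0 a = t a := Function.update_of_ne hab _ t
  have hY0b : ∀ i, Y0 b i = t b i + ε0 i := fun i => by
    rw [hY0def, Function.update_self]; rfl
  have hY0c : ∀ c, c ≠ b → Y0 c = t c := fun c hc => Function.update_of_ne hc _ t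
  by_cases hfY0a : f Y0 = a
  · -- case A with ε := ε0, d := 0
    have hz0eq : Function.update (Function.update t b (t b + ε0)) a (t a + (fun _ => (0:ℝ))) = Y0 := by
      have h1 : t a + (fun _ => (0:ℝ)) = Y0 a := by
        funext i; rw [hY0a]; simp
      rw [← hY0def, h1, Function.update_eq_self]
    refine caseA hcard hp ht hs hab hsa hsb hlow hε0 hβb (hΓpos a) (hΓlt a)
      hε0 (fun i => le_refl _) (fun i => le_refl _)
      (fun i => by linarith [hε0 i]) (fun i => by linarith [hΓpos a i]) ?_ ?_
    · rw [hz0eq]; exact hy0mem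
    · rw [hz0eq]; exact hfY0a
  · set c := f Y0 with hcdef
    have hcb : c ≠ b := hy0ne
    have hca : c ≠ a := hfY0a
    have hcC : c ∈ ChoiceSetOn (IntervalDom n A α β) f Y0 := winner_mem hp hy0mem rfl
    -- the small numbers
    set g : Fin n → ℝ := fun i => min (Γ c i) (ε0 i / 4) / 2 with hgdef
    have hgpos : ∀ i, 0 < g i := fun i =>
      div_pos (lt_min (hΓpos c i) (by linarith [hε0 i])) (by norm_num)
    have hgΓ : ∀ i, g i ≤ Γ c i / 2 := fun i => by
      rw [hgdef]; dsimp only; nlinarith [min_le_left (Γ c i) (ε0 i / 4)]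
    have hgε : ∀ i, g i ≤ ε0 i / 8 := fun i => by
      rw [hgdef]; dsimp only; nlinarith [min_le_right (Γ c i) (ε0 i / 4)]
    set δ : Fin n → ℝ := fun i => min (g i) (min (Γ a i) (ε0 i / 2)) / 8 with hδdef
    have hδpos : ∀ i, 0 < δ i := fun i =>
      div_pos (lt_min (hgpos i) (lt_min (hΓpos a i) (by linarith [hε0 i]))) (by norm_num)
    have hδg : ∀ i, δ i ≤ g i / 8 := fun i => by
      rw [hδdef]; dsimp only; nlinarith [min_le_left (g i) (min (Γ a i) (ε0 i / 2))]
    have hδΓa : ∀ i, δ i ≤ Γ a i / 8 := fun i => by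
      rw [hδdef]; dsimp only
      nlinarith [min_le_right (g i) (min (Γ a i) (ε0 i / 2)),
        min_le_left (Γ a i) (ε0 i / 2)]
    have hδε : ∀ i, δ i ≤ ε0 i / 16 := fun i => by
      rw [hδdef]; dsimp only
      nlinarith [min_le_right (g i) (min (Γ a i) (ε0 i / 2)),
        min_le_right (Γ a i) (ε0 i / 2)]
    -- the profile z
    set z := Function.update (Function.update t b (t b + fun i => ε0 i / 2)) a (t a + δ)
      with hzdef
    have hza : ∀ i, z a i = t a i + δ i := fun i => by
      rw [hzdef, Function.update_self]; rfl
    have hzb : ∀ i, z b i = t b i + ε0 i / 2 := fun i => by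
      rw [hzdef, Function.update_of_ne hba, Function.update_self]; rfl
    have hzc : ∀ c', c' ≠ a → c' ≠ b → ∀ i, z c' i = t c' i := fun c' h1 h2 i => by
      rw [hzdef, Function.update_of_ne h1, Function.update_of_ne h2]
    have hzmem : z ∈ IntervalDom n A α β := by
      intro c' i
      by_cases h1 : c' = a
      · subst h1; rw [hza]
        refine bump_mem (ht c' i).1 (hΓlt c' i) (le_of_lt (hδpos i)) ?_
        have := hδΓa i; have := hΓpos c' i; linarith
      · by_cases h2 : c' = b
        · subst h2; rw [hzb]
          exact bump_mem (ht c' i).1 (hβb i) (by linarith [hε0 i]) (by linarith [hε0 i])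
        · rw [hzc c' h1 h2]; exact ht c' i
    by_cases hfza : f z = a
    · -- case A with ε := ε0/2, d := δ
      refine caseA hcard hp ht hs hab hsa hsb hlow hε0 hβb (hΓpos a) (hΓlt a)
        (ε := fun i => ε0 i / 2) (d := δ)
        (fun i => by linarith [hε0 i]) (fun i => by linarith [hε0 i])
        (fun i => le_of_lt (hδpos i)) (fun i => by linarith [hδε i]) (fun i => hδΓa i)
        ?_ ?_
      · exact hzmem
      · exact hfza
    by_cases hfzb : f z = b
    · -- crossing contradiction with c ∈ C(Y0)
      exfalso
      have hbz : b ∈ ChoiceSetOn (IntervalDom n A α β) f z := winner_mem hp hzmem hfzb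
      set w := Function.update (Function.update (Function.update t b
          (fun i => t b i + (ε0 i / 2 + 2 * g i))) a (fun i => t a i + δ i / 2)) c
          (fun i => t c i + g i) with hwdef
      have hwc : ∀ i, w c i = t c i + g i := fun i => by
        rw [hwdef, Function.update_self]
      have hwa : ∀ i, w a i = t a i + δ i / 2 := fun i => by
        rw [hwdef, Function.update_of_ne (Ne.symm hca), Function.update_self]
      have hwb : ∀ i, w b i = t b i + (ε0 i / 2 + 2 * g i) := fun i => by
        rw [hwdef, Function.update_of_ne (Ne.symm hcb), Function.update_of_ne hba,
          Function.update_self]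
      have hwo : ∀ c', c' ≠ a → c' ≠ b → c' ≠ c → ∀ i, w c' i = t c' i := by
        intro c' h1 h2 h3 i
        rw [hwdef, Function.update_of_ne h3, Function.update_of_ne h1,
          Function.update_of_ne h2]
      have hwmem : w ∈ IntervalDom n A α β := by
        intro c' i
        by_cases h3 : c' = c
        · rw [h3, hwc]
          refine bump_mem (ht c i).1 (hΓlt c i) (le_of_lt (hgpos i)) ?_
          have := hgΓ i; have := hΓpos c i; linarith
        · by_cases h1 : c' = a
          · subst h1; rw [hwa]
            refine bump_mem (ht c' i).1 (hΓlt c' i) (by linarith [hδpos i]) ?_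
            have := hδΓa i; have := hΓpos c' i; linarith
          · by_cases h2 : c' = b
            · subst h2; rw [hwb]
              refine bump_mem (ht c' i).1 (hβb i) ?_ ?_
              · have := hε0 i; have := hgpos i; linarith
              · have := hgε i; have := hε0 i; linarith
            · rw [hwo c' h1 h2 h3]; exact ht c' i
      have hfw1 : f w = b := by
        refine choice_keep hcard hp hbz hzmem hwmem ?_
        intro c' hc' i
        rw [hwb, hzb]
        by_cases h1 : c' = a
        · subst h1; rw [hwa i, hza i]
          have := hgpos i; have := hδpos i; linarith
        · by_cases h3 : c' = c
          · rw [h3, hwc i, hzc c hca hcb i]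
            have := hgpos i; linarith
          · rw [hwo c' h1 hc' h3, hzc c' h1 hc' i]
            have := hgpos i; linarith
      have hfw2 : f w = c := by
        refine choice_keep hcard hp hcC hy0mem hwmem ?_
        intro c' hc' i
        rw [hwc, hY0c c hcb]
        by_cases h1 : c' = a
        · subst h1; rw [hwa i, hY0a]
          have h4 := hδg i; have := hgpos i; have := hδpos i; linarith
        · by_cases h2 : c' = b
          · subst h2; rw [hwb i, hY0b i]
            have := hgε i; have := hgpos i; have := hε0 i; linarith
          · rw [hwo c' h1 h2 hc', hY0c c' h2]
            have := hgpos i; linarith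
      exact hcb (hfw2.symm.trans hfw1)
    · -- F4'' contradiction: f z = e ∉ {a,b} is impossible
      exfalso
      set e := f z with hedef
      have hea : e ≠ a := hfza
      have heb : e ≠ b := hfzb
      have heC : e ∈ ChoiceSetOn (IntervalDom n A α β) f z := winner_mem hp hzmem rfl
      set ηe : Fin n → ℝ := fun i => min (Γ e i) (δ i) / 16 with hηedef
      have hηepos : ∀ i, 0 < ηe i := fun i =>
        div_pos (lt_min (hΓpos e i) (hδpos i)) (by norm_num)
      have hηeΓ : ∀ i, ηe i ≤ Γ e i / 16 := fun i => by
        rw [hηedef]; dsimp only; nlinarith [min_le_left (Γ e i) (δ i)]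
      have hηeδ : ∀ i, ηe i ≤ δ i / 16 := fun i => by
        rw [hηedef]; dsimp only; nlinarith [min_le_right (Γ e i) (δ i)]
      set z2 := Function.update (Function.update (Function.update t b
          (fun i => t b i + δ i / 8)) a (fun i => t a i + δ i / 2)) e
          (fun i => t e i + ηe i) with hz2def
      have hz2e : ∀ i, z2 e i = t e i + ηe i := fun i => by
        rw [hz2def, Function.update_self]
      have hz2a : ∀ i, z2 a i = t a i + δ i / 2 := fun i => by
        rw [hz2def, Function.update_of_ne (Ne.symm hea), Function.update_self]
      have hz2b : ∀ i, z2 b i = t b i + δ i / 8 := fun i => by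
        rw [hz2def, Function.update_of_ne (Ne.symm heb), Function.update_of_ne hba,
          Function.update_self]
      have hz2o : ∀ c', c' ≠ a → c' ≠ b → c' ≠ e → ∀ i, z2 c' i = t c' i := by
        intro c' h1 h2 h3 i
        rw [hz2def, Function.update_of_ne h3, Function.update_of_ne h1,
          Function.update_of_ne h2]
      have hz2mem : z2 ∈ IntervalDom n A α β := by
        intro c' i
        by_cases h3 : c' = e
        · rw [h3, hz2e]
          refine bump_mem (ht e i).1 (hΓlt e i) (le_of_lt (hηepos i)) ?_
          have := hηeΓ i; have := hΓpos e i; linarith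
        · by_cases h1 : c' = a
          · subst h1; rw [hz2a]
            refine bump_mem (ht c' i).1 (hΓlt c' i) (by linarith [hδpos i]) ?_
            have := hδΓa i; have := hΓpos c' i; linarith
          · by_cases h2 : c' = b
            · subst h2; rw [hz2b]
              refine bump_mem (ht c' i).1 (hβb i) (by linarith [hδpos i]) ?_
              have := hδε i; have := hε0 i; linarith
            · rw [hz2o c' h1 h2 h3]; exact ht c' i
      have hfz2 : f z2 = e := by
        refine choice_keep hcard hp heC hzmem hz2mem ?_
        intro c' hc' i
        rw [hz2e, hzc e hea heb]
        by_cases h1 : c' = a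
        · subst h1; rw [hz2a i, hza i]
          have := hηepos i; have := hδpos i; linarith
        · by_cases h2 : c' = b
          · subst h2; rw [hz2b i, hzb i]
            have := hηepos i; have := hδε i; have := hε0 i; linarith
          · rw [hz2o c' h1 h2 hc', hzc c' h1 h2 i]
            have := hηepos i; linarith
      have hez2 : e ∈ ChoiceSetOn (IntervalDom n A α β) f z2 := winner_mem hp hz2mem hfz2
      set z3 := Function.update (Function.update (Function.update t b
          (fun i => t b i + δ i / 16)) a (fun i => t a i + δ i / 4)) e
          (fun i => t e i + 2 * ηe i) with hz3def
      have hz3e : ∀ i, z3 e i = t e i + 2 * ηe i := fun i => by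
        rw [hz3def, Function.update_self]
      have hz3a : ∀ i, z3 a i = t a i + δ i / 4 := fun i => by
        rw [hz3def, Function.update_of_ne (Ne.symm hea), Function.update_self]
      have hz3b : ∀ i, z3 b i = t b i + δ i / 16 := fun i => by
        rw [hz3def, Function.update_of_ne (Ne.symm heb), Function.update_of_ne hba,
          Function.update_self]
      have hz3o : ∀ c', c' ≠ a → c' ≠ b → c' ≠ e → ∀ i, z3 c' i = t c' i := by
        intro c' h1 h2 h3 i
        rw [hz3def, Function.update_of_ne h3, Function.update_of_ne h1,
          Function.update_of_ne h2]
      have hz3mem : z3 ∈ IntervalDom n A α β := by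
        intro c' i
        by_cases h3 : c' = e
        · rw [h3, hz3e]
          refine bump_mem (ht e i).1 (hΓlt e i) (by linarith [hηepos i]) ?_
          have := hηeΓ i; have := hΓpos e i; linarith
        · by_cases h1 : c' = a
          · subst h1; rw [hz3a]
            refine bump_mem (ht c' i).1 (hΓlt c' i) (by linarith [hδpos i]) ?_
            have := hδΓa i; have := hΓpos c' i; linarith
          · by_cases h2 : c' = b
            · subst h2; rw [hz3b]
              refine bump_mem (ht c' i).1 (hβb i) (by linarith [hδpos i]) ?_
              have := hδε i; have := hε0 i; linarith
            · rw [hz3o c' h1 h2 h3]; exact ht c' i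
      have hfz3 : f z3 = e := by
        refine choice_keep hcard hp hez2 hz2mem hz3mem ?_
        intro c' hc' i
        rw [hz3e, hz2e]
        by_cases h1 : c' = a
        · subst h1; rw [hz3a i, hz2a i]
          have := hηepos i; have := hδpos i; linarith
        · by_cases h2 : c' = b
          · subst h2; rw [hz3b i, hz2b i]
            have := hηepos i; have := hδpos i; linarith
          · rw [hz3o c' h1 h2 hc', hz2o c' h1 h2 hc' i]
            have := hηepos i; linarith
      have hfz3a : f z3 = a := by
        refine choice_keep hcard hp haC ht hz3mem ?_
        intro c' hc' i
        rw [hz3a]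
        by_cases h2 : c' = b
        · subst h2; rw [hz3b i]
          have := hδpos i; linarith
        · by_cases h3 : c' = e
          · rw [h3, hz3e i]
            have := hηeδ i; have := hδpos i; linarith
          · rw [hz3o c' hc' h2 h3 i]
            have := hδpos i; linarith
      exact hea (hfz3.symm.trans hfz3a)

end BinIndep3
/-- Binary Independence: if two profiles agree on the columns of
`a` and `b`, then (a) if `a,b ∈ C^f(t)` then `a ∈ C^f(s) ↔ b ∈ C^f(s)`, and
(b) if `a ∈ C^f(t)` but `b ∉ C^f(t)` then `b ∉ C^f(s)`. -/
theorem binary_independence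
    {n : ℕ} {A : Type*} [Fintype A] [DecidableEq A]
    (hn : 0 < n) (hA : 3 ≤ Fintype.card A)
    (α β : Fin n → EReal) (hαβ : ∀ i, α i < β i)
    (f : Profile n A → A)
    (hf : ImplementableOn (IntervalDom n A α β) f)
    (t s : Profile n A) (ht : t ∈ IntervalDom n A α β) (hs : s ∈ IntervalDom n A α β)
    (a b : A) (hab : a ≠ b) (hsa : s a = t a) (hsb : s b = t b) :
    ((a ∈ ChoiceSetOn (IntervalDom n A α β) f t ∧
        b ∈ ChoiceSetOn (IntervalDom n A α β) f t) →
      (a ∈ ChoiceSetOn (IntervalDom n A α β) f s ↔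
        b ∈ ChoiceSetOn (IntervalDom n A α β) f s)) ∧
    ((a ∈ ChoiceSetOn (IntervalDom n A α β) f t ∧
        b ∉ ChoiceSetOn (IntervalDom n A α β) f t) →
      b ∉ ChoiceSetOn (IntervalDom n A α β) f s) := by
  obtain ⟨p, hp⟩ := hf
  have hba : b ≠ a := hab.symm
  set u : Profile n A := fun c =>
    if c = a then t a else if c = b then t b else fun i => min (t c i) (s c i) with hudef
  have hua : u a = t a := by rw [hudef]; simp
  have hub : u b = t b := by
    rw [hudef]; dsimp only; rw [if_neg hba, if_pos rfl]
  have huc : ∀ c, c ≠ a → c ≠ b → ∀ i, u c i = min (t c i) (s c i) := by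
    intro c h1 h2 i
    rw [hudef]; dsimp only; rw [if_neg h1, if_neg h2]
  have humem : u ∈ IntervalDom n A α β := by
    intro c i
    by_cases h1 : c = a
    · subst h1; rw [hua]; exact ht c i
    · by_cases h2 : c = b
      · subst h2; rw [hub]; exact ht c i
      · rw [huc c h1 h2]
        constructor
        · exact lt_min_iff.mpr ⟨(ht c i).1, (hs c i).1⟩ |>.trans_le (le_refl _) |> (fun h => by
            exact_mod_cast (by exact_mod_cast h : α i < ((min (t c i) (s c i) : ℝ) : EReal)))
        · refine lt_of_le_of_lt ?_ (ht c i).2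
          exact_mod_cast min_le_left (t c i) (s c i)
  have hlow_tu : ∀ c, c ≠ a → c ≠ b → ∀ i, u c i ≤ t c i := by
    intro c h1 h2 i; rw [huc c h1 h2]; exact min_le_left _ _
  have hlow_su : ∀ c, c ≠ a → c ≠ b → ∀ i, u c i ≤ s c i := by
    intro c h1 h2 i; rw [huc c h1 h2]; exact min_le_right _ _
  have hMta : a ∈ ChoiceSetOn (IntervalDom n A α β) f t →
      a ∈ ChoiceSetOn (IntervalDom n A α β) f u := by
    intro h
    refine down_keep hA hp h ht humem hua ?_
    intro c hc i
    by_cases h2 : c = b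
    · subst h2; rw [hub]
    · exact hlow_tu c hc h2 i
  have hMtb : b ∈ ChoiceSetOn (IntervalDom n A α β) f t →
      b ∈ ChoiceSetOn (IntervalDom n A α β) f u := by
    intro h
    refine down_keep hA hp h ht humem hub ?_
    intro c hc i
    by_cases h1 : c = a
    · subst h1; rw [hua]
    · exact hlow_tu c h1 hc i
  have husa : u a = s a := by rw [hua, hsa]
  have husb : u b = s b := by rw [hub, hsb]
  have hMsb : b ∈ ChoiceSetOn (IntervalDom n A α β) f s →
      b ∈ ChoiceSetOn (IntervalDom n A α β) f u := by
    intro h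
    refine down_keep hA hp h hs humem husb ?_
    intro c hc i
    by_cases h1 : c = a
    · subst h1; rw [husa]
    · exact hlow_su c h1 hc i
  constructor
  · rintro ⟨hat, hbt⟩
    have hau := hMta hat
    have hbu := hMtb hbt
    constructor
    · intro has
      by_contra hbs
      exact down_b hA hp hs humem hab husa husb hlow_su has hbs hbu
    · intro hbs
      by_contra has
      exact down_b hA hp hs humem hba husb husa
        (fun c h1 h2 i => hlow_su c h2 h1 i) hbs has hau
  · rintro ⟨hat, hbt⟩
    have hbu : b ∉ ChoiceSetOn (IntervalDom n A α β) f u :=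
      down_b hA hp ht humem hab hua hub hlow_tu hat hbt
    intro hbs
    exact hbu (hMsb hbs)
end

section
/- (Social Welfare Ordering) Suppose each T_i is an m-dimensional open interval domain and f is an implementable and neutral social choice function. Then the induced relation R^f on 𝔻 is a well-defined ordering: (i) for all x, y ∈ 𝔻 exactly one of x P^f y, x I^f y, y P^f x holds; (ii) x I^f x for all x ∈ 𝔻 (reflexivity); (iii) R^f is complete; and (iv) both P^f and I^f (hence R^f) are transitive. -/
open Function

namespace SWO



lemma ereal_hi {x : ℝ} {b : EReal} (h : (x : EReal) < b) :
    ∃ r : ℝ, x < r ∧ (r : EReal) < b := by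
  obtain ⟨m, h1, h2⟩ := exists_between h
  have hmt : m ≠ ⊤ := (h2.trans_le le_top).ne
  have hmb : m ≠ ⊥ := by
    intro hm
    rw [hm] at h1
    exact (not_lt_bot h1)
  refine ⟨m.toReal, ?_, ?_⟩
  · have : (x : EReal) < (m.toReal : EReal) := by rwa [EReal.coe_toReal hmt hmb]
    exact_mod_cast this
  · rwa [EReal.coe_toReal hmt hmb]

lemma ereal_lo {x : ℝ} {b : EReal} (h : b < (x : EReal)) :
    ∃ r : ℝ, (b : EReal) < (r : EReal) ∧ r < x := by
  obtain ⟨m, h1, h2⟩ := exists_between h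
  have hmt : m ≠ ⊤ := (h2.trans_le le_top).ne
  have hmb : m ≠ ⊥ := by
    intro hm; rw [hm] at h1; exact (not_lt_bot h1)
  refine ⟨m.toReal, ?_, ?_⟩
  · rwa [EReal.coe_toReal hmt hmb]
  · have : (m.toReal : EReal) < (x : EReal) := by rwa [EReal.coe_toReal hmt hmb]
    exact_mod_cast this

variable {n : ℕ} {A : Type*} [Fintype A] [DecidableEq A]

lemma mono_step {α β : Fin n → EReal} {f : Profile n A → A} {p : Profile n A → Fin n → ℝ}
    (hp : ImplementsOn (IntervalDom n A α β) f p)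
    {S Q : Profile n A} {e : A}
    (hS : S ∈ IntervalDom n A α β) (hQ : Q ∈ IntervalDom n A α β)
    (hfS : f S = e)
    (h : ∀ g, g ≠ e → ∀ i, Q g i - S g i < Q e i - S e i) :
    f Q = e := by
  set R : ℕ → Profile n A := fun k g i => if (i : ℕ) < k then Q g i else S g i with hR
  have hRmem : ∀ k, R k ∈ IntervalDom n A α β := by
    intro k a i
    by_cases hik : (i : ℕ) < k
    · simpa [hR, hik] using hQ a i
    · simpa [hR, hik] using hS a i
  have hRn : ∀ k, n ≤ k → R k = Q := by
    intro k hk; funext g i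
    simp [hR, lt_of_lt_of_le i.isLt hk]
  have key : ∀ k, f (R k) = e := by
    intro k
    induction k with
    | zero =>
      have h0 : R 0 = S := by funext g i; simp [hR]
      rw [h0]; exact hfS
    | succ k ih =>
      by_cases hk : k < n
      · set i0 : Fin n := ⟨k, hk⟩ with hi0
        have hdev : ∀ j : Fin n, j ≠ i0 → ∀ a : A, R (k+1) a j = R k a j := by
          intro j hj a
          have hjk : (j : ℕ) ≠ k := by
            intro hjk; exact hj (Fin.ext hjk)
          by_cases hlt : (j : ℕ) < k
          · simp [hR, hlt, Nat.lt_succ_of_lt hlt]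
          · have h2 : ¬ (j : ℕ) < k + 1 := by omega
            simp [hR, hlt, h2]
        have hdev' : ∀ j : Fin n, j ≠ i0 → ∀ a : A, R k a j = R (k+1) a j :=
          fun j hj a => (hdev j hj a).symm
        have h1 := hp (R k) (hRmem k) (R (k+1)) (hRmem (k+1)) i0 hdev
        have h2 := hp (R (k+1)) (hRmem (k+1)) (R k) (hRmem k) i0 hdev'
        rw [ih] at h1 h2
        by_contra hne
        have hRk : ∀ g, R k g i0 = S g i0 := by
          intro g; simp [hR, hi0]
        have hRk1 : ∀ g, R (k+1) g i0 = Q g i0 := by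
          intro g; simp [hR, hi0]
        have hstrict := h (f (R (k+1))) hne i0
        rw [hRk, hRk] at h1
        rw [hRk1, hRk1] at h2
        linarith
      · have ha : R k = Q := hRn k (le_of_not_gt hk)
        have hb : R (k+1) = Q := hRn (k+1) (by omega)
        rw [hb, ← ha]; exact ih
  have hfin := key n
  rwa [hRn n le_rfl] at hfin

lemma fmem_choice {α β : Fin n → EReal} {f : Profile n A → A} {p : Profile n A → Fin n → ℝ}
    (hp : ImplementsOn (IntervalDom n A α β) f p)
    {t : Profile n A} (ht : t ∈ IntervalDom n A α β) :
    f t ∈ ChoiceSetOn (IntervalDom n A α β) f t := by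
  intro ε hε hDom
  refine mono_step hp ht hDom rfl ?_
  intro g hg i
  rw [Function.update_of_ne hg, Function.update_self]
  have := hε i
  simp only [Pi.add_apply]
  linarith

lemma clash {α β : Fin n → EReal} {f : Profile n A → A} {p : Profile n A → Fin n → ℝ}
    (hp : ImplementsOn (IntervalDom n A α β) f p)
    {P1 P2 : Profile n A} {e1 e2 : A} (h12 : e1 ≠ e2)
    (hP1 : P1 ∈ IntervalDom n A α β) (hP2 : P2 ∈ IntervalDom n A α β)
    (hC1 : e1 ∈ ChoiceSetOn (IntervalDom n A α β) f P1)
    (hC2 : e2 ∈ ChoiceSetOn (IntervalDom n A α β) f P2)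
    (heq : P1 e1 = P2 e1)
    (hlt : ∀ i, P2 e2 i < P1 e2 i) : False := by
  have hne : Nonempty A := ⟨e1⟩
  have hrex : ∀ i, ∃ r : ℝ, P1 e1 i < r ∧ (r : EReal) < β i := fun i => ereal_hi (hP1 e1 i).2
  choose r hr1 hr2 using hrex
  set M : Fin n → ℝ := fun i => Finset.univ.inf' Finset.univ_nonempty
      (fun g => min (P1 g i) (P2 g i)) with hM
  have hM1 : ∀ g i, M i ≤ P1 g i := fun g i =>
    le_trans (Finset.inf'_le _ (Finset.mem_univ g)) (min_le_left _ _)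
  have hM2 : ∀ g i, M i ≤ P2 g i := fun g i =>
    le_trans (Finset.inf'_le _ (Finset.mem_univ g)) (min_le_right _ _)
  have hlex : ∀ i, ∃ l : ℝ, α i < (l : EReal) ∧ l < M i := by
    intro i
    obtain ⟨g0, -, hg0⟩ := Finset.exists_mem_eq_inf' (Finset.univ_nonempty (α := A))
      (fun g => min (P1 g i) (P2 g i))
    have hα : α i < ((M i : ℝ) : EReal) := by
      rw [hM]
      simp only
      rw [hg0]
      rcases min_cases (P1 g0 i) (P2 g0 i) with ⟨hmin, -⟩ | ⟨hmin, -⟩ <;> rw [hmin]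
      · exact (hP1 g0 i).1
      · exact (hP2 g0 i).1
    obtain ⟨l, hl1, hl2⟩ := ereal_lo hα
    exact ⟨l, hl1, hl2⟩
  choose l hl1 hl2 using hlex
  set τ : Fin n → ℝ := fun i =>
    min (min ((r i - P1 e1 i)/2) ((M i - l i)/5)) ((P1 e2 i - P2 e2 i)/8) with hτ
  have hτpos : ∀ i, 0 < τ i := by
    intro i
    have g1 : 0 < (r i - P1 e1 i)/2 := by linarith [hr1 i]
    have g2 : 0 < (M i - l i)/5 := by linarith [hl2 i]
    have g3 : 0 < (P1 e2 i - P2 e2 i)/8 := by linarith [hlt i]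
    simp only [hτ, lt_min_iff]
    exact ⟨⟨g1, g2⟩, g3⟩
  have hτ1 : ∀ i, 2 * τ i ≤ r i - P1 e1 i := by
    intro i
    have : τ i ≤ (r i - P1 e1 i)/2 := le_trans (min_le_left _ _) (min_le_left _ _)
    linarith
  have hτ2 : ∀ i, 5 * τ i ≤ M i - l i := by
    intro i
    have : τ i ≤ (M i - l i)/5 := le_trans (min_le_left _ _) (min_le_right _ _)
    linarith
  have hτ3 : ∀ i, 8 * τ i ≤ P1 e2 i - P2 e2 i := by
    intro i
    have : τ i ≤ (P1 e2 i - P2 e2 i)/8 := min_le_right _ _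
    linarith
  set Q : Profile n A := fun g i =>
    if g = e1 then P1 e1 i - τ i else if g = e2 then P2 e2 i + τ i else M i - 5 * τ i with hQ
  have hQe1 : ∀ i, Q e1 i = P1 e1 i - τ i := by intro i; simp [hQ]
  have hQe2 : ∀ i, Q e2 i = P2 e2 i + τ i := by intro i; simp [hQ, h12.symm]
  have hQg : ∀ g, g ≠ e1 → g ≠ e2 → ∀ i, Q g i = M i - 5 * τ i := by
    intro g hg1 hg2 i; simp [hQ, hg1, hg2]
  have hQmem : Q ∈ IntervalDom n A α β := by
    intro g i
    have hlow : l i ≤ Q g i := by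
      by_cases hg1 : g = e1
      · rw [hg1, hQe1 i]
        have h1 := hM1 e1 i; have h2 := hτ2 i; have h3 := hτpos i; linarith
      · by_cases hg2 : g = e2
        · rw [hg2, hQe2 i]
          have h1 := hM2 e2 i; have h2 := hτ2 i; have h3 := hτpos i; linarith
        · rw [hQg g hg1 hg2 i]
          have h2 := hτ2 i; linarith
    have hhigh : Q g i ≤ P1 g i := by
      by_cases hg1 : g = e1
      · rw [hg1, hQe1 i]; have h3 := hτpos i; linarith
      · by_cases hg2 : g = e2
        · rw [hg2, hQe2 i]
          have h1 := hτ3 i; have h3 := hτpos i; linarith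
        · rw [hQg g hg1 hg2 i]
          have h1 := hM1 g i; have h3 := hτpos i; linarith
    exact ⟨lt_of_lt_of_le (hl1 i) (EReal.coe_le_coe_iff.mpr hlow),
      lt_of_le_of_lt (EReal.coe_le_coe_iff.mpr hhigh) (hP1 g i).2⟩
  -- chain 1 : f Q = e1
  have hS1mem : Function.update P1 e1 (P1 e1 + fun i => 2 * τ i) ∈ IntervalDom n A α β := by
    intro g i
    by_cases hg : g = e1
    · rw [hg, Function.update_self]
      simp only [Pi.add_apply]
      constructor
      · refine lt_of_lt_of_le (hP1 e1 i).1 (EReal.coe_le_coe_iff.mpr ?_)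
        have h3 := hτpos i; linarith
      · refine lt_of_le_of_lt (EReal.coe_le_coe_iff.mpr ?_) (hr2 i)
        have h1 := hτ1 i; linarith
    · rw [Function.update_of_ne hg]; exact hP1 g i
  have hfS1 : f (Function.update P1 e1 (P1 e1 + fun i => 2 * τ i)) = e1 :=
    hC1 (fun i => 2 * τ i) (fun i => by show (0:ℝ) < 2 * τ i; have := hτpos i; linarith) hS1mem
  have hchain1 : f Q = e1 := by
    refine mono_step hp hS1mem hQmem hfS1 ?_
    intro g hg i
    rw [Function.update_of_ne hg, Function.update_self]
    simp only [Pi.add_apply]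
    rw [hQe1 i]
    by_cases hg2 : g = e2
    · rw [hg2, hQe2 i]
      have h1 := hτ3 i; have h3 := hτpos i; linarith
    · rw [hQg g hg hg2 i]
      have h1 := hM1 g i; have h3 := hτpos i; linarith
  -- chain 2 : f Q = e2
  have hS2mem : Function.update P2 e2 (P2 e2 + fun i => τ i / 2) ∈ IntervalDom n A α β := by
    intro g i
    by_cases hg : g = e2
    · rw [hg, Function.update_self]
      simp only [Pi.add_apply]
      constructor
      · refine lt_of_lt_of_le (hP2 e2 i).1 (EReal.coe_le_coe_iff.mpr ?_)
        have h3 := hτpos i; linarith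
      · refine lt_of_le_of_lt (EReal.coe_le_coe_iff.mpr ?_) (hP1 e2 i).2
        have h1 := hτ3 i; have h3 := hτpos i; linarith
    · rw [Function.update_of_ne hg]; exact hP2 g i
  have hfS2 : f (Function.update P2 e2 (P2 e2 + fun i => τ i / 2)) = e2 :=
    hC2 (fun i => τ i / 2) (fun i => by show (0:ℝ) < τ i / 2; have := hτpos i; linarith) hS2mem
  have hchain2 : f Q = e2 := by
    refine mono_step hp hS2mem hQmem hfS2 ?_
    intro g hg i
    rw [Function.update_of_ne hg, Function.update_self]
    simp only [Pi.add_apply]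
    rw [hQe2 i]
    by_cases hg1 : g = e1
    · rw [hg1, hQe1 i]
      have hpe : P2 e1 i = P1 e1 i := by rw [heq]
      rw [hpe]
      have h3 := hτpos i; linarith
    · rw [hQg g hg1 hg i]
      have h1 := hM2 g i; have h3 := hτpos i; linarith
  exact h12 (hchain1 ▸ hchain2 ▸ rfl)

lemma ML {α β : Fin n → EReal} {f : Profile n A → A} {p : Profile n A → Fin n → ℝ}
    (hp : ImplementsOn (IntervalDom n A α β) f p)
    {t s : Profile n A} {a b : A} (hab : a ≠ b)
    (ht : t ∈ IntervalDom n A α β) (hs : s ∈ IntervalDom n A α β)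
    (hxa : t a = s a) (hyb : t b = s b)
    (haC : a ∈ ChoiceSetOn (IntervalDom n A α β) f t)
    (hbC : b ∉ ChoiceSetOn (IntervalDom n A α β) f t)
    (hbS : b ∈ ChoiceSetOn (IntervalDom n A α β) f s) : False := by
  have hbC' : ¬ ∀ ε : Fin n → ℝ, (∀ i, 0 < ε i) →
      Function.update t b (t b + ε) ∈ IntervalDom n A α β →
      f (Function.update t b (t b + ε)) = b := hbC
  push_neg at hbC'
  obtain ⟨δ0, hδpos, hT0, hfT0⟩ := hbC'
  set T0 := Function.update t b (t b + δ0) with hT0def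
  set c := f T0 with hc
  have hcC : c ∈ ChoiceSetOn (IntervalDom n A α β) f T0 := by
    rw [hc]; exact fmem_choice hp hT0
  have hcb : c ≠ b := hfT0
  have hT0b : ∀ i, T0 b i = t b i + δ0 i := by
    intro i; rw [hT0def, Function.update_self]; rfl
  by_cases hca : c = a
  · -- clash: a ∈ C T0 vs b ∈ C s
    refine clash hp hab hT0 hs (hca ▸ hcC) hbS ?_ ?_
    · rw [hT0def, Function.update_of_ne hab, hxa]
    · intro i
      rw [← hyb, hT0b i]
      exact lt_add_of_pos_right _ (hδpos i)
  · -- third alternative c won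
    set V := Function.update t b (t b + fun i => δ0 i / 2) with hV
    have hVb : ∀ i, V b i = t b i + δ0 i / 2 := by
      intro i; rw [hV, Function.update_self]; rfl
    have hVmem : V ∈ IntervalDom n A α β := by
      intro g i
      by_cases hg : g = b
      · rw [hg, hVb i]
        constructor
        · refine lt_of_lt_of_le (ht b i).1 (EReal.coe_le_coe_iff.mpr ?_)
          have := hδpos i; linarith
        · refine lt_of_le_of_lt (EReal.coe_le_coe_iff.mpr ?_) ((hT0 b i).2.trans_eq rfl)
          · have h2 : T0 b i = t b i + δ0 i := hT0b i
            rw [h2]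
            have := hδpos i; linarith
      · rw [hV, Function.update_of_ne hg]; exact ht g i
    by_cases haV : a ∈ ChoiceSetOn (IntervalDom n A α β) f V
    · -- clash: a ∈ C V vs b ∈ C s
      refine clash hp hab hVmem hs haV hbS ?_ ?_
      · rw [hV, Function.update_of_ne hab, hxa]
      · intro i
        rw [← hyb, hVb i]
        have := hδpos i; linarith
    · have haV' : ¬ ∀ ε : Fin n → ℝ, (∀ i, 0 < ε i) →
          Function.update V a (V a + ε) ∈ IntervalDom n A α β →
          f (Function.update V a (V a + ε)) = a := haV
      push_neg at haV'
      obtain ⟨ε1, hεpos, hPm, hfP⟩ := haV'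
      set P := Function.update V a (V a + ε1) with hP
      set e1 := f P with he1
      have he1C : e1 ∈ ChoiceSetOn (IntervalDom n A α β) f P := by
        rw [he1]; exact fmem_choice hp hPm
      have he1a : e1 ≠ a := hfP
      have hVa : V a = t a := by rw [hV, Function.update_of_ne hab]
      have hPa : ∀ i, P a i = t a i + ε1 i := by
        intro i; rw [hP, Function.update_self, hVa]; rfl
      have hPcol : ∀ g, g ≠ a → g ≠ b → P g = t g := by
        intro g hga hgb
        rw [hP, Function.update_of_ne hga, hV, Function.update_of_ne hgb]
      have hPb : ∀ i, P b i = t b i + δ0 i / 2 := by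
        intro i
        rw [hP, Function.update_of_ne (Ne.symm hab), hVb i]
      by_cases h1b : e1 = b
      · -- clash: c ∈ C T0 vs b ∈ C P
        refine clash hp hcb hT0 hPm hcC (h1b ▸ he1C) ?_ ?_
        · rw [hT0def, Function.update_of_ne hcb, hPcol c hca hcb]
        · intro i
          rw [hPb i, hT0b i]
          have := hδpos i; linarith
      · by_cases h1c : e1 = c
        · -- clash: c ∈ C P vs a ∈ C t
          refine clash hp hca hPm ht (h1c ▸ he1C) haC ?_ ?_
          · exact hPcol c hca hcb
          · intro i
            rw [hPa i]
            exact lt_add_of_pos_right _ (hεpos i)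
        · -- clash: e1 ∈ C P vs a ∈ C t
          refine clash hp he1a hPm ht he1C haC ?_ ?_
          · exact hPcol e1 he1a h1b
          · intro i
            rw [hPa i]
            exact lt_add_of_pos_right _ (hεpos i)

lemma perm_dom {α β : Fin n → EReal} {t : Profile n A} (ht : t ∈ IntervalDom n A α β)
    (σ : A → A) : (fun g => t (σ g)) ∈ IntervalDom n A α β :=
  fun g i => ht (σ g) i

lemma relabel {α β : Fin n → EReal} {f : Profile n A → A}
    (hneu : NeutralOn (IntervalDom n A α β) f)
    {t : Profile n A} (ht : t ∈ IntervalDom n A α β) (ρ : Equiv.Perm A) {e : A}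
    (he : e ∈ ChoiceSetOn (IntervalDom n A α β) f t) :
    ρ e ∈ ChoiceSetOn (IntervalDom n A α β) f (fun g => t (ρ.symm g)) := by
  rw [hneu t ht ρ]
  exact ⟨e, he, rfl⟩

lemma relabel_rev {α β : Fin n → EReal} {f : Profile n A → A}
    (hneu : NeutralOn (IntervalDom n A α β) f)
    {t : Profile n A} (ht : t ∈ IntervalDom n A α β) (ρ : Equiv.Perm A) {e : A}
    (he : ρ e ∈ ChoiceSetOn (IntervalDom n A α β) f (fun g => t (ρ.symm g))) :
    e ∈ ChoiceSetOn (IntervalDom n A α β) f t := by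
  rw [hneu t ht ρ] at he
  obtain ⟨w, hw, hwe⟩ := he
  rwa [← ρ.injective hwe]

lemma exists_perm_pair {a b a' b' : A} (hab : a ≠ b) (hab' : a' ≠ b') :
    ∃ ρ : Equiv.Perm A, ρ a' = a ∧ ρ b' = b := by
  refine ⟨(Equiv.swap a a').trans (Equiv.swap b (Equiv.swap a a' b')), ?_, ?_⟩
  · have hb'' : Equiv.swap a a' b' ≠ a := by
      intro h
      have : Equiv.swap a a' b' = Equiv.swap a a' a' := by
        rw [h, Equiv.swap_apply_right]
      exact hab' ((Equiv.swap a a').injective this).symm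
    rw [Equiv.trans_apply, Equiv.swap_apply_right]
    exact Equiv.swap_apply_of_ne_of_ne hab (Ne.symm hb'')
  · rw [Equiv.trans_apply, Equiv.swap_apply_right]

lemma clones {α β : Fin n → EReal} {f : Profile n A → A}
    (hneu : NeutralOn (IntervalDom n A α β) f)
    {t : Profile n A} (ht : t ∈ IntervalDom n A α β) {g h : A}
    (heqcol : t g = t h) (hg : g ∈ ChoiceSetOn (IntervalDom n A α β) f t) :
    h ∈ ChoiceSetOn (IntervalDom n A α β) f t := by
  have hperm : (fun e => t ((Equiv.swap g h).symm e)) = t := by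
    funext e
    rw [Equiv.symm_swap]
    rcases eq_or_ne e g with rfl | heg
    · rw [Equiv.swap_apply_left]; exact heqcol.symm
    · rcases eq_or_ne e h with rfl | heh
      · rw [Equiv.swap_apply_right]; exact heqcol
      · rw [Equiv.swap_apply_of_ne_of_ne heg heh]
  have hmem := relabel hneu ht (Equiv.swap g h) hg
  rw [hperm, Equiv.swap_apply_left] at hmem
  exact hmem

lemma MLP {α β : Fin n → EReal} {f : Profile n A → A} {p : Profile n A → Fin n → ℝ}
    (hp : ImplementsOn (IntervalDom n A α β) f p)
    (hneu : NeutralOn (IntervalDom n A α β) f)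
    {x y : Fin n → ℝ} (hPxy : PRel (IntervalDom n A α β) f x y) :
    ∀ u ∈ IntervalDom n A α β, ∀ g h : A, g ≠ h → u g = x → u h = y →
      h ∉ ChoiceSetOn (IntervalDom n A α β) f u := by
  obtain ⟨t, ht, a, b, hab, hax, hby, haC, hbC⟩ := hPxy
  intro u hu g h hgh hug huh hhC
  obtain ⟨ρ, hρ1, hρ2⟩ := exists_perm_pair hab hgh
  set u' : Profile n A := fun e => u (ρ.symm e) with hu'def
  have hu' : u' ∈ IntervalDom n A α β := perm_dom hu _
  have hbu' : b ∈ ChoiceSetOn (IntervalDom n A α β) f u' := by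
    have hm := relabel hneu hu ρ hhC
    rwa [hρ2] at hm
  have hsymg : ρ.symm a = g := by rw [← hρ1, Equiv.symm_apply_apply]
  have hsymh : ρ.symm b = h := by rw [← hρ2, Equiv.symm_apply_apply]
  refine ML hp hab ht hu' ?_ ?_ haC hbC hbu'
  · rw [hax, hu'def]; simp only; rw [hsymg, hug]
  · rw [hby, hu'def]; simp only; rw [hsymh, huh]

lemma MLI {α β : Fin n → EReal} {f : Profile n A → A} {p : Profile n A → Fin n → ℝ}
    (hp : ImplementsOn (IntervalDom n A α β) f p)
    (hneu : NeutralOn (IntervalDom n A α β) f)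
    {x y : Fin n → ℝ} (hIxy : IRel (IntervalDom n A α β) f x y) :
    ∀ u ∈ IntervalDom n A α β, ∀ g h : A, g ≠ h → u g = x → u h = y →
      (g ∈ ChoiceSetOn (IntervalDom n A α β) f u ↔
        h ∈ ChoiceSetOn (IntervalDom n A α β) f u) := by
  obtain ⟨s, hs, a, b, hab, hax, hby, haC, hbC⟩ := hIxy
  intro u hu g h hgh hug huh
  obtain ⟨ρ, hρ1, hρ2⟩ := exists_perm_pair hab hgh
  set u' : Profile n A := fun e => u (ρ.symm e) with hu'def
  have hu' : u' ∈ IntervalDom n A α β := perm_dom hu _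
  have hsymg : ρ.symm a = g := by rw [← hρ1, Equiv.symm_apply_apply]
  have hsymh : ρ.symm b = h := by rw [← hρ2, Equiv.symm_apply_apply]
  have hu'a : u' a = x := by rw [hu'def]; simp only; rw [hsymg, hug]
  have hu'b : u' b = y := by rw [hu'def]; simp only; rw [hsymh, huh]
  constructor
  · intro hgC
    by_contra hhC
    have hau' : a ∈ ChoiceSetOn (IntervalDom n A α β) f u' := by
      have hm := relabel hneu hu ρ hgC
      rwa [hρ1] at hm
    have hbu' : b ∉ ChoiceSetOn (IntervalDom n A α β) f u' := by
      intro hm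
      exact hhC (relabel_rev hneu hu ρ (hρ2.symm ▸ hm))
    exact ML hp hab hu' hs (hu'a.trans hax.symm) (hu'b.trans hby.symm) hau' hbu' hbC
  · intro hhC
    by_contra hgC
    have hbu' : b ∈ ChoiceSetOn (IntervalDom n A α β) f u' := by
      have hm := relabel hneu hu ρ hhC
      rwa [hρ2] at hm
    have hau' : a ∉ ChoiceSetOn (IntervalDom n A α β) f u' := by
      intro hm
      exact hgC (relabel_rev hneu hu ρ (hρ1.symm ▸ hm))
    exact ML hp (Ne.symm hab) hu' hs (hu'b.trans hby.symm) (hu'a.trans hax.symm) hbu' hau' haC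

end SWO

open SWO in
/-- Social Welfare Ordering: the relation `R^f` induced on `𝔻` by an
implementable and neutral `f` is a well-defined ordering: (i) trichotomy (exactly one
of `x P^f y`, `x I^f y`, `y P^f x`), (ii) reflexivity of `I^f`, (iii) completeness of
`R^f`, and (iv) transitivity of `P^f`, `I^f` and `R^f`. -/
theorem induced_social_welfare_ordering
    {n : ℕ} {A : Type*} [Fintype A] [DecidableEq A]
    (hn : 0 < n) (hA : 3 ≤ Fintype.card A)
    (α β : Fin n → EReal) (hαβ : ∀ i, α i < β i)
    (f : Profile n A → A)
    (hf : ImplementableOn (IntervalDom n A α β) f)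
    (hneu : NeutralOn (IntervalDom n A α β) f) :
    (∀ x ∈ DSet α β, ∀ y ∈ DSet α β,
      (PRel (IntervalDom n A α β) f x y ∨ IRel (IntervalDom n A α β) f x y ∨
        PRel (IntervalDom n A α β) f y x) ∧
      ¬ (PRel (IntervalDom n A α β) f x y ∧ IRel (IntervalDom n A α β) f x y) ∧
      ¬ (PRel (IntervalDom n A α β) f x y ∧ PRel (IntervalDom n A α β) f y x) ∧
      ¬ (IRel (IntervalDom n A α β) f x y ∧ PRel (IntervalDom n A α β) f y x)) ∧
    (∀ x ∈ DSet α β, IRel (IntervalDom n A α β) f x x) ∧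
    (∀ x ∈ DSet α β, ∀ y ∈ DSet α β,
      RRel (IntervalDom n A α β) f x y ∨ RRel (IntervalDom n A α β) f y x) ∧
    (∀ x ∈ DSet α β, ∀ y ∈ DSet α β, ∀ z ∈ DSet α β,
      (PRel (IntervalDom n A α β) f x y → PRel (IntervalDom n A α β) f y z →
        PRel (IntervalDom n A α β) f x z) ∧
      (IRel (IntervalDom n A α β) f x y → IRel (IntervalDom n A α β) f y z →
        IRel (IntervalDom n A α β) f x z) ∧
      (RRel (IntervalDom n A α β) f x y → RRel (IntervalDom n A α β) f y z →
        RRel (IntervalDom n A α β) f x z)) := by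
  obtain ⟨p, hp⟩ := hf
  -- three distinct alternatives
  obtain ⟨a, b, hab⟩ := Fintype.exists_pair_of_one_lt_card (α := A) (by omega)
  have hcex : ∃ c : A, c ≠ a ∧ c ≠ b := by
    by_contra hcon
    push_neg at hcon
    have hsub : (Finset.univ : Finset A) ⊆ {a, b} := by
      intro e _
      rcases eq_or_ne e a with rfl | hea
      · simp
      · have := hcon e hea
        simp [this]
    have hcard := Finset.card_le_card hsub
    have h2 : ({a, b} : Finset A).card ≤ 2 := Finset.card_le_two
    rw [Finset.card_univ] at hcard
    omega
  obtain ⟨c, hca, hcb⟩ := hcex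
  -- membership of two/three-column profiles in the domain
  have hdom2 : ∀ x ∈ DSet α β, ∀ y ∈ DSet α β,
      (fun e => if e = b then y else x) ∈ IntervalDom n A α β := by
    intro x hx y hy e i
    dsimp only
    by_cases he : e = b
    · rw [if_pos he]; exact hy i
    · rw [if_neg he]; exact hx i
  -- trichotomy (positive part)
  have tricho : ∀ x ∈ DSet α β, ∀ y ∈ DSet α β,
      PRel (IntervalDom n A α β) f x y ∨ IRel (IntervalDom n A α β) f x y ∨
        PRel (IntervalDom n A α β) f y x := by
    intro x hx y hy
    set T : Profile n A := fun e => if e = b then y else x with hT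
    have hTmem : T ∈ IntervalDom n A α β := hdom2 x hx y hy
    have hTa : T a = x := by simp [hT, hab]
    have hTb : T b = y := by simp [hT]
    have hfT := fmem_choice hp hTmem
    by_cases hbT : b ∈ ChoiceSetOn (IntervalDom n A α β) f T
    · by_cases haT : a ∈ ChoiceSetOn (IntervalDom n A α β) f T
      · exact Or.inr (Or.inl ⟨T, hTmem, a, b, hab, hTa, hTb, haT, hbT⟩)
      · exact Or.inr (Or.inr ⟨T, hTmem, b, a, Ne.symm hab, hTb, hTa, hbT, haT⟩)
    · have hfTb : f T ≠ b := fun hh => hbT (hh ▸ hfT)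
      have hcolT : T (f T) = T a := by simp only [hT] at hfTb ⊢; simp [hfTb, hab]
      have haT : a ∈ ChoiceSetOn (IntervalDom n A α β) f T :=
        clones hneu hTmem hcolT hfT
      exact Or.inl ⟨T, hTmem, a, b, hab, hTa, hTb, haT, hbT⟩
  -- reflexivity
  have refl : ∀ x ∈ DSet α β, IRel (IntervalDom n A α β) f x x := by
    intro x hx
    set T : Profile n A := fun e => if e = b then x else x with hT
    have hTmem : T ∈ IntervalDom n A α β := hdom2 x hx x hx
    have hTconst : ∀ e e' : A, T e = T e' := by
      intro e e'
      by_cases h1 : e = b <;> by_cases h2 : e' = b <;> simp [hT, h1, h2]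
    have hfT := fmem_choice hp hTmem
    have haT : a ∈ ChoiceSetOn (IntervalDom n A α β) f T :=
      clones hneu hTmem (hTconst (f T) a) hfT
    have hbT : b ∈ ChoiceSetOn (IntervalDom n A α β) f T :=
      clones hneu hTmem (hTconst (f T) b) hfT
    exact ⟨T, hTmem, a, b, hab, by simp [hT, hab], by simp [hT], haT, hbT⟩
  -- exclusivity
  have excl1 : ∀ x y : Fin n → ℝ, PRel (IntervalDom n A α β) f x y →
      IRel (IntervalDom n A α β) f x y → False := by
    intro x y hP hI
    obtain ⟨t, ht, a', b', hab', hax, hby, haC, hbC⟩ := hP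
    exact hbC ((MLI hp hneu hI t ht a' b' hab' hax hby).mp haC)
  have excl2 : ∀ x y : Fin n → ℝ, PRel (IntervalDom n A α β) f x y →
      PRel (IntervalDom n A α β) f y x → False := by
    intro x y hP hP'
    obtain ⟨t, ht, a', b', hab', hax, hby, haC, hbC⟩ := hP
    exact (MLP hp hneu hP' t ht b' a' (Ne.symm hab') hby hax) haC
  have excl3 : ∀ x y : Fin n → ℝ, IRel (IntervalDom n A α β) f x y →
      PRel (IntervalDom n A α β) f y x → False := by
    intro x y hI hP'
    obtain ⟨s, hs, a', b', hab', hax, hby, haC, hbC⟩ := hI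
    exact (MLP hp hneu hP' s hs b' a' (Ne.symm hab') hby hax) haC
  -- the three-column profile for transitivity
  have hdom3 : ∀ x ∈ DSet α β, ∀ y ∈ DSet α β, ∀ z ∈ DSet α β,
      (fun e => if e = a then x else if e = b then y else z) ∈ IntervalDom n A α β := by
    intro x hx y hy z hz e i
    dsimp only
    by_cases hea : e = a
    · rw [if_pos hea]; exact hx i
    · rw [if_neg hea]
      by_cases heb : e = b
      · rw [if_pos heb]; exact hy i
      · rw [if_neg heb]; exact hz i
  have ptrans : ∀ x ∈ DSet α β, ∀ y ∈ DSet α β, ∀ z ∈ DSet α β,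
      PRel (IntervalDom n A α β) f x y → PRel (IntervalDom n A α β) f y z →
      PRel (IntervalDom n A α β) f x z := by
    intro x hx y hy z hz hPxy hPyz
    set U : Profile n A := fun e => if e = a then x else if e = b then y else z with hU
    have hUmem := hdom3 x hx y hy z hz
    have hUa : U a = x := by simp [hU]
    have hUb : U b = y := by simp [hU, Ne.symm hab]
    have hUo : ∀ e, e ≠ a → e ≠ b → U e = z := by intro e h1 h2; simp [hU, h1, h2]
    have hbU : b ∉ ChoiceSetOn (IntervalDom n A α β) f U :=
      MLP hp hneu hPxy U hUmem a b hab hUa hUb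
    have hoU : ∀ e, e ≠ a → e ≠ b → e ∉ ChoiceSetOn (IntervalDom n A α β) f U :=
      fun e h1 h2 => MLP hp hneu hPyz U hUmem b e (Ne.symm h2) hUb (hUo e h1 h2)
    have hfU := fmem_choice hp hUmem
    have hfa : f U = a := by
      by_contra hne
      by_cases hfb : f U = b
      · exact hbU (hfb ▸ hfU)
      · exact hoU _ hne hfb hfU
    exact ⟨U, hUmem, a, c, Ne.symm hca, hUa, hUo c hca hcb, hfa ▸ hfU, hoU c hca hcb⟩
  have itrans : ∀ x ∈ DSet α β, ∀ y ∈ DSet α β, ∀ z ∈ DSet α β,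
      IRel (IntervalDom n A α β) f x y → IRel (IntervalDom n A α β) f y z →
      IRel (IntervalDom n A α β) f x z := by
    intro x hx y hy z hz hIxy hIyz
    set U : Profile n A := fun e => if e = a then x else if e = b then y else z with hU
    have hUmem := hdom3 x hx y hy z hz
    have hUa : U a = x := by simp [hU]
    have hUb : U b = y := by simp [hU, Ne.symm hab]
    have hUo : ∀ e, e ≠ a → e ≠ b → U e = z := by intro e h1 h2; simp [hU, h1, h2]
    have hIab := MLI hp hneu hIxy U hUmem a b hab hUa hUb
    have hIbe : ∀ e, e ≠ a → e ≠ b →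
        (b ∈ ChoiceSetOn (IntervalDom n A α β) f U ↔
          e ∈ ChoiceSetOn (IntervalDom n A α β) f U) :=
      fun e h1 h2 => MLI hp hneu hIyz U hUmem b e (Ne.symm h2) hUb (hUo e h1 h2)
    have hfU := fmem_choice hp hUmem
    have hbU : b ∈ ChoiceSetOn (IntervalDom n A α β) f U := by
      rcases eq_or_ne (f U) b with hfb | hfb
      · exact hfb ▸ hfU
      · rcases eq_or_ne (f U) a with hfa | hfa
        · exact hIab.mp (hfa ▸ hfU)
        · exact (hIbe (f U) hfa hfb).mpr hfU
    exact ⟨U, hUmem, a, c, Ne.symm hca, hUa, hUo c hca hcb, hIab.mpr hbU,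
      (hIbe c hca hcb).mp hbU⟩
  have mixed1 : ∀ x ∈ DSet α β, ∀ y ∈ DSet α β, ∀ z ∈ DSet α β,
      PRel (IntervalDom n A α β) f x y → IRel (IntervalDom n A α β) f y z →
      PRel (IntervalDom n A α β) f x z := by
    intro x hx y hy z hz hPxy hIyz
    set U : Profile n A := fun e => if e = a then x else if e = b then y else z with hU
    have hUmem := hdom3 x hx y hy z hz
    have hUa : U a = x := by simp [hU]
    have hUb : U b = y := by simp [hU, Ne.symm hab]
    have hUo : ∀ e, e ≠ a → e ≠ b → U e = z := by intro e h1 h2; simp [hU, h1, h2]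
    have hbU : b ∉ ChoiceSetOn (IntervalDom n A α β) f U :=
      MLP hp hneu hPxy U hUmem a b hab hUa hUb
    have hoU : ∀ e, e ≠ a → e ≠ b → e ∉ ChoiceSetOn (IntervalDom n A α β) f U := by
      intro e h1 h2 heC
      exact hbU ((MLI hp hneu hIyz U hUmem b e (Ne.symm h2) hUb (hUo e h1 h2)).mpr heC)
    have hfU := fmem_choice hp hUmem
    have hfa : f U = a := by
      by_contra hne
      by_cases hfb : f U = b
      · exact hbU (hfb ▸ hfU)
      · exact hoU _ hne hfb hfU
    exact ⟨U, hUmem, a, c, Ne.symm hca, hUa, hUo c hca hcb, hfa ▸ hfU, hoU c hca hcb⟩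
  have mixed2 : ∀ x ∈ DSet α β, ∀ y ∈ DSet α β, ∀ z ∈ DSet α β,
      IRel (IntervalDom n A α β) f x y → PRel (IntervalDom n A α β) f y z →
      PRel (IntervalDom n A α β) f x z := by
    intro x hx y hy z hz hIxy hPyz
    set U : Profile n A := fun e => if e = a then x else if e = b then y else z with hU
    have hUmem := hdom3 x hx y hy z hz
    have hUa : U a = x := by simp [hU]
    have hUb : U b = y := by simp [hU, Ne.symm hab]
    have hUo : ∀ e, e ≠ a → e ≠ b → U e = z := by intro e h1 h2; simp [hU, h1, h2]
    have hoU : ∀ e, e ≠ a → e ≠ b → e ∉ ChoiceSetOn (IntervalDom n A α β) f U :=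
      fun e h1 h2 => MLP hp hneu hPyz U hUmem b e (Ne.symm h2) hUb (hUo e h1 h2)
    have hIab := MLI hp hneu hIxy U hUmem a b hab hUa hUb
    have hfU := fmem_choice hp hUmem
    have haU : a ∈ ChoiceSetOn (IntervalDom n A α β) f U := by
      rcases eq_or_ne (f U) a with hfa | hfa
      · exact hfa ▸ hfU
      · rcases eq_or_ne (f U) b with hfb | hfb
        · exact hIab.mpr (hfb ▸ hfU)
        · exact absurd hfU (hoU _ hfa hfb)
    exact ⟨U, hUmem, a, c, Ne.symm hca, hUa, hUo c hca hcb, haU, hoU c hca hcb⟩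
  refine ⟨?_, refl, ?_, ?_⟩
  · intro x hx y hy
    exact ⟨tricho x hx y hy,
      fun ⟨h1, h2⟩ => excl1 x y h1 h2,
      fun ⟨h1, h2⟩ => excl2 x y h1 h2,
      fun ⟨h1, h2⟩ => excl3 x y h1 h2⟩
  · intro x hx y hy
    rcases tricho x hx y hy with h | h | h
    · exact Or.inl (Or.inl h)
    · exact Or.inl (Or.inr h)
    · exact Or.inr (Or.inl h)
  · intro x hx y hy z hz
    refine ⟨ptrans x hx y hy z hz, itrans x hx y hy z hz, ?_⟩
    rintro (h1 | h1) (h2 | h2)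
    · exact Or.inl (ptrans x hx y hy z hz h1 h2)
    · exact Or.inl (mixed1 x hx y hy z hz h1 h2)
    · exact Or.inl (mixed2 x hx y hy z hz h1 h2)
    · exact Or.inr (itrans x hx y hy z hz h1 h2)
end

section
/- (Axioms for the Social Welfare Ordering) Suppose each T_i is an m-dimensional open interval domain and f is an implementable and neutral social choice function. Then the induced social welfare ordering R^f on 𝔻 satisfies: weak Pareto (for all x, y ∈ 𝔻 with x ≫ y, x P^f y); invariance (for all x, y ∈ 𝔻 and z ∈ ℝⁿ with x+z, y+z ∈ 𝔻, x P^f y implies (x+z) P^f (y+z) and x I^f y implies (x+z) I^f (y+z)); and continuity (for every x ∈ 𝔻 the sets {y ∈ 𝔻 : y R^f x} and {y ∈ 𝔻 : x R^f y} are closed in 𝔻). -/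
open Function

namespace SWOAux
set_option linter.unusedSectionVars false

variable {n : ℕ} {A : Type*} [Fintype A] [DecidableEq A]
variable {α β : Fin n → EReal} {f : Profile n A → A} {p : Profile n A → Fin n → ℝ}

local notation "𝓓" => IntervalDom n A α β
local notation "𝓒" => ChoiceSetOn (IntervalDom n A α β) f

/-- bump the column `a` by `ε`. -/
def bump (t : Profile n A) (a : A) (ε : Fin n → ℝ) : Profile n A :=
  Function.update t a (t a + ε)

lemma bump_same (t : Profile n A) (a : A) (ε : Fin n → ℝ) : bump t a ε a = t a + ε := by
  simp [bump]

lemma bump_ne (t : Profile n A) {a b : A} (h : b ≠ a) (ε : Fin n → ℝ) :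
    bump t a ε b = t b := by
  simp [bump, Function.update_of_ne h]

lemma mem_choice_iff {t : Profile n A} {a : A} :
    a ∈ 𝓒 t ↔
      ∀ ε : Fin n → ℝ, (∀ i, 0 < ε i) → bump t a ε ∈ 𝓓 → f (bump t a ε) = a := Iff.rfl

lemma mem_dom_iff {t : Profile n A} : t ∈ 𝓓 ↔ ∀ a, t a ∈ DSet α β := Iff.rfl

lemma mem_D_iff {x : Fin n → ℝ} :
    x ∈ DSet α β ↔ ∀ i, α i < (x i : EReal) ∧ (x i : EReal) < β i := Iff.rfl

lemma D_between {x y z : Fin n → ℝ} (hx : x ∈ DSet α β) (hy : y ∈ DSet α β)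
    (h1 : ∀ i, x i ≤ z i) (h2 : ∀ i, z i ≤ y i) : z ∈ DSet α β := by
  intro i
  exact ⟨lt_of_lt_of_le (hx i).1 (EReal.coe_le_coe_iff.2 (h1 i)),
    lt_of_le_of_lt (EReal.coe_le_coe_iff.2 (h2 i)) (hy i).2⟩

lemma bump_dom {t : Profile n A} (ht : t ∈ 𝓓) {a : A} {ε : Fin n → ℝ}
    (hcol : t a + ε ∈ DSet α β) : bump t a ε ∈ 𝓓 := by
  rw [mem_dom_iff]; intro b
  by_cases hb : b = a
  · subst hb; rw [bump_same]; exact hcol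
  · rw [bump_ne t hb]; exact (mem_dom_iff.1 ht) b

lemma update_dom {t : Profile n A} (ht : t ∈ 𝓓) {c : A} {v : Fin n → ℝ}
    (hv : v ∈ DSet α β) : Function.update t c v ∈ 𝓓 := by
  rw [mem_dom_iff]; intro b
  by_cases hb : b = c
  · subst hb; rw [Function.update_self]; exact hv
  · rw [Function.update_of_ne hb]; exact (mem_dom_iff.1 ht) b

lemma exists_room {x : Fin n → ℝ} (hx : x ∈ DSet α β) :
    ∃ ρ : Fin n → ℝ, (∀ i, 0 < ρ i) ∧ x + ρ ∈ DSet α β := by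
  have h : ∀ i, ∃ r : ℝ, (x i : EReal) < r ∧ (r : EReal) < β i := fun i =>
    EReal.exists_between_coe_real (hx i).2
  choose r h1 h2 using h
  have hxr : ∀ i, x i < r i := fun i => EReal.coe_lt_coe_iff.1 (h1 i)
  refine ⟨fun i => r i - x i, fun i => by have := hxr i; simp only []; linarith, fun i => ?_⟩
  have hv : (x + fun j => r j - x j) i = r i := by simp
  rw [hv]
  exact ⟨lt_trans (hx i).1 (h1 i), h2 i⟩

lemma wmon (hp : ImplementsOn 𝓓 f p) {t s : Profile n A} (ht : t ∈ 𝓓) (hs : s ∈ 𝓓)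
    {i : Fin n} (hrow : ∀ j, j ≠ i → ∀ a, s a j = t a j) :
    s (f t) i - t (f t) i ≤ s (f s) i - t (f s) i := by
  have h1 := hp t ht s hs i hrow
  have h2 := hp s hs t ht i (fun j hj a => (hrow j hj a).symm)
  linarith

lemma pad_core (hp : ImplementsOn 𝓓 f p) {t s : Profile n A}
    (ht : t ∈ 𝓓) (hs : s ∈ 𝓓) {a : A} (hft : f t = a)
    (h : ∀ i : Fin n, (∀ b, s b i = t b i) ∨ (∀ b, b ≠ a → s b i - t b i < s a i - t a i)) :
    f s = a := by
  set r : ℕ → Profile n A := fun k b i => if (i : ℕ) < k then s b i else t b i with hr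
  have hrdom : ∀ k, r k ∈ 𝓓 := by
    intro k
    rw [mem_dom_iff]; intro b
    rw [mem_D_iff]; intro i
    by_cases hik : (i : ℕ) < k
    · simpa [hr, hik] using (mem_D_iff.1 ((mem_dom_iff.1 hs) b)) i
    · simpa [hr, hik] using (mem_D_iff.1 ((mem_dom_iff.1 ht) b)) i
  have hr0 : r 0 = t := by funext b i; simp [hr]
  have hrn : r n = s := by funext b i; simp [hr, i.isLt]
  have key : ∀ k, f (r k) = a := by
    intro k
    induction k with
    | zero => rw [hr0]; exact hft
    | succ k ih =>
      by_cases hk : k < n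
      · set i0 : Fin n := ⟨k, hk⟩ with hi0
        have hrow : ∀ j : Fin n, j ≠ i0 → ∀ b, r (k+1) b j = r k b j := by
          intro j hj b
          have hjk : (j : ℕ) ≠ k := fun hc => hj (Fin.ext hc)
          by_cases h1 : (j : ℕ) < k
          · simp [hr, h1, Nat.lt_succ_of_lt h1]
          · have h2 : ¬ (j : ℕ) < k + 1 := by omega
            simp [hr, h1, h2]
        have hv1 : ∀ b, r (k+1) b i0 = s b i0 := by
          intro b; simp [hr, hi0]
        have hv2 : ∀ b, r k b i0 = t b i0 := by
          intro b; simp [hr, hi0]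
        rcases h i0 with hcase | hcase
        · have heq : r (k+1) = r k := by
            funext b i
            by_cases h1 : (i : ℕ) < k
            · simp [hr, h1, Nat.lt_succ_of_lt h1]
            · by_cases h2 : (i : ℕ) < k + 1
              · have hik : (i : ℕ) = k := by omega
                have hii : i = i0 := Fin.ext hik
                subst hii
                simp [hr, h1, h2, hcase b]
              · simp [hr, h1, h2]
          rw [heq]; exact ih
        · by_contra hne
          have hfb := wmon hp (hrdom k) (hrdom (k+1)) hrow
          rw [ih] at hfb
          have hlt := hcase (f (r (k+1))) hne
          simp only [hv1, hv2] at hfb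
          linarith
      · have heq : r (k+1) = r k := by
          funext b i
          have h1 : (i : ℕ) < k := by have := i.isLt; omega
          simp [hr, h1, Nat.lt_succ_of_lt h1]
        rw [heq]; exact ih
  rw [← hrn]; exact key n

lemma raise_chosen (hp : ImplementsOn 𝓓 f p) {t : Profile n A} (ht : t ∈ 𝓓)
    {a : A} (hft : f t = a) {ε : Fin n → ℝ} (hε : ∀ i, 0 ≤ ε i)
    (hdom : bump t a ε ∈ 𝓓) : f (bump t a ε) = a := by
  apply pad_core hp ht hdom hft
  intro i
  rcases eq_or_lt_of_le (hε i) with h0 | h0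
  · left; intro b
    by_cases hb : b = a
    · subst hb; rw [bump_same]; simp [← h0]
    · rw [bump_ne t hb]
  · right; intro b hb
    rw [bump_ne t hb, bump_same]
    simp only [Pi.add_apply]
    linarith

lemma mem_choice_self (hp : ImplementsOn 𝓓 f p) {t : Profile n A} (ht : t ∈ 𝓓) :
    f t ∈ 𝓒 t := by
  rw [mem_choice_iff]
  intro ε hε hdom
  exact raise_chosen hp ht rfl (fun i => le_of_lt (hε i)) hdom

lemma lower_one (hp : ImplementsOn 𝓓 f p) {t : Profile n A} (ht : t ∈ 𝓓)
    {a c : A} (ha : a ∈ 𝓒 t) (hca : c ≠ a) {w : Fin n → ℝ}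
    (hw : w ∈ DSet α β) (hwle : ∀ i, w i ≤ t c i) :
    a ∈ 𝓒 (Function.update t c w) := by
  rw [mem_choice_iff]; intro ε hε hdom
  set t' := Function.update t c w with ht'def
  have hta : t' a = t a := Function.update_of_ne (Ne.symm hca) _ _
  have hcolA : t a + ε ∈ DSet α β := by
    have h := (mem_dom_iff.1 hdom) a
    rwa [bump_same, hta] at h
  have hhalf : t a + (fun i => ε i / 2) ∈ DSet α β := by
    refine D_between ((mem_dom_iff.1 ht) a) hcolA (fun i => ?_) (fun i => ?_) <;>
      · simp only [Pi.add_apply]; have := hε i; linarith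
  have hsdom : bump t a (fun i => ε i / 2) ∈ 𝓓 := bump_dom ht hhalf
  have hfs : f (bump t a (fun i => ε i / 2)) = a :=
    (mem_choice_iff.1 ha) _ (fun i => by have := hε i; positivity) hsdom
  apply pad_core hp hsdom hdom hfs
  intro i; right; intro b hb
  have e1 : bump t' a ε a i = t a i + ε i := by
    rw [bump_same, hta]; simp
  have e2 : bump t a (fun j => ε j / 2) a i = t a i + ε i / 2 := by
    rw [bump_same]; simp
  have hb1 : bump t' a ε b i = t' b i := by rw [bump_ne t' hb]
  have hb2 : bump t a (fun j => ε j / 2) b i = t b i := by rw [bump_ne t hb]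
  rw [e1, e2, hb1, hb2]
  by_cases hbc : b = c
  · subst hbc
    have hwv : t' b i = w i := by rw [ht'def, Function.update_self]
    rw [hwv]
    have := hwle i; have := hε i; linarith
  · have hwv : t' b i = t b i := by rw [ht'def, Function.update_of_ne hbc]
    rw [hwv]
    have := hε i; linarith

lemma fact4 (hp : ImplementsOn 𝓓 f p) {t : Profile n A} (ht : t ∈ 𝓓)
    {a : A} (ha : a ∈ 𝓒 t) {ε : Fin n → ℝ} (hε : ∀ i, 0 < ε i)
    (hu : bump t a ε ∈ 𝓓) {d : A} (hd : d ∈ 𝓒 (bump t a ε)) : d = a := by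
  by_contra hda
  obtain ⟨ρ, hρ, hρD⟩ := exists_room ((mem_dom_iff.1 ht) d)
  set δ' : Fin n → ℝ := fun i => min (ρ i) (ε i / 4) with hδ'def
  have hδ'pos : ∀ i, 0 < δ' i := fun i => lt_min (hρ i) (by have := hε i; linarith)
  have hδ'lt : ∀ i, δ' i < ε i / 2 := fun i =>
    lt_of_le_of_lt (min_le_right _ _) (by have := hε i; linarith)
  set u := bump t a ε with hudef
  have hud : u d = t d := bump_ne t hda ε
  have hcolD : t d + δ' ∈ DSet α β := by
    refine D_between ((mem_dom_iff.1 ht) d) hρD (fun i => ?_) (fun i => ?_)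
    · simp only [Pi.add_apply]; have := hδ'pos i; linarith
    · simp only [Pi.add_apply]
      have : δ' i ≤ ρ i := min_le_left _ _
      linarith
  have htgtD : bump u d δ' ∈ 𝓓 := by
    apply bump_dom hu
    rwa [hud]
  have hftgt : f (bump u d δ') = d := (mem_choice_iff.1 hd) δ' hδ'pos htgtD
  have hhalf : t a + (fun i => ε i / 2) ∈ DSet α β := by
    have hcolA : t a + ε ∈ DSet α β := by
      have h := (mem_dom_iff.1 hu) a
      rw [hudef] at h
      rwa [bump_same] at h
    refine D_between ((mem_dom_iff.1 ht) a) hcolA (fun i => ?_) (fun i => ?_) <;>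
      · simp only [Pi.add_apply]; have := hε i; linarith
  have hsdom : bump t a (fun i => ε i / 2) ∈ 𝓓 := bump_dom ht hhalf
  have hfs : f (bump t a (fun i => ε i / 2)) = a :=
    (mem_choice_iff.1 ha) _ (fun i => by have := hε i; positivity) hsdom
  have hfin : f (bump u d δ') = a := by
    apply pad_core hp hsdom htgtD hfs
    intro i; right; intro b hb
    have e1 : bump u d δ' a i = t a i + ε i := by
      rw [bump_ne u (Ne.symm hda), hudef, bump_same]; simp
    have e2 : bump t a (fun j => ε j / 2) a i = t a i + ε i / 2 := by
      rw [bump_same]; simp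
    have hb2 : bump t a (fun j => ε j / 2) b i = t b i := by rw [bump_ne t hb]
    rw [e1, e2, hb2]
    by_cases hbd : b = d
    · have : bump u d δ' b i = t b i + δ' i := by
        rw [hbd, bump_same, hud]; simp
      rw [this]
      have := hδ'lt i; linarith
    · have : bump u d δ' b i = t b i := by rw [bump_ne u hbd, hudef, bump_ne t hb]
      rw [this]
      have := hε i; linarith
  exact hda (hftgt.symm.trans hfin)

lemma Lstar (hp : ImplementsOn 𝓓 f p) (hneu : NeutralOn 𝓓 f) {t : Profile n A}
    (ht : t ∈ 𝓓) {a c : A} (hfc : f t = c) (hac : a ≠ c)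
    (hdom : ∀ i, t c i < t a i) : False := by
  have hc : c ∈ 𝓒 t := hfc ▸ mem_choice_self hp ht
  set ρ := Equiv.swap a c with hρdef
  set s' : Profile n A := fun b => t (ρ.symm b) with hs'
  have hs'dom : s' ∈ 𝓓 := by
    rw [mem_dom_iff]; intro b; exact (mem_dom_iff.1 ht) _
  have hCs' := hneu t ht ρ
  have ha' : a ∈ 𝓒 s' := by
    rw [hs', hCs']
    exact ⟨c, hc, Equiv.swap_apply_right a c⟩
  have hs'a : s' a = t c := by
    rw [hs']; simp [hρdef, Equiv.symm_swap, Equiv.swap_apply_left]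
  have hs'c : s' c = t a := by
    rw [hs']; simp [hρdef, Equiv.symm_swap, Equiv.swap_apply_right]
  have hs'o : ∀ b, b ≠ a → b ≠ c → s' b = t b := fun b h1 h2 => by
    rw [hs']; simp [hρdef, Equiv.symm_swap, Equiv.swap_apply_of_ne_of_ne h1 h2]
  set δ : Fin n → ℝ := fun i => (t a i - t c i) / 2 with hδdef
  have hδ : ∀ i, 0 < δ i := fun i => by
    have := hdom i; rw [hδdef]; simp only []; linarith
  have hmidD : t c + δ ∈ DSet α β := by
    refine D_between ((mem_dom_iff.1 ht) c) ((mem_dom_iff.1 ht) a)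
      (fun i => ?_) (fun i => ?_) <;>
    · simp only [Pi.add_apply, hδdef]; have := hdom i; linarith
  have hbdom : bump s' a δ ∈ 𝓓 := by
    apply bump_dom hs'dom; rwa [hs'a]
  have hfu : f (bump s' a δ) = a := (mem_choice_iff.1 ha') δ hδ hbdom
  have hkey : bump (bump s' a δ) a δ = Function.update s' a (t a) := by
    funext b
    by_cases hb : b = a
    · subst hb
      rw [bump_same, bump_same, hs'a, Function.update_self]
      funext i; simp only [Pi.add_apply, hδdef]; ring
    · rw [bump_ne _ hb, bump_ne _ hb, Function.update_of_ne hb]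
  have hupdom : Function.update s' a (t a) ∈ 𝓓 :=
    update_dom hs'dom ((mem_dom_iff.1 ht) a)
  have h2 : f (Function.update s' a (t a)) = a := by
    rw [← hkey]
    apply raise_chosen hp hbdom hfu (fun i => le_of_lt (hδ i))
    rw [hkey]; exact hupdom
  have hε3 : ∀ i, (0:ℝ) ≤ (fun i => t a i - t c i) i := fun i => by
    simp only []; have := hdom i; linarith
  have hkey2 : bump t c (fun i => t a i - t c i) = Function.update t c (t a) := by
    funext b
    by_cases hb : b = c
    · subst hb
      rw [bump_same, Function.update_self]
      funext i; simp only [Pi.add_apply]; ring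
    · rw [bump_ne t hb, Function.update_of_ne hb]
  have hupdom2 : Function.update t c (t a) ∈ 𝓓 := update_dom ht ((mem_dom_iff.1 ht) a)
  have h3 : f (Function.update t c (t a)) = c := by
    rw [← hkey2]
    apply raise_chosen hp ht hfc hε3
    rw [hkey2]; exact hupdom2
  have heq : Function.update s' a (t a) = Function.update t c (t a) := by
    funext b
    by_cases hb : b = a
    · subst hb; rw [Function.update_self, Function.update_of_ne hac]
    · by_cases hbc : b = c
      · subst hbc; rw [Function.update_of_ne hb, Function.update_self, hs'c]
      · rw [Function.update_of_ne hb, Function.update_of_ne hbc, hs'o b hb hbc]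
  rw [heq] at h2
  exact hac (h2.symm.trans h3)

lemma not_choice_mono (hp : ImplementsOn 𝓓 f p) {t : Profile n A} (ht : t ∈ 𝓓)
    {b : A} {εh ε : Fin n → ℝ} (hbig : bump t b εh ∈ 𝓓)
    (hne : f (bump t b εh) ≠ b) (hε : ∀ i, 0 < ε i) (hlt : ∀ i, ε i < εh i)
    (hd : bump t b ε ∈ 𝓓) : f (bump t b ε) ≠ b := by
  intro hcontra
  apply hne
  apply pad_core hp hd hbig hcontra
  intro i; right; intro c hc
  rw [bump_ne t hc εh, bump_ne t hc ε, bump_same, bump_same]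
  simp only [Pi.add_apply]
  have := hlt i; linarith

lemma R3_one (hp : ImplementsOn 𝓓 f p) (hneu : NeutralOn 𝓓 f) {t : Profile n A}
    (ht : t ∈ 𝓓) {a c : A} (ha : a ∈ 𝓒 t) (hca : c ≠ a) {v : Fin n → ℝ}
    (hv : v ∈ DSet α β) (hvx : ∀ i, v i < t a i) :
    a ∈ 𝓒 (Function.update t c v) := by
  rw [mem_choice_iff]; intro ε hε hdom
  set t' := Function.update t c v with ht'def
  have ht'a : t' a = t a := Function.update_of_ne (Ne.symm hca) _ _
  have ht'c : t' c = v := Function.update_self _ _ _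
  have ht'o : ∀ b, b ≠ c → t' b = t b := fun b hb => Function.update_of_ne hb _ _
  have ht'dom : t' ∈ 𝓓 := update_dom ht hv
  by_contra hne
  have hu : bump t' a ε ∈ 𝓓 := hdom
  set u := bump t' a ε with hudef
  have hua : u a = t a + ε := by rw [hudef, bump_same, ht'a]
  have huc : u c = v := by rw [hudef, bump_ne t' hca, ht'c]
  have huo : ∀ b, b ≠ a → b ≠ c → u b = t b := fun b h1 h2 => by
    rw [hudef, bump_ne t' h1, ht'o b h2]
  by_cases hdc : f u = c
  · refine Lstar hp hneu hu hdc (Ne.symm hca) (fun i => ?_)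
    rw [huc, hua]
    simp only [Pi.add_apply]
    have := hvx i; have := hε i; linarith
  · have hfuC : f u ∈ 𝓒 u := mem_choice_self hp hu
    set w : Fin n → ℝ := fun i => min (v i) (t c i) with hwdef
    have hwD : w ∈ DSet α β := by
      rw [mem_D_iff]; intro i
      rcases le_total (v i) (t c i) with h | h
      · have : w i = v i := by rw [hwdef]; simp [min_eq_left h]
        rw [this]; exact (mem_D_iff.1 hv) i
      · have : w i = t c i := by rw [hwdef]; simp [min_eq_right h]
        rw [this]; exact (mem_D_iff.1 ((mem_dom_iff.1 ht) c)) i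
    have h1 : f u ∈ 𝓒 (Function.update u c w) := by
      refine lower_one hp hu hfuC (fun h => hdc h.symm) hwD (fun i => ?_)
      rw [huc]; exact min_le_left _ _
    have h2 : a ∈ 𝓒 (Function.update t c w) :=
      lower_one hp ht ha hca hwD (fun i => min_le_right _ _)
    have htcw : Function.update t c w ∈ 𝓓 := update_dom ht hwD
    have hkey : Function.update u c w = bump (Function.update t c w) a ε := by
      funext b
      by_cases hb : b = c
      · subst hb
        rw [Function.update_self, bump_ne _ hca, Function.update_self]
      · rw [Function.update_of_ne hb]
        by_cases hb2 : b = a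
        · subst hb2
          rw [hua, bump_same, Function.update_of_ne (Ne.symm hca)]
        · rw [huo b hb2 hb, bump_ne _ hb2, Function.update_of_ne hb]
    have hudom2 : bump (Function.update t c w) a ε ∈ 𝓓 := by
      rw [← hkey]
      exact update_dom hu hwD
    have hd2 : f u ∈ 𝓒 (bump (Function.update t c w) a ε) := hkey ▸ h1
    exact hne (fact4 hp htcw h2 hε hudom2 hd2)

lemma R3_star (hp : ImplementsOn 𝓓 f p) (hneu : NeutralOn 𝓓 f) {a : A} (s : Finset A) :
    ∀ t t' : Profile n A, t ∈ 𝓓 → t' ∈ 𝓓 → a ∈ 𝓒 t → t' a = t a →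
      (∀ c, c ∉ s → t' c = t c) → (∀ c ∈ s, c ≠ a ∧ ∀ i, t' c i < t a i) →
      a ∈ 𝓒 t' := by
  induction s using Finset.induction_on with
  | empty =>
    intro t t' ht ht' ha _ hout _
    have : t' = t := funext fun c => hout c (Finset.notMem_empty c)
    rwa [this]
  | @insert c₀ s hc₀ ih =>
    intro t t' ht ht' ha haa hout hin
    have hc₀a : c₀ ≠ a := (hin c₀ (Finset.mem_insert_self _ _)).1
    set t'' := Function.update t' c₀ (t c₀) with ht''def
    have ht''dom : t'' ∈ 𝓓 := update_dom ht' ((mem_dom_iff.1 ht) c₀)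
    have ht''a : t'' a = t a := by
      rw [ht''def, Function.update_of_ne (Ne.symm hc₀a)]; exact haa
    have hmid : a ∈ 𝓒 t'' := by
      refine ih t t'' ht ht''dom ha ht''a (fun c hc => ?_) (fun c hc => ?_)
      · by_cases hb : c = c₀
        · subst hb; rw [ht''def, Function.update_self]
        · rw [ht''def, Function.update_of_ne hb]
          exact hout c (by simp [Finset.mem_insert, hb, hc])
      · have hcc₀ : c ≠ c₀ := fun h => hc₀ (h ▸ hc)
        refine ⟨(hin c (Finset.mem_insert_of_mem hc)).1, fun i => ?_⟩
        rw [ht''def, Function.update_of_ne hcc₀]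
        exact (hin c (Finset.mem_insert_of_mem hc)).2 i
    have hfin : a ∈ 𝓒 (Function.update t'' c₀ (t' c₀)) := by
      refine R3_one hp hneu ht''dom hmid hc₀a ((mem_dom_iff.1 ht') c₀) (fun i => ?_)
      rw [ht''a]
      exact (hin c₀ (Finset.mem_insert_self _ _)).2 i
    have : Function.update t'' c₀ (t' c₀) = t' := by
      funext b
      by_cases hb : b = c₀
      · subst hb; rw [Function.update_self]
      · rw [Function.update_of_ne hb, ht''def, Function.update_of_ne hb]
    rwa [this] at hfin

lemma lemmaM (hp : ImplementsOn 𝓓 f p) {t : Profile n A} (ht : t ∈ 𝓓)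
    {a b : A} (hab : a ≠ b) (ha : a ∈ 𝓒 t) {εh : Fin n → ℝ} (hεh : ∀ i, 0 < εh i)
    (hbd : bump t b εh ∈ 𝓓) (hnb : f (bump t b εh) ≠ b) :
    bump t b (fun i => εh i / 2) ∈ 𝓓 ∧ a ∈ 𝓒 (bump t b (fun i => εh i / 2)) := by
  set δ : Fin n → ℝ := fun i => εh i / 2 with hδdef
  have hδpos : ∀ i, 0 < δ i := fun i => by rw [hδdef]; simp only []; have := hεh i; linarith
  have hcolB : t b + εh ∈ DSet α β := by
    have h := (mem_dom_iff.1 hbd) b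
    rwa [bump_same] at h
  have hδcol : t b + δ ∈ DSet α β := by
    refine D_between ((mem_dom_iff.1 ht) b) hcolB (fun i => ?_) (fun i => ?_) <;>
    · simp only [Pi.add_apply, hδdef]; have := hεh i; linarith
  have hδdom : bump t b δ ∈ 𝓓 := bump_dom ht hδcol
  refine ⟨hδdom, ?_⟩
  rw [mem_choice_iff]; intro η hη hwdom
  set w := bump (bump t b δ) a η with hwdef
  have hba : (bump t b δ) a = t a := bump_ne t hab δ
  have hwa : w a = t a + η := by rw [hwdef, bump_same, hba]
  have hwb : w b = t b + δ := by rw [hwdef, bump_ne _ (Ne.symm hab), bump_same]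
  have hwo : ∀ c, c ≠ a → c ≠ b → w c = t c := fun c h1 h2 => by
    rw [hwdef, bump_ne _ h1, bump_ne t h2]
  by_cases hfb : f w = b
  · exfalso
    have hbC : b ∈ 𝓒 w := hfb ▸ mem_choice_self hp hwdom
    have heq : Function.update w a (t a) = bump t b δ := by
      funext c
      by_cases hc : c = a
      · subst hc; rw [Function.update_self, hba]
      · rw [Function.update_of_ne hc, hwdef, bump_ne _ hc]
    have hb2 : b ∈ 𝓒 (bump t b δ) := by
      rw [← heq]
      refine lower_one hp hwdom hbC hab ((mem_dom_iff.1 ht) a) (fun i => ?_)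
      rw [hwa]; simp only [Pi.add_apply]; have := hη i; linarith
    set γ : Fin n → ℝ := fun i => εh i / 8 with hγdef
    have hγpos : ∀ i, 0 < γ i := fun i => by
      rw [hγdef]; simp only []; have := hεh i; linarith
    have hcol58 : (bump t b δ) b + γ ∈ DSet α β := by
      rw [bump_same]
      refine D_between ((mem_dom_iff.1 ht) b) hcolB (fun i => ?_) (fun i => ?_) <;>
      · simp only [Pi.add_apply, hδdef, hγdef]; have := hεh i; linarith
    have hdom58 : bump (bump t b δ) b γ ∈ 𝓓 := bump_dom hδdom hcol58
    have hf58 : f (bump (bump t b δ) b γ) = b := (mem_choice_iff.1 hb2) γ hγpos hdom58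
    have hcomp : bump (bump t b δ) b γ = bump t b (fun i => δ i + γ i) := by
      funext c
      by_cases hc : c = b
      · subst hc
        rw [bump_same, bump_same, bump_same]
        funext i; simp only [Pi.add_apply]; ring
      · rw [bump_ne _ hc, bump_ne t hc, bump_ne t hc]
    rw [hcomp] at hf58 hdom58
    have := not_choice_mono hp ht hbd hnb
      (ε := fun i => δ i + γ i)
      (fun i => by simp only [hδdef, hγdef]; have := hεh i; linarith)
      (fun i => by simp only [hδdef, hγdef]; have := hεh i; linarith) hdom58
    exact this hf58
  · by_cases hfa : f w = a
    · exact hfa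
    · exfalso
      have heC : f w ∈ 𝓒 w := mem_choice_self hp hwdom
      have heq : Function.update w b (t b) = bump t a η := by
        funext c
        by_cases hc : c = b
        · subst hc; rw [Function.update_self, bump_ne t (Ne.symm hab)]
        · rw [Function.update_of_ne hc]
          by_cases hc2 : c = a
          · subst hc2; rw [hwa, bump_same]
          · rw [hwo c hc2 hc, bump_ne t hc2]
      have hdomA : bump t a η ∈ 𝓓 := by
        apply bump_dom ht
        have h := (mem_dom_iff.1 hwdom) a
        rwa [hwa] at h
      have h3 : f w ∈ 𝓒 (bump t a η) := by
        rw [← heq]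
        refine lower_one hp hwdom heC (fun h => hfb h.symm) ((mem_dom_iff.1 ht) b)
          (fun i => ?_)
        rw [hwb]; simp only [Pi.add_apply]; have := hδpos i; linarith
      exact hfa (fact4 hp ht ha hη hdomA h3)

lemma translationC (hp : ImplementsOn 𝓓 f p) {t : Profile n A} (ht : t ∈ 𝓓)
    {z : Fin n → ℝ} (htz : (fun c => t c + z) ∈ 𝓓) {a : A} (ha : a ∈ 𝓒 t) :
    a ∈ 𝓒 (fun c => t c + z) := by
  rw [mem_choice_iff]; intro ε hε hdom
  obtain ⟨ρ, hρ, hρD⟩ := exists_room ((mem_dom_iff.1 ht) a)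
  set δ : Fin n → ℝ := fun i => min (ρ i) (ε i / 2) with hδdef
  have hδpos : ∀ i, 0 < δ i := fun i => lt_min (hρ i) (by have := hε i; linarith)
  have hδlt : ∀ i, δ i < ε i := fun i =>
    lt_of_le_of_lt (min_le_right _ _) (by have := hε i; linarith)
  have hδcol : t a + δ ∈ DSet α β := by
    refine D_between ((mem_dom_iff.1 ht) a) hρD (fun i => ?_) (fun i => ?_)
    · simp only [Pi.add_apply]; have := hδpos i; linarith
    · simp only [Pi.add_apply]; have : δ i ≤ ρ i := min_le_left _ _; linarith
  have hsrcD : bump t a δ ∈ 𝓓 := bump_dom ht hδcol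
  have hfs : f (bump t a δ) = a := (mem_choice_iff.1 ha) δ hδpos hsrcD
  apply pad_core hp hsrcD hdom hfs
  intro i; right; intro b hb
  have e1 : bump (fun c => t c + z) a ε a i = t a i + z i + ε i := by
    rw [bump_same]; simp
  have e2 : bump t a δ a i = t a i + δ i := by rw [bump_same]; simp
  have e3 : bump (fun c => t c + z) a ε b i = t b i + z i := by
    rw [bump_ne _ hb]; simp
  have e4 : bump t a δ b i = t b i := by rw [bump_ne t hb]
  rw [e1, e2, e3, e4]
  have := hδlt i; linarith

end SWOAux

namespace SWOAux

variable {n : ℕ} {A : Type*} [Fintype A] [DecidableEq A]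
variable {α β : Fin n → EReal} {f : Profile n A → A} {p : Profile n A → Fin n → ℝ}

local notation "𝓓" => IntervalDom n A α β
local notation "𝓒" => ChoiceSetOn (IntervalDom n A α β) f

set_option linter.unusedSectionVars false

/-- canonical two-column profile -/
def Tpr (a₀ b₀ : A) (x y v : Fin n → ℝ) : Profile n A :=
  fun c => if c = a₀ then x else if c = b₀ then y else v

lemma Tpr_a {a₀ b₀ : A} (x y v : Fin n → ℝ) : Tpr a₀ b₀ x y v a₀ = x := by
  simp [Tpr]

lemma Tpr_b {a₀ b₀ : A} (h : a₀ ≠ b₀) (x y v : Fin n → ℝ) : Tpr a₀ b₀ x y v b₀ = y := by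
  simp [Tpr, Ne.symm h]

lemma Tpr_o {a₀ b₀ c : A} (h1 : c ≠ a₀) (h2 : c ≠ b₀) (x y v : Fin n → ℝ) :
    Tpr a₀ b₀ x y v c = v := by
  simp [Tpr, h1, h2]

lemma Tpr_dom {a₀ b₀ : A} {x y v : Fin n → ℝ} (hx : x ∈ DSet α β)
    (hy : y ∈ DSet α β) (hv : v ∈ DSet α β) : Tpr a₀ b₀ x y v ∈ 𝓓 := by
  rw [mem_dom_iff]; intro c
  by_cases h1 : c = a₀
  · subst h1; rw [Tpr_a]; exact hx
  · by_cases h2 : c = b₀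
    · subst h2; rw [Tpr, if_neg h1, if_pos rfl]; exact hy
    · rw [Tpr_o h1 h2]; exact hv

lemma exists_perm_pair {a b a₀ b₀ : A} (hab : a ≠ b) (h₀ : a₀ ≠ b₀) :
    ∃ ρ : Equiv.Perm A, ρ a = a₀ ∧ ρ b = b₀ := by
  have hb' : (Equiv.swap a a₀) b ≠ a₀ := fun h =>
    hab ((Equiv.swap a a₀).injective (h.trans (Equiv.swap_apply_left a a₀).symm)).symm
  refine ⟨(Equiv.swap a a₀).trans (Equiv.swap ((Equiv.swap a a₀) b) b₀), ?_, ?_⟩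
  · rw [Equiv.trans_apply, Equiv.swap_apply_left,
      Equiv.swap_apply_of_ne_of_ne (Ne.symm hb') h₀]
  · rw [Equiv.trans_apply, Equiv.swap_apply_left]

/-- transfer of witness patterns to the canonical low profile -/
lemma transfer (hp : ImplementsOn 𝓓 f p) (hneu : NeutralOn 𝓓 f)
    {t : Profile n A} (ht : t ∈ 𝓓) {a b : A} {x y v : Fin n → ℝ} (hab : a ≠ b)
    (hta : t a = x) (htb : t b = y) (hv : v ∈ DSet α β)
    (hvx : ∀ i, v i < x i) (hvy : ∀ i, v i < y i) :
    (a ∈ 𝓒 t → a ∈ 𝓒 (Tpr a b x y v)) ∧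
    (b ∈ 𝓒 t → b ∈ 𝓒 (Tpr a b x y v)) ∧
    (a ∈ 𝓒 t → b ∉ 𝓒 t → b ∉ 𝓒 (Tpr a b x y v)) := by
  have hx : x ∈ DSet α β := hta ▸ (mem_dom_iff.1 ht) a
  have hy : y ∈ DSet α β := htb ▸ (mem_dom_iff.1 ht) b
  set t₁ := Tpr a b x y v with ht₁def
  have ht₁dom : t₁ ∈ 𝓓 := Tpr_dom hx hy hv
  have ht₁a : t₁ a = t a := by rw [ht₁def, Tpr_a, hta]
  have ht₁b : t₁ b = t b := by rw [ht₁def, Tpr_b hab, htb]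
  have hmemsd : ∀ c : A, c ∈ Finset.univ \ ({a, b} : Finset A) → c ≠ a ∧ c ≠ b := by
    intro c hc
    simp only [Finset.mem_sdiff, Finset.mem_univ, Finset.mem_insert,
      Finset.mem_singleton, true_and] at hc
    exact ⟨fun h => hc (Or.inl h), fun h => hc (Or.inr h)⟩
  have hout : ∀ c : A, c ∉ Finset.univ \ ({a, b} : Finset A) → t₁ c = t c := by
    intro c hc
    simp only [Finset.mem_sdiff, Finset.mem_univ, Finset.mem_insert,
      Finset.mem_singleton, true_and, not_not] at hc
    rcases hc with h | h
    · subst h; exact ht₁a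
    · subst h; exact ht₁b
  have part1 : a ∈ 𝓒 t → a ∈ 𝓒 t₁ := by
    intro haC
    refine R3_star hp hneu (Finset.univ \ ({a, b} : Finset A)) t t₁ ht ht₁dom haC
      ht₁a hout (fun c hc => ?_)
    obtain ⟨h1, h2⟩ := hmemsd c hc
    refine ⟨h1, fun i => ?_⟩
    rw [ht₁def, Tpr_o h1 h2, hta]
    exact hvx i
  have part2 : b ∈ 𝓒 t → b ∈ 𝓒 t₁ := by
    intro hbC
    refine R3_star hp hneu (Finset.univ \ ({a, b} : Finset A)) t t₁ ht ht₁dom hbC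
      ht₁b hout (fun c hc => ?_)
    obtain ⟨h1, h2⟩ := hmemsd c hc
    refine ⟨h2, fun i => ?_⟩
    rw [ht₁def, Tpr_o h1 h2, htb]
    exact hvy i
  refine ⟨part1, part2, ?_⟩
  intro haC hbn hbC₁
  rw [mem_choice_iff] at hbn
  push_neg at hbn
  obtain ⟨εh, hεh, hεdom, hnb⟩ := hbn
  obtain ⟨hδdom, haM⟩ := lemmaM hp ht hab haC hεh hεdom hnb
  set δ : Fin n → ℝ := fun i => εh i / 2 with hδdef
  have hδpos : ∀ i, 0 < δ i := fun i => by
    rw [hδdef]; simp only []; have := hεh i; linarith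
  -- move the other columns of (bump t b δ) down to v
  have hba : (bump t b δ) a = t a := bump_ne t hab δ
  have hbb : (bump t b δ) b = t b + δ := bump_same t b δ
  have hb₁a : (bump t₁ b δ) a = t a := by rw [bump_ne t₁ hab δ, ht₁a]
  have hb₁b : (bump t₁ b δ) b = t b + δ := by rw [bump_same, ht₁b]
  have hbump₁dom : bump t₁ b δ ∈ 𝓓 := by
    apply bump_dom ht₁dom
    rw [ht₁b]
    have h := (mem_dom_iff.1 hδdom) b
    rwa [bump_same] at h
  have haMb : a ∈ 𝓒 (bump t₁ b δ) := by
    refine R3_star hp hneu (Finset.univ \ ({a, b} : Finset A)) (bump t b δ)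
      (bump t₁ b δ) hδdom hbump₁dom haM (by rw [hb₁a, hba]) (fun c hc => ?_)
      (fun c hc => ?_)
    · simp only [Finset.mem_sdiff, Finset.mem_univ, Finset.mem_insert,
        Finset.mem_singleton, true_and, not_not] at hc
      rcases hc with h | h
      · subst h; rw [hb₁a, hba]
      · subst h; rw [hb₁b, hbb]
    · obtain ⟨h1, h2⟩ := hmemsd c hc
      refine ⟨h1, fun i => ?_⟩
      rw [bump_ne t₁ h2 δ, ht₁def, Tpr_o h1 h2, hba, hta]
      exact hvx i
  exact hab (fact4 hp ht₁dom hbC₁ hδpos hbump₁dom haMb)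

lemma wit_to_T (hp : ImplementsOn 𝓓 f p) (hneu : NeutralOn 𝓓 f)
    {a₀ b₀ : A} (h₀ : a₀ ≠ b₀) {t : Profile n A} (ht : t ∈ 𝓓) {a b : A}
    {x y : Fin n → ℝ} (hab : a ≠ b) (hta : t a = x) (htb : t b = y)
    (haC : a ∈ 𝓒 t) {v : Fin n → ℝ} (hv : v ∈ DSet α β)
    (hvx : ∀ i, v i < x i) (hvy : ∀ i, v i < y i) :
    a₀ ∈ 𝓒 (Tpr a₀ b₀ x y v) := by
  have hx : x ∈ DSet α β := hta ▸ (mem_dom_iff.1 ht) a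
  have hy : y ∈ DSet α β := htb ▸ (mem_dom_iff.1 ht) b
  have ha₁ : a ∈ 𝓒 (Tpr a b x y v) :=
    (transfer hp hneu ht hab hta htb hv hvx hvy).1 haC
  obtain ⟨ρ, hρa, hρb⟩ := exists_perm_pair hab h₀
  have ht₁dom : Tpr a b x y v ∈ 𝓓 := Tpr_dom hx hy hv
  have hCperm := hneu (Tpr a b x y v) ht₁dom ρ
  have hprof : (fun c => Tpr a b x y v (ρ.symm c)) = Tpr a₀ b₀ x y v := by
    funext c
    by_cases hc : c = a₀
    · have h1 : ρ.symm a₀ = a := by rw [← hρa, Equiv.symm_apply_apply]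
      rw [hc, h1, Tpr_a, Tpr_a]
    · by_cases hc2 : c = b₀
      · have h1 : ρ.symm b₀ = b := by rw [← hρb, Equiv.symm_apply_apply]
        rw [hc2, h1, Tpr_b hab, Tpr_b h₀]
      · have h1 : ρ.symm c ≠ a := fun h => hc (by rw [← hρa, ← h, Equiv.apply_symm_apply])
        have h2 : ρ.symm c ≠ b := fun h => hc2 (by rw [← hρb, ← h, Equiv.apply_symm_apply])
        rw [Tpr_o h1 h2, Tpr_o hc hc2]
  rw [← hprof, hCperm]
  exact ⟨a, ha₁, hρa⟩

lemma rrel_to_T (hp : ImplementsOn 𝓓 f p) (hneu : NeutralOn 𝓓 f)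
    {a₀ b₀ : A} (h₀ : a₀ ≠ b₀) {x y : Fin n → ℝ}
    (hR : RRel 𝓓 f x y) {v : Fin n → ℝ} (hv : v ∈ DSet α β)
    (hvx : ∀ i, v i < x i) (hvy : ∀ i, v i < y i) :
    a₀ ∈ 𝓒 (Tpr a₀ b₀ x y v) := by
  rcases hR with ⟨t, ht, a, b, hab, hta, htb, haC, _⟩ | ⟨t, ht, a, b, hab, hta, htb, haC, _⟩ <;>
    exact wit_to_T hp hneu h₀ ht hab hta htb haC hv hvx hvy

lemma T_to_RRel {a₀ b₀ : A} (h₀ : a₀ ≠ b₀) {x y v : Fin n → ℝ}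
    (hx : x ∈ DSet α β) (hy : y ∈ DSet α β) (hv : v ∈ DSet α β)
    (h : a₀ ∈ 𝓒 (Tpr a₀ b₀ x y v)) : RRel 𝓓 f x y := by
  by_cases hb : b₀ ∈ 𝓒 (Tpr a₀ b₀ x y v)
  · exact Or.inr ⟨Tpr a₀ b₀ x y v, Tpr_dom hx hy hv, a₀, b₀, h₀, Tpr_a x y v,
      Tpr_b h₀ x y v, h, hb⟩
  · exact Or.inl ⟨Tpr a₀ b₀ x y v, Tpr_dom hx hy hv, a₀, b₀, h₀, Tpr_a x y v,
      Tpr_b h₀ x y v, h, hb⟩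

lemma exists_low {x y z : Fin n → ℝ} (hx : x ∈ DSet α β) (hy : y ∈ DSet α β)
    (hxz : x + z ∈ DSet α β) (hyz : y + z ∈ DSet α β) :
    ∃ v : Fin n → ℝ, v ∈ DSet α β ∧ v + z ∈ DSet α β ∧
      (∀ i, v i < x i) ∧ (∀ i, v i < y i) := by
  have h : ∀ i, ∃ r : ℝ, α i < (r : EReal) ∧ α i < ((r + z i : ℝ) : EReal) ∧
      r < x i ∧ r < y i := by
    intro i
    have hαm : α i < ((min (x i) (y i) : ℝ) : EReal) := by
      rcases min_cases (x i) (y i) with ⟨he, _⟩ | ⟨he, _⟩ <;> rw [he]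
      exacts [(hx i).1, (hy i).1]
    have hαmz : α i < ((min (x i) (y i) + z i : ℝ) : EReal) := by
      rcases min_cases (x i) (y i) with ⟨he, _⟩ | ⟨he, _⟩ <;> rw [he]
      · have := (hxz i).1; simpa using this
      · have := (hyz i).1; simpa using this
    obtain ⟨r1, hr1α, hr1m⟩ := EReal.exists_between_coe_real hαm
    obtain ⟨r2', hr2α, hr2m⟩ := EReal.exists_between_coe_real hαmz
    have hr1m' : r1 < min (x i) (y i) := EReal.coe_lt_coe_iff.1 hr1m
    have hr2m' : r2' < min (x i) (y i) + z i := EReal.coe_lt_coe_iff.1 hr2m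
    refine ⟨max r1 (r2' - z i), ?_, ?_, ?_, ?_⟩
    · exact lt_of_lt_of_le hr1α (EReal.coe_le_coe_iff.2 (le_max_left _ _))
    · refine lt_of_lt_of_le hr2α (EReal.coe_le_coe_iff.2 ?_)
      have : r2' - z i ≤ max r1 (r2' - z i) := le_max_right _ _
      linarith
    · have h1 : max r1 (r2' - z i) < min (x i) (y i) := max_lt hr1m' (by linarith)
      exact lt_of_lt_of_le h1 (min_le_left _ _)
    · have h1 : max r1 (r2' - z i) < min (x i) (y i) := max_lt hr1m' (by linarith)
      exact lt_of_lt_of_le h1 (min_le_right _ _)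
  choose r h1 h2 h3 h4 using h
  refine ⟨r, fun i => ⟨h1 i, ?_⟩, fun i => ⟨by simpa using h2 i, ?_⟩, h3, h4⟩
  · exact lt_trans (EReal.coe_lt_coe_iff.2 (h3 i)) (hx i).2
  · have hlt : (r + z) i < (x + z) i := by simp only [Pi.add_apply]; have := h3 i; linarith
    exact lt_trans (EReal.coe_lt_coe_iff.2 hlt) (hxz i).2

lemma exists_low0 {x y : Fin n → ℝ} (hx : x ∈ DSet α β) (hy : y ∈ DSet α β) :
    ∃ v : Fin n → ℝ, v ∈ DSet α β ∧ (∀ i, v i < x i) ∧ (∀ i, v i < y i) := by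
  obtain ⟨v, hv, _, h3, h4⟩ := exists_low (z := 0) hx hy (by simpa using hx)
    (by simpa using hy)
  exact ⟨v, hv, h3, h4⟩

end SWOAux

open SWOAux in
/-- Axioms for the Social Welfare Ordering: the relation `R^f` induced
on `𝔻` by an implementable and neutral `f` satisfies weak Pareto, invariance, and
continuity (closedness in `𝔻` of upper and lower contour sets). -/
theorem induced_ordering_axioms
    {n : ℕ} {A : Type*} [Fintype A] [DecidableEq A]
    (hn : 0 < n) (hA : 3 ≤ Fintype.card A)
    (α β : Fin n → EReal) (hαβ : ∀ i, α i < β i)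
    (f : Profile n A → A)
    (hf : ImplementableOn (IntervalDom n A α β) f)
    (hneu : NeutralOn (IntervalDom n A α β) f) :
    (∀ x ∈ DSet α β, ∀ y ∈ DSet α β, (∀ i, y i < x i) →
      PRel (IntervalDom n A α β) f x y) ∧
    (∀ x ∈ DSet α β, ∀ y ∈ DSet α β, ∀ z : Fin n → ℝ,
      x + z ∈ DSet α β → y + z ∈ DSet α β →
      (PRel (IntervalDom n A α β) f x y → PRel (IntervalDom n A α β) f (x + z) (y + z)) ∧
      (IRel (IntervalDom n A α β) f x y → IRel (IntervalDom n A α β) f (x + z) (y + z))) ∧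
    (∀ x ∈ DSet α β,
      IsClosed {y : ↥(DSet α β) | RRel (IntervalDom n A α β) f ↑y x} ∧
      IsClosed {y : ↥(DSet α β) | RRel (IntervalDom n A α β) f x ↑y}) := by

  classical
  obtain ⟨p, hp⟩ := hf
  obtain ⟨a₀, b₀, h₀⟩ : ∃ a b : A, a ≠ b := Fintype.one_lt_card_iff.mp (by omega)
  refine ⟨?_, ?_, ?_⟩
  · -- weak Pareto
    intro x hx y hy hxy
    set Q : Profile n A := fun c => if c = a₀ then x else y with hQdef
    have hQa : Q a₀ = x := by rw [hQdef]; simp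
    have hQdom : Q ∈ IntervalDom n A α β := by
      rw [mem_dom_iff]; intro c
      by_cases hc : c = a₀
      · rw [hQdef]; simp [hc]; exact hx
      · rw [hQdef]; simp [hc]; exact hy
    have key : ∀ c, c ≠ a₀ → c ∉ ChoiceSetOn (IntervalDom n A α β) f Q := by
      intro c hc hcC
      set δ : Fin n → ℝ := fun i => (x i - y i) / 2 with hδdef
      have hδpos : ∀ i, 0 < δ i := fun i => by
        rw [hδdef]; simp only []; have := hxy i; linarith
      have hQc : Q c = y := by rw [hQdef]; simp [hc]
      have hmid : y + δ ∈ DSet α β := by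
        refine D_between hy hx (fun i => ?_) (fun i => ?_) <;>
        · simp only [Pi.add_apply, hδdef]; have := hxy i; linarith
      have hbdom : bump Q c δ ∈ IntervalDom n A α β := by
        apply bump_dom hQdom; rwa [hQc]
      have hfc : f (bump Q c δ) = c := (mem_choice_iff.1 hcC) δ hδpos hbdom
      refine Lstar hp hneu hbdom hfc (Ne.symm hc) (fun i => ?_)
      have e1 : bump Q c δ c i = y i + δ i := by rw [bump_same, hQc]; simp
      have e2 : bump Q c δ a₀ i = x i := by
        rw [bump_ne Q (Ne.symm hc) δ, hQa]
      rw [e1, e2]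
      have := hxy i; rw [hδdef]; simp only []; linarith
    have hfQ : f Q = a₀ := by
      by_contra h
      exact key _ h (mem_choice_self hp hQdom)
    exact ⟨Q, hQdom, a₀, b₀, h₀, hQa, by rw [hQdef]; simp [Ne.symm h₀],
      hfQ ▸ mem_choice_self hp hQdom, key b₀ (Ne.symm h₀)⟩
  · -- invariance
    intro x hx y hy z hxz hyz
    obtain ⟨v, hvD, hvzD, hvx, hvy⟩ := exists_low hx hy hxz hyz
    have hvzx : ∀ i, (v + z) i < (x + z) i := fun i => by
      simp only [Pi.add_apply]; have := hvx i; linarith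
    have hvzy : ∀ i, (v + z) i < (y + z) i := fun i => by
      simp only [Pi.add_apply]; have := hvy i; linarith
    constructor
    · rintro ⟨t, ht, a, b, hab, hta, htb, haC, hbn⟩
      have htr := transfer hp hneu ht hab hta htb hvD hvx hvy
      have ha₁ := htr.1 haC
      have hb₁ := htr.2.2 haC hbn
      have ht₁dom : Tpr a b x y v ∈ IntervalDom n A α β := Tpr_dom hx hy hvD
      have hT2dom : Tpr a b (x+z) (y+z) (v+z) ∈ IntervalDom n A α β :=
        Tpr_dom hxz hyz hvzD
      have hfwd : (fun c => Tpr a b x y v c + z) = Tpr a b (x+z) (y+z) (v+z) := by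
        funext c
        by_cases h1 : c = a
        · rw [h1, Tpr_a, Tpr_a]
        · by_cases h2 : c = b
          · rw [h2, Tpr_b hab, Tpr_b hab]
          · rw [Tpr_o h1 h2, Tpr_o h1 h2]
      have hback : (fun c => Tpr a b (x+z) (y+z) (v+z) c + (-z)) = Tpr a b x y v := by
        funext c
        by_cases h1 : c = a
        · rw [h1, Tpr_a, Tpr_a]; exact add_neg_cancel_right x z
        · by_cases h2 : c = b
          · rw [h2, Tpr_b hab, Tpr_b hab]; exact add_neg_cancel_right y z
          · rw [Tpr_o h1 h2, Tpr_o h1 h2]; exact add_neg_cancel_right v z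
      have haz : a ∈ ChoiceSetOn (IntervalDom n A α β) f (Tpr a b (x+z) (y+z) (v+z)) := by
        have := translationC hp ht₁dom (z := z) (by rw [hfwd]; exact hT2dom) ha₁
        rwa [hfwd] at this
      have hbz : b ∉ ChoiceSetOn (IntervalDom n A α β) f (Tpr a b (x+z) (y+z) (v+z)) := by
        intro hbC
        apply hb₁
        have := translationC hp hT2dom (z := -z) (by rw [hback]; exact ht₁dom) hbC
        rwa [hback] at this
      exact ⟨Tpr a b (x+z) (y+z) (v+z), hT2dom, a, b, hab, Tpr_a _ _ _,
        Tpr_b hab _ _ _, haz, hbz⟩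
    · rintro ⟨t, ht, a, b, hab, hta, htb, haC, hbC⟩
      have htr := transfer hp hneu ht hab hta htb hvD hvx hvy
      have ha₁ := htr.1 haC
      have hb₁ := htr.2.1 hbC
      have ht₁dom : Tpr a b x y v ∈ IntervalDom n A α β := Tpr_dom hx hy hvD
      have hT2dom : Tpr a b (x+z) (y+z) (v+z) ∈ IntervalDom n A α β :=
        Tpr_dom hxz hyz hvzD
      have hfwd : (fun c => Tpr a b x y v c + z) = Tpr a b (x+z) (y+z) (v+z) := by
        funext c
        by_cases h1 : c = a
        · rw [h1, Tpr_a, Tpr_a]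
        · by_cases h2 : c = b
          · rw [h2, Tpr_b hab, Tpr_b hab]
          · rw [Tpr_o h1 h2, Tpr_o h1 h2]
      have haz : a ∈ ChoiceSetOn (IntervalDom n A α β) f (Tpr a b (x+z) (y+z) (v+z)) := by
        have := translationC hp ht₁dom (z := z) (by rw [hfwd]; exact hT2dom) ha₁
        rwa [hfwd] at this
      have hbz : b ∈ ChoiceSetOn (IntervalDom n A α β) f (Tpr a b (x+z) (y+z) (v+z)) := by
        have := translationC hp ht₁dom (z := z) (by rw [hfwd]; exact hT2dom) hb₁
        rwa [hfwd] at this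
      exact ⟨Tpr a b (x+z) (y+z) (v+z), hT2dom, a, b, hab, Tpr_a _ _ _,
        Tpr_b hab _ _ _, haz, hbz⟩
  · -- continuity
    intro x hx
    constructor
    · refine IsSeqClosed.isClosed ?_
      intro u ylim hmem hlim
      obtain ⟨v, hvD, hvy, hvx⟩ := exists_low0 ylim.2 hx
      refine T_to_RRel h₀ ylim.2 hx hvD ?_
      rw [mem_choice_iff]
      intro ε hε hdom
      have hconv : Filter.Tendsto (fun k => (u k : Fin n → ℝ)) Filter.atTop
          (nhds (ylim : Fin n → ℝ)) := (continuous_subtype_val.tendsto ylim).comp hlim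
      have hev : ∀ᶠ k in Filter.atTop, ∀ i,
          (u k : Fin n → ℝ) i ∈ Set.Ioo (max (v i) ((ylim : Fin n → ℝ) i - ε i / 2))
            ((ylim : Fin n → ℝ) i + ε i / 2) := by
        rw [Filter.eventually_all]
        intro i
        refine ((tendsto_pi_nhds.1 hconv) i).eventually ?_
        have h1 : max (v i) ((ylim : Fin n → ℝ) i - ε i / 2) < (ylim : Fin n → ℝ) i :=
          max_lt (hvy i) (by have := hε i; linarith)
        have h2 : (ylim : Fin n → ℝ) i < (ylim : Fin n → ℝ) i + ε i / 2 := by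
          have := hε i; linarith
        exact Ioo_mem_nhds h1 h2
      obtain ⟨k, hk⟩ := hev.exists
      have hvuk : ∀ i, v i < (u k : Fin n → ℝ) i := fun i =>
        lt_of_le_of_lt (le_max_left _ _) (hk i).1
      have hT := rrel_to_T hp hneu h₀ (hmem k) hvD hvuk hvx
      have hukD : (u k : Fin n → ℝ) ∈ DSet α β := (u k).2
      have hcolA : (ylim : Fin n → ℝ) + ε ∈ DSet α β := by
        have h := (mem_dom_iff.1 hdom) a₀
        rwa [bump_same, Tpr_a] at h
      have hsrccol : (u k : Fin n → ℝ) + (fun i => ε i / 2) ∈ DSet α β := by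
        rw [mem_D_iff]; intro i
        constructor
        · refine lt_trans (hukD i).1 (EReal.coe_lt_coe_iff.2 ?_)
          simp only [Pi.add_apply]; have := hε i; linarith
        · have hub : ((u k : Fin n → ℝ) + fun j => ε j / 2) i < ((ylim : Fin n → ℝ) + ε) i := by
            simp only [Pi.add_apply]
            have := (hk i).2; have := hε i; linarith
          exact lt_trans (EReal.coe_lt_coe_iff.2 hub) ((mem_D_iff.1 hcolA) i).2
      have hsrcdom : bump (Tpr a₀ b₀ ((u k : Fin n → ℝ)) x v) a₀ (fun i => ε i / 2) ∈
          IntervalDom n A α β := by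
        apply bump_dom (Tpr_dom hukD hx hvD)
        rw [Tpr_a]; exact hsrccol
      have hfsrc : f (bump (Tpr a₀ b₀ ((u k : Fin n → ℝ)) x v) a₀ (fun i => ε i / 2)) = a₀ :=
        (mem_choice_iff.1 hT) _ (fun i => by have := hε i; positivity) hsrcdom
      apply pad_core hp hsrcdom hdom hfsrc
      intro i; right; intro c hc
      have eT1 : bump (Tpr a₀ b₀ ((ylim : Fin n → ℝ)) x v) a₀ ε a₀ i
          = (ylim : Fin n → ℝ) i + ε i := by rw [bump_same, Tpr_a]; simp
      have eS1 : bump (Tpr a₀ b₀ ((u k : Fin n → ℝ)) x v) a₀ (fun j => ε j / 2) a₀ i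
          = (u k : Fin n → ℝ) i + ε i / 2 := by rw [bump_same, Tpr_a]; simp
      have eT2 : bump (Tpr a₀ b₀ ((ylim : Fin n → ℝ)) x v) a₀ ε c i
          = Tpr a₀ b₀ ((ylim : Fin n → ℝ)) x v c i := by rw [bump_ne _ hc]
      have eS2 : bump (Tpr a₀ b₀ ((u k : Fin n → ℝ)) x v) a₀ (fun j => ε j / 2) c i
          = Tpr a₀ b₀ ((u k : Fin n → ℝ)) x v c i := by rw [bump_ne _ hc]
      have hceq : Tpr a₀ b₀ ((ylim : Fin n → ℝ)) x v c i
          = Tpr a₀ b₀ ((u k : Fin n → ℝ)) x v c i := by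
        by_cases h1 : c = b₀
        · rw [h1, Tpr_b h₀, Tpr_b h₀]
        · rw [Tpr_o hc h1, Tpr_o hc h1]
      rw [eT1, eS1, eT2, eS2, hceq]
      have hlb := (hk i).2
      linarith
    · refine IsSeqClosed.isClosed ?_
      intro u ylim hmem hlim
      obtain ⟨v, hvD, hvy, hvx⟩ := exists_low0 ylim.2 hx
      refine T_to_RRel h₀ hx ylim.2 hvD ?_
      rw [mem_choice_iff]
      intro ε hε hdom
      have hconv : Filter.Tendsto (fun k => (u k : Fin n → ℝ)) Filter.atTop
          (nhds (ylim : Fin n → ℝ)) := (continuous_subtype_val.tendsto ylim).comp hlim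
      have hev : ∀ᶠ k in Filter.atTop, ∀ i,
          (u k : Fin n → ℝ) i ∈ Set.Ioo (max (v i) ((ylim : Fin n → ℝ) i - ε i / 2))
            ((ylim : Fin n → ℝ) i + ε i / 2) := by
        rw [Filter.eventually_all]
        intro i
        refine ((tendsto_pi_nhds.1 hconv) i).eventually ?_
        have h1 : max (v i) ((ylim : Fin n → ℝ) i - ε i / 2) < (ylim : Fin n → ℝ) i :=
          max_lt (hvy i) (by have := hε i; linarith)
        have h2 : (ylim : Fin n → ℝ) i < (ylim : Fin n → ℝ) i + ε i / 2 := by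
          have := hε i; linarith
        exact Ioo_mem_nhds h1 h2
      obtain ⟨k, hk⟩ := hev.exists
      have hvuk : ∀ i, v i < (u k : Fin n → ℝ) i := fun i =>
        lt_of_le_of_lt (le_max_left _ _) (hk i).1
      have hT := rrel_to_T hp hneu h₀ (hmem k) hvD hvx hvuk
      have hukD : (u k : Fin n → ℝ) ∈ DSet α β := (u k).2
      have hcolA : x + ε ∈ DSet α β := by
        have h := (mem_dom_iff.1 hdom) a₀
        rwa [bump_same, Tpr_a] at h
      have hsrccol : x + (fun i => ε i / 2) ∈ DSet α β := by
        refine D_between hx hcolA (fun i => ?_) (fun i => ?_) <;>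
        · simp only [Pi.add_apply]; have := hε i; linarith
      have hsrcdom : bump (Tpr a₀ b₀ x ((u k : Fin n → ℝ)) v) a₀ (fun i => ε i / 2) ∈
          IntervalDom n A α β := by
        apply bump_dom (Tpr_dom hx hukD hvD)
        rw [Tpr_a]; exact hsrccol
      have hfsrc : f (bump (Tpr a₀ b₀ x ((u k : Fin n → ℝ)) v) a₀ (fun i => ε i / 2)) = a₀ :=
        (mem_choice_iff.1 hT) _ (fun i => by have := hε i; positivity) hsrcdom
      apply pad_core hp hsrcdom hdom hfsrc
      intro i; right; intro c hc
      have eT1 : bump (Tpr a₀ b₀ x ((ylim : Fin n → ℝ)) v) a₀ ε a₀ i = x i + ε i := by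
        rw [bump_same, Tpr_a]; simp
      have eS1 : bump (Tpr a₀ b₀ x ((u k : Fin n → ℝ)) v) a₀ (fun j => ε j / 2) a₀ i
          = x i + ε i / 2 := by rw [bump_same, Tpr_a]; simp
      have eT2 : bump (Tpr a₀ b₀ x ((ylim : Fin n → ℝ)) v) a₀ ε c i
          = Tpr a₀ b₀ x ((ylim : Fin n → ℝ)) v c i := by rw [bump_ne _ hc]
      have eS2 : bump (Tpr a₀ b₀ x ((u k : Fin n → ℝ)) v) a₀ (fun j => ε j / 2) c i
          = Tpr a₀ b₀ x ((u k : Fin n → ℝ)) v c i := by rw [bump_ne _ hc]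
      rw [eT1, eS1, eT2, eS2]
      by_cases h1 : c = b₀
      · rw [h1, Tpr_b h₀, Tpr_b h₀]
        have hlb : (ylim : Fin n → ℝ) i - ε i / 2 < (u k : Fin n → ℝ) i :=
          lt_of_le_of_lt (le_max_right _ _) (hk i).1
        have := hε i; linarith
      · rw [Tpr_o hc h1, Tpr_o hc h1]
        have := hε i; linarith
end

section
/- (Representation of Social Welfare Ordering) Let 𝔻 ⊆ ℝⁿ be open and convex, and let R be an ordering on 𝔻 satisfying weak Pareto, invariance, and continuity. Then there exists a weight vector λ ∈ ℝⁿ with λ ≥ 0 componentwise and λ ≠ 0 such that for all x, y ∈ 𝔻: x R y if and only if Σ_{i=1}^n λ_i x_i ≥ Σ_{i=1}^n λ_i y_i. -/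
set_option maxHeartbeats 4000000 in

/-- Representation of Social Welfare Ordering: an ordering `R` on an
open convex set `D ⊆ ℝⁿ` satisfying weak Pareto, invariance and continuity is
represented by a non-zero non-negative weight vector `lam`:
`x R y ↔ ∑ i, lam i * x i ≥ ∑ i, lam i * y i`.  Here `P x y := R x y ∧ ¬ R y x`
and `I x y := R x y ∧ R y x`. -/
theorem representation_of_social_welfare_ordering
    {n : ℕ} (hn : 0 < n) (D : Set (Fin n → ℝ))
    (hopen : IsOpen D) (hconv : Convex ℝ D)
    (R : (Fin n → ℝ) → (Fin n → ℝ) → Prop)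
    (hrefl : ∀ x ∈ D, R x x)
    (hcomplete : ∀ x ∈ D, ∀ y ∈ D, R x y ∨ R y x)
    (htrans : ∀ x ∈ D, ∀ y ∈ D, ∀ z ∈ D, R x y → R y z → R x z)
    (hWP : ∀ x ∈ D, ∀ y ∈ D, (∀ i, y i < x i) → (R x y ∧ ¬ R y x))
    (hInv : ∀ x ∈ D, ∀ y ∈ D, ∀ z : Fin n → ℝ, x + z ∈ D → y + z ∈ D →
      ((R x y ∧ ¬ R y x) → (R (x + z) (y + z) ∧ ¬ R (y + z) (x + z))) ∧
      ((R x y ∧ R y x) → (R (x + z) (y + z) ∧ R (y + z) (x + z))))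
    (hCont : ∀ x ∈ D,
      IsClosed {y : ↥D | R ↑y x} ∧ IsClosed {y : ↥D | R x ↑y}) :
    ∃ lam : Fin n → ℝ, (∀ i, 0 ≤ lam i) ∧ lam ≠ 0 ∧
      ∀ x ∈ D, ∀ y ∈ D,
        (R x y ↔ ∑ i, lam i * y i ≤ ∑ i, lam i * x i) := by
  classical
  by_cases hne : ∃ x, x ∈ D
  swap
  · refine ⟨fun _ => 1, fun i => zero_le_one, ?_, ?_⟩
    · intro h
      have := congrFun h ⟨0, hn⟩
      simpa using this
    · intro x hx
      exact absurd ⟨x, hx⟩ hne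
  obtain ⟨x0, hx0⟩ := hne
  obtain ⟨ε, hε, hball⟩ := Metric.isOpen_iff.mp hopen x0 hx0
  set ρ : ℝ := ε / 3 with hρdef
  have hρ : 0 < ρ := by positivity
  -- membership helper
  have hmem : ∀ u : Fin n → ℝ, ‖u‖ ≤ 2 * ρ → x0 + u ∈ D := by
    intro u hu
    apply hball
    rw [Metric.mem_ball, dist_eq_norm]
    have : x0 + u - x0 = u := by abel
    rw [this]
    linarith
  -- translation invariance of R (weak part)
  have hR_shift : ∀ a ∈ D, ∀ b ∈ D, ∀ z : Fin n → ℝ, a + z ∈ D → b + z ∈ D →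
      R a b → R (a + z) (b + z) := by
    intro a ha b hb z haz hbz hab
    by_cases hba : R b a
    · exact ((hInv a ha b hb z haz hbz).2 ⟨hab, hba⟩).1
    · exact ((hInv a ha b hb z haz hbz).1 ⟨hab, hba⟩).1
  -- relation only depends on differences
  have hRmove : ∀ a ∈ D, ∀ b ∈ D, ∀ c ∈ D, ∀ d ∈ D, c - a = d - b → R a b → R c d := by
    intro a ha b hb c hc d hd hcd hab
    have h1 : a + (c - a) = c := by abel
    have h2 : b + (c - a) = d := by
      rw [hcd]; abel
    have := hR_shift a ha b hb (c - a) (by rw [h1]; exact hc) (by rw [h2]; exact hd) hab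
    rwa [h1, h2] at this
  have hPmove : ∀ a ∈ D, ∀ b ∈ D, ∀ c ∈ D, ∀ d ∈ D, c - a = d - b →
      (R a b ∧ ¬ R b a) → (R c d ∧ ¬ R d c) := by
    intro a ha b hb c hc d hd hcd hab
    refine ⟨hRmove a ha b hb c hc d hd hcd hab.1, fun hdc => hab.2 ?_⟩
    have : b - d = a - c := by
      rw [← neg_sub, ← hcd, neg_sub]
    exact hRmove d hd c hc b hb a ha this hdc
  have hmem' : ∀ u : Fin n → ℝ, ‖u‖ ≤ 2 * ρ → x0 - u ∈ D := by
    intro u hu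
    rw [sub_eq_add_neg]
    exact hmem (-u) (by rwa [norm_neg])
  obtain ⟨F1, hF1closed, hF1⟩ := isClosed_induced_iff.mp (hCont x0 hx0).1
  obtain ⟨F2, hF2closed, hF2⟩ := isClosed_induced_iff.mp (hCont x0 hx0).2
  have hF1mem : ∀ p ∈ D, (p ∈ F1 ↔ R p x0) := by
    intro p hp
    have := Set.ext_iff.mp hF1 ⟨p, hp⟩
    simpa using this
  have hF2mem : ∀ p ∈ D, (p ∈ F2 ↔ R x0 p) := by
    intro p hp
    have := Set.ext_iff.mp hF2 ⟨p, hp⟩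
    simpa using this
  set C : Set (Fin n → ℝ) := {v | ‖v‖ ≤ ρ ∧ x0 + v ∈ F1} with hCdef
  have hCmem : ∀ v : Fin n → ℝ, ‖v‖ ≤ ρ → (v ∈ C ↔ R (x0 + v) x0) := by
    intro v hv
    have hvD : x0 + v ∈ D := hmem v (by linarith)
    constructor
    · intro h
      exact (hF1mem _ hvD).1 h.2
    · intro h
      exact ⟨hv, (hF1mem _ hvD).2 h⟩
  have hCnorm : ∀ v ∈ C, ‖v‖ ≤ ρ := fun v hv => hv.1
  have hCclosed : IsClosed C := by
    have h1 : IsClosed {v : Fin n → ℝ | ‖v‖ ≤ ρ} := isClosed_le continuous_norm continuous_const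
    have h2 : IsClosed {v : Fin n → ℝ | x0 + v ∈ F1} :=
      hF1closed.preimage (continuous_const.add continuous_id)
    exact h1.inter h2
  -- midpoint convexity of C
  have hmid : ∀ v ∈ C, ∀ w ∈ C, (2⁻¹ : ℝ) • (v + w) ∈ C := by
    intro v hv w hw
    have hvn : ‖v‖ ≤ ρ := hv.1
    have hwn : ‖w‖ ≤ ρ := hw.1
    set m : Fin n → ℝ := (2⁻¹ : ℝ) • (v + w) with hm
    set u : Fin n → ℝ := (2⁻¹ : ℝ) • (v - w) with hu
    have habs : |(2⁻¹ : ℝ)| = 2⁻¹ := abs_of_pos (by norm_num)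
    have hmn : ‖m‖ ≤ ρ := by
      rw [hm, norm_smul, Real.norm_eq_abs, habs]
      have := norm_add_le v w
      linarith
    have hun : ‖u‖ ≤ ρ := by
      rw [hu, norm_smul, Real.norm_eq_abs, habs]
      have := norm_sub_le v w
      linarith
    have hvD : x0 + v ∈ D := hmem v (by linarith)
    have hwD : x0 + w ∈ D := hmem w (by linarith)
    have hmD : x0 + m ∈ D := hmem m (by linarith)
    have hmD' : x0 - m ∈ D := hmem' m (by linarith)
    have huD : x0 + u ∈ D := hmem u (by linarith)
    have huD' : x0 - u ∈ D := hmem' u (by linarith)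
    rw [hCmem _ hmn]
    by_contra hno
    have h0m : R x0 (x0 + m) := (hcomplete _ hmD _ hx0).resolve_left hno
    have hPm0 : R (x0 - m) x0 ∧ ¬ R x0 (x0 - m) := by
      apply hPmove x0 hx0 (x0 + m) hmD (x0 - m) hmD' x0 hx0 ?_ ⟨h0m, hno⟩
      abel
    have hRv : R (x0 + v) x0 := (hCmem v hvn).1 hv
    have hRw : R (x0 + w) x0 := (hCmem w hwn).1 hw
    have h1 : R (x0 + u) (x0 - m) := by
      apply hRmove (x0 + v) hvD x0 hx0 (x0 + u) huD (x0 - m) hmD' ?_ hRv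
      rw [hu, hm]; module
    have h2 : R (x0 - u) (x0 - m) := by
      apply hRmove (x0 + w) hwD x0 hx0 (x0 - u) huD' (x0 - m) hmD' ?_ hRw
      rw [hu, hm]; module
    have hPu0 : R (x0 + u) x0 ∧ ¬ R x0 (x0 + u) := by
      refine ⟨htrans _ huD _ hmD' _ hx0 h1 hPm0.1, fun h0u => ?_⟩
      exact hPm0.2 (htrans _ hx0 _ huD _ hmD' h0u h1)
    have hPu0' : R (x0 - u) x0 ∧ ¬ R x0 (x0 - u) := by
      refine ⟨htrans _ huD' _ hmD' _ hx0 h2 hPm0.1, fun h0u => ?_⟩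
      exact hPm0.2 (htrans _ hx0 _ huD' _ hmD' h0u h2)
    have hmoved : R x0 (x0 - u) ∧ ¬ R (x0 - u) x0 := by
      apply hPmove (x0 + u) huD x0 hx0 x0 hx0 (x0 - u) huD' ?_ hPu0
      abel
    exact hmoved.2 hPu0'.1
  -- convexity of C
  have hCconv : Convex ℝ C := by
    intro v hv w hw a b ha hb hab
    set g : ℝ → Fin n → ℝ := fun t => t • v + (1 - t) • w with hg
    have hgcont : Continuous g := by fun_prop
    set T : Set ℝ := {t | t ∈ Set.Icc (0 : ℝ) 1 ∧ g t ∈ C} with hT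
    have hTclosed : IsClosed T := isClosed_Icc.inter (hCclosed.preimage hgcont)
    have h0T : (0 : ℝ) ∈ T := by
      refine ⟨by simp, ?_⟩
      have : g 0 = w := by rw [hg]; simp
      rw [this]; exact hw
    have h1T : (1 : ℝ) ∈ T := by
      refine ⟨by simp, ?_⟩
      have : g 1 = v := by rw [hg]; simp
      rw [this]; exact hv
    have hTmid : ∀ s ∈ T, ∀ t ∈ T, (2⁻¹ : ℝ) * (s + t) ∈ T := by
      intro s hs t ht
      refine ⟨⟨?_, ?_⟩, ?_⟩
      · have h1 : (0:ℝ) ≤ s := hs.1.1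
        have h2 : (0:ℝ) ≤ t := ht.1.1
        linarith
      · have h1 : s ≤ (1:ℝ) := hs.1.2
        have h2 : t ≤ (1:ℝ) := ht.1.2
        linarith
      have hgm : g (2⁻¹ * (s + t)) = (2⁻¹ : ℝ) • (g s + g t) := by
        rw [hg]; simp only; module
      rw [hgm]
      exact hmid _ hs.2 _ ht.2
    have hIccT : ∀ t ∈ Set.Icc (0 : ℝ) 1, t ∈ T := by
      by_contra hcon
      push_neg at hcon
      obtain ⟨t, htIcc, htT⟩ := hcon
      set A : Set ℝ := T ∩ Set.Icc 0 t with hA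
      set B : Set ℝ := T ∩ Set.Icc t 1 with hB
      have hAclosed : IsClosed A := hTclosed.inter isClosed_Icc
      have hBclosed : IsClosed B := hTclosed.inter isClosed_Icc
      have hAne : A.Nonempty := ⟨0, h0T, ⟨le_refl 0, htIcc.1⟩⟩
      have hBne : B.Nonempty := ⟨1, h1T, ⟨htIcc.2, le_refl 1⟩⟩
      have hAbdd : BddAbove A := ⟨t, fun s hs => hs.2.2⟩
      have hBbdd : BddBelow B := ⟨t, fun s hs => hs.2.1⟩
      set a' := sSup A with ha'
      set b' := sInf B with hb'
      have haA : a' ∈ A := hAclosed.csSup_mem hAne hAbdd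
      have hbB : b' ∈ B := hBclosed.csInf_mem hBne hBbdd
      have ha't : a' < t := lt_of_le_of_ne haA.2.2 (fun h => htT (h ▸ haA.1))
      have hb't : t < b' := lt_of_le_of_ne hbB.2.1 (fun h => htT (h ▸ hbB.1))
      have hmidT : (2⁻¹ : ℝ) * (a' + b') ∈ T := hTmid a' haA.1 b' hbB.1
      have h0a : (0:ℝ) ≤ a' := haA.2.1
      have hb1 : b' ≤ (1:ℝ) := hbB.2.2
      rcases le_or_gt ((2⁻¹ : ℝ) * (a' + b')) t with hle | hlt
      · have hmA : (2⁻¹ : ℝ) * (a' + b') ∈ A := ⟨hmidT, ⟨by linarith, hle⟩⟩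
        have := le_csSup hAbdd hmA
        rw [← ha'] at this
        linarith
      · have hmB : (2⁻¹ : ℝ) * (a' + b') ∈ B := ⟨hmidT, ⟨hlt.le, by linarith⟩⟩
        have := csInf_le hBbdd hmB
        rw [← hb'] at this
        linarith
    have hga : g a = a • v + b • w := by
      simp only [hg]
      rw [show (1:ℝ) - a = b by linarith]
    rw [← hga]
    exact (hIccT a ⟨ha, by linarith⟩).2
  -- positive vectors belong to C
  have hCpos : ∀ v : Fin n → ℝ, ‖v‖ ≤ ρ → (∀ i, 0 < v i) → v ∈ C := by
    intro v hv hpos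
    rw [hCmem v hv]
    refine (hWP (x0 + v) (hmem v (by linarith)) x0 hx0 (fun i => ?_)).1
    have := hpos i
    simp only [Pi.add_apply]
    linarith
  set U : Set (Fin n → ℝ) := {v | ‖v‖ < ρ} ∩ Set.univ.pi (fun _ => Set.Ioi (0:ℝ)) with hU
  have hUopen : IsOpen U := by
    apply IsOpen.inter
    · exact isOpen_lt continuous_norm continuous_const
    · exact isOpen_set_pi Set.finite_univ (fun i _ => isOpen_Ioi)
  have hUC : U ⊆ C := fun v hv => hCpos v hv.1.le (fun i => hv.2 i (Set.mem_univ i))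
  set p : Fin n → ℝ := fun _ => ρ / 2 with hp
  have hpU : p ∈ U := by
    constructor
    · show ‖p‖ < ρ
      rw [pi_norm_lt_iff hρ]
      intro i
      rw [hp]
      simp only [Real.norm_eq_abs]
      rw [abs_of_pos (by linarith)]
      linarith
    · intro i _
      show (0:ℝ) < ρ / 2
      linarith
  have hpInt : p ∈ interior C := interior_maximal hUC hUopen hpU
  have h0notin : (0 : Fin n → ℝ) ∉ interior C := by
    intro h0
    rw [mem_interior_iff_mem_nhds, Metric.mem_nhds_iff] at h0
    obtain ⟨r, hr, hrsub⟩ := h0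
    set δ : ℝ := min (r / 2) ρ with hδ
    have hδpos : 0 < δ := lt_min (by linarith) hρ
    set q : Fin n → ℝ := fun _ => -δ with hqd
    have hqn : ‖q‖ ≤ δ := by
      rw [pi_norm_le_iff_of_nonneg hδpos.le]
      intro j
      rw [hqd]
      simp [abs_of_pos hδpos]
    have hqC : q ∈ C := by
      apply hrsub
      rw [mem_ball_zero_iff]
      have := min_le_left (r/2) ρ
      calc ‖q‖ ≤ δ := hqn
        _ < r := by rw [hδ]; exact lt_of_le_of_lt (min_le_left _ _) (by linarith)
    have hqR : R (x0 + q) x0 := (hCmem q (le_trans hqn (min_le_right _ _))).1 hqC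
    have hqD : x0 + q ∈ D := hmem q (le_trans hqn (by linarith [min_le_right (r/2) ρ]))
    refine (hWP x0 hx0 (x0 + q) hqD (fun i => ?_)).2 hqR
    simp only [Pi.add_apply, hqd]
    linarith
  -- separation
  obtain ⟨f, hf⟩ := geometric_hahn_banach_open_point hCconv.interior isOpen_interior h0notin
  have hfneg : ∀ a ∈ interior C, f a < 0 := by
    intro a ha
    have := hf a ha
    rwa [map_zero] at this
  have hfC : ∀ v ∈ C, f v ≤ 0 := by
    intro v hv
    by_contra hpos
    push_neg at hpos
    have hfp : f p < 0 := hfneg p hpInt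
    set q : ℝ := f v - f p with hq
    have hqpos : 0 < q := by linarith
    set e : ℝ := f v / q with he
    have he0 : 0 < e := by positivity
    have he1 : e < 1 := by
      rw [he, div_lt_one hqpos]
      linarith
    have hcombo : e • p + (1 - e) • v ∈ interior C :=
      hCconv.combo_interior_closure_mem_interior hpInt (subset_closure hv) he0 (by linarith)
        (by ring)
    have hval := hfneg _ hcombo
    rw [map_add, map_smul, map_smul] at hval
    simp only [smul_eq_mul] at hval
    have heq : e * q = f v := by
      rw [he]
      field_simp
    have hexp : e * f p + (1 - e) * f v = f v - e * q := by
      rw [hq]; ring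
    rw [hexp, heq] at hval
    simp at hval
  -- the weight vector
  set lam : Fin n → ℝ := fun i => -f (fun j => if i = j then (1:ℝ) else 0) with hlam
  have hfsum : ∀ v : Fin n → ℝ, ∑ i, lam i * v i = -f v := by
    intro v
    calc ∑ i, lam i * v i
        = ∑ i, -(v i * f (fun j => if i = j then (1:ℝ) else 0)) := by
          refine Finset.sum_congr rfl (fun i _ => ?_)
          simp only [hlam]
          ring
      _ = -∑ i, v i * f (fun j => if i = j then (1:ℝ) else 0) := by
          rw [Finset.sum_neg_distrib]
      _ = -f v := by
          conv_rhs => rw [pi_eq_sum_univ v]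
          rw [map_sum]
          simp only [map_smul, smul_eq_mul]
  have hlamsum : ∀ v ∈ C, 0 ≤ ∑ i, lam i * v i := by
    intro v hv
    rw [hfsum]
    linarith [hfC v hv]
  have hlamnn : ∀ i, 0 ≤ lam i := by
    intro i
    by_contra hneg
    push_neg at hneg
    set L : ℝ := ∑ j, lam j with hL
    have key : ∀ δ : ℝ, 0 < δ → δ ≤ ρ/2 → 0 ≤ δ * L + (ρ/2) * lam i := by
      intro δ hδ hδρ
      set u : Fin n → ℝ := fun j => δ + if i = j then ρ/2 else 0 with hudef
      have hun : ‖u‖ ≤ ρ := by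
        rw [pi_norm_le_iff_of_nonneg hρ.le]
        intro j
        simp only [hudef, Real.norm_eq_abs]
        by_cases h : i = j
        · rw [if_pos h]
          rw [abs_of_pos (by linarith)]
          linarith
        · rw [if_neg h, add_zero, abs_of_pos hδ]
          linarith
      have huC : u ∈ C := by
        refine hCpos u hun (fun j => ?_)
        simp only [hudef]
        by_cases h : i = j
        · rw [if_pos h]; linarith
        · rw [if_neg h, add_zero]; exact hδ
      have hsum := hlamsum u huC
      have hcomp : ∑ j, lam j * u j = δ * L + (ρ/2) * lam i := by
        simp only [hudef, mul_add, mul_ite, mul_zero]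
        rw [Finset.sum_add_distrib]
        congr 1
        · rw [← Finset.sum_mul, hL, mul_comm]
        · rw [Finset.sum_ite_eq]
          simp [mul_comm]
      rw [hcomp] at hsum
      exact hsum
    have hc : 0 < (ρ/2) * (-lam i) := mul_pos (by linarith) (by linarith)
    set c : ℝ := (ρ/2) * (-lam i) with hcdef
    set d : ℝ := c / (2 * (|L| + 1)) with hd
    have hdpos : 0 < d := by positivity
    set δ : ℝ := min (ρ/2) d with hδdef
    have hδpos : 0 < δ := lt_min (by linarith) hdpos
    have h1 := key δ hδpos (min_le_left _ _)
    have h2 : δ * L ≤ |L| * d := by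
      calc δ * L ≤ |δ * L| := le_abs_self _
        _ = δ * |L| := by rw [abs_mul, abs_of_pos hδpos]
        _ ≤ d * |L| := mul_le_mul_of_nonneg_right (min_le_right _ _) (abs_nonneg L)
        _ = |L| * d := by ring
    have hdc : d * (2 * (|L| + 1)) = c := by
      rw [hd]
      field_simp
    have h3 : |L| * d < c := by nlinarith [abs_nonneg L]
    have h4 : (ρ/2) * lam i = -c := by rw [hcdef]; ring
    linarith
  have hlamne : lam ≠ 0 := by
    intro h
    have h1 : f p < 0 := hfneg p hpInt
    have h2 : ∑ i, lam i * p i = -f p := hfsum p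
    rw [h] at h2
    simp only [Pi.zero_apply, zero_mul, Finset.sum_const_zero] at h2
    linarith
  have hLpos : 0 < ∑ j, lam j := by
    obtain ⟨i, hi⟩ := Function.ne_iff.mp hlamne
    have hi' : lam i ≠ 0 := by simpa using hi
    exact Finset.sum_pos' (fun j _ => hlamnn j)
      ⟨i, Finset.mem_univ i, lt_of_le_of_ne (hlamnn i) (Ne.symm hi')⟩
  -- local strict preference
  have hlocP : ∀ v : Fin n → ℝ, ‖v‖ < ρ → 0 < ∑ i, lam i * v i →
      R (x0 + v) x0 ∧ ¬ R x0 (x0 + v) := by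
    intro v hv hsum
    have hvD : x0 + v ∈ D := hmem v (by linarith)
    have hnot : ¬ R x0 (x0 + v) := by
      intro hv0
      set L : ℝ := ∑ j, lam j with hL
      set S : ℝ := ∑ i, lam i * v i with hS
      set δ : ℝ := min ((ρ - ‖v‖)/2) (S / (2 * L)) with hδdef
      have hδ1 : 0 < (ρ - ‖v‖)/2 := by linarith
      have hδ2 : 0 < S / (2 * L) := by positivity
      have hδpos : 0 < δ := lt_min hδ1 hδ2
      have hδa : δ ≤ (ρ - ‖v‖)/2 := min_le_left _ _
      have hδb : δ ≤ S / (2 * L) := min_le_right _ _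
      set w : Fin n → ℝ := fun j => δ - v j with hwdef
      set s : Fin n → ℝ := fun j => v j - δ with hsdef
      have hvj : ∀ j, |v j| ≤ ‖v‖ := by
        intro j
        have := norm_le_pi_norm v j
        rwa [Real.norm_eq_abs] at this
      have hwn : ‖w‖ ≤ ρ := by
        rw [pi_norm_le_iff_of_nonneg hρ.le]
        intro j
        simp only [hwdef, Real.norm_eq_abs]
        have h1 := abs_le.mp (hvj j)
        rw [abs_le]
        constructor <;> linarith [h1.1, h1.2]
      have hsn : ‖s‖ ≤ ρ := by
        rw [pi_norm_le_iff_of_nonneg hρ.le]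
        intro j
        simp only [hsdef, Real.norm_eq_abs]
        have h1 := abs_le.mp (hvj j)
        rw [abs_le]
        constructor <;> linarith [h1.1, h1.2]
      have hsD : x0 + s ∈ D := hmem s (by linarith)
      have hwD : x0 + w ∈ D := hmem w (by linarith)
      have hP1 : R (x0 + v) (x0 + s) ∧ ¬ R (x0 + s) (x0 + v) := by
        refine hWP (x0 + v) hvD (x0 + s) hsD (fun j => ?_)
        simp only [Pi.add_apply, hsdef]
        linarith
      have hP2 : R x0 (x0 + s) ∧ ¬ R (x0 + s) x0 := by
        refine ⟨htrans _ hx0 _ hvD _ hsD hv0 hP1.1, fun hs0 => ?_⟩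
        exact hP1.2 (htrans _ hsD _ hx0 _ hvD hs0 hv0)
      have hPw : R (x0 + w) x0 ∧ ¬ R x0 (x0 + w) := by
        apply hPmove x0 hx0 (x0 + s) hsD (x0 + w) hwD x0 hx0 ?_ hP2
        funext j
        simp only [Pi.sub_apply, Pi.add_apply, hwdef, hsdef]
        ring
      have hwC : w ∈ C := (hCmem w hwn).2 hPw.1
      have h0 := hlamsum w hwC
      have hcomp : ∑ j, lam j * w j = δ * L - S := by
        simp only [hwdef, mul_sub, hS, hL]
        rw [Finset.sum_sub_distrib]
        congr 1
        rw [← Finset.sum_mul, mul_comm]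
      rw [hcomp] at h0
      have hδL : δ * L ≤ S / 2 := by
        have h1 := mul_le_mul_of_nonneg_right hδb hLpos.le
        have hL0 : L ≠ 0 := ne_of_gt hLpos
        have heq : S / (2 * L) * L = S / 2 := by
          field_simp
        rw [heq] at h1
        exact h1
      linarith
    exact ⟨(hcomplete _ hvD _ hx0).resolve_right hnot, hnot⟩
  -- the constant-one vector
  have honen : ‖(fun _ : Fin n => (1:ℝ))‖ ≤ 1 := by
    rw [pi_norm_le_iff_of_nonneg zero_le_one]
    intro j
    simp
  -- local indifference
  have hlocI : ∀ v : Fin n → ℝ, ‖v‖ < ρ → (∑ i, lam i * v i) = 0 →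
      R (x0 + v) x0 ∧ R x0 (x0 + v) := by
    intro v hv hsum
    have hvD : x0 + v ∈ D := hmem v (by linarith)
    set c : ℝ := (ρ - ‖v‖)/2 with hc
    have hcpos : 0 < c := by linarith
    set δk : ℕ → ℝ := fun k => c * (1 / ((k:ℝ) + 1)) with hδk
    have hδkpos : ∀ k, 0 < δk k := by
      intro k
      simp only [hδk]
      positivity
    have hδkle : ∀ k, δk k ≤ c := by
      intro k
      simp only [hδk]
      rw [mul_le_iff_le_one_right hcpos] at *
      rw [div_le_one (by positivity)]
      have : (0:ℝ) ≤ (k:ℝ) := by positivity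
      linarith
    have hδktend : Filter.Tendsto δk Filter.atTop (nhds 0) := by
      have h1 := tendsto_one_div_add_atTop_nhds_zero_nat.const_mul c
      rw [mul_zero] at h1
      simp only [hδk]
      simpa [one_div] using h1
    set onev : Fin n → ℝ := fun _ => (1:ℝ) with honev
    have hLone : ∀ t : ℝ, ∑ i, lam i * (v + t • onev) i = t * (∑ j, lam j) := by
      intro t
      calc ∑ i, lam i * (v + t • onev) i = ∑ i, (lam i * v i + lam i * t) := by
            refine Finset.sum_congr rfl (fun i _ => ?_)
            simp only [Pi.add_apply, Pi.smul_apply, honev, smul_eq_mul, mul_one]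
            ring
        _ = (∑ i, lam i * v i) + ∑ i, lam i * t := Finset.sum_add_distrib
        _ = t * (∑ j, lam j) := by
            rw [hsum, zero_add, ← Finset.sum_mul, mul_comm]
    have hLone2 : ∀ t : ℝ, ∑ i, lam i * (t • onev - v) i = t * (∑ j, lam j) := by
      intro t
      calc ∑ i, lam i * (t • onev - v) i = ∑ i, (lam i * t - lam i * v i) := by
            refine Finset.sum_congr rfl (fun i _ => ?_)
            simp only [Pi.sub_apply, Pi.smul_apply, honev, smul_eq_mul, mul_one]
            ring
        _ = (∑ i, lam i * t) - ∑ i, lam i * v i := Finset.sum_sub_distrib _ _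
        _ = t * (∑ j, lam j) := by
            rw [hsum, sub_zero, ← Finset.sum_mul, mul_comm]
    have honevn : ∀ t : ℝ, 0 < t → ‖t • onev‖ ≤ t := by
      intro t ht
      rw [norm_smul, Real.norm_eq_abs, abs_of_pos ht]
      calc t * ‖onev‖ ≤ t * 1 := mul_le_mul_of_nonneg_left honen ht.le
        _ = t := mul_one t
    have hpart1 : R (x0 + v) x0 := by
      have hF : ∀ k : ℕ, x0 + (v + δk k • onev) ∈ F1 ∧ x0 + (v + δk k • onev) ∈ D := by
        intro k
        have hnk : ‖v + δk k • onev‖ < ρ := by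
          calc ‖v + δk k • onev‖ ≤ ‖v‖ + ‖δk k • onev‖ := norm_add_le _ _
            _ ≤ ‖v‖ + δk k := by linarith [honevn (δk k) (hδkpos k)]
            _ ≤ ‖v‖ + c := by linarith [hδkle k]
            _ < ρ := by rw [hc]; linarith
        have hsk : 0 < ∑ i, lam i * (v + δk k • onev) i := by
          rw [hLone]
          exact mul_pos (hδkpos k) hLpos
        have hP := hlocP _ hnk hsk
        have hD : x0 + (v + δk k • onev) ∈ D := hmem _ (by linarith)
        exact ⟨(hF1mem _ hD).2 hP.1, hD⟩
      have htendpt : Filter.Tendsto (fun k => x0 + (v + δk k • onev)) Filter.atTop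
          (nhds (x0 + v)) := by
        have h1 : Filter.Tendsto (fun k => δk k • onev) Filter.atTop (nhds ((0:ℝ) • onev)) :=
          hδktend.smul_const onev
        rw [zero_smul] at h1
        have h2 := h1.const_add v
        rw [add_zero] at h2
        exact h2.const_add x0
      have hmemF1 : x0 + v ∈ F1 :=
        hF1closed.mem_of_tendsto htendpt (Filter.Eventually.of_forall (fun k => (hF k).1))
      exact (hF1mem _ hvD).1 hmemF1
    have hpart2 : R x0 (x0 + v) := by
      have hF : ∀ k : ℕ, x0 + (v - δk k • onev) ∈ F2 ∧ x0 + (v - δk k • onev) ∈ D := by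
        intro k
        set u : Fin n → ℝ := δk k • onev - v with hudef
        have hnu : ‖u‖ < ρ := by
          calc ‖u‖ ≤ ‖δk k • onev‖ + ‖v‖ := norm_sub_le _ _
            _ ≤ δk k + ‖v‖ := by linarith [honevn (δk k) (hδkpos k)]
            _ ≤ c + ‖v‖ := by linarith [hδkle k]
            _ < ρ := by rw [hc]; linarith
        have hnw : ‖v - δk k • onev‖ < ρ := by
          have hne : -(v - δk k • onev) = u := by rw [hudef]; abel
          rw [← norm_neg, hne]
          exact hnu
        have hsu : 0 < ∑ i, lam i * u i := by
          rw [hudef, hLone2]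
          exact mul_pos (hδkpos k) hLpos
        have hP := hlocP u hnu hsu
        have huD : x0 + u ∈ D := hmem u (by linarith)
        have hwD : x0 + (v - δk k • onev) ∈ D := hmem _ (by linarith)
        have hPmoved : R x0 (x0 + (v - δk k • onev)) ∧ ¬ R (x0 + (v - δk k • onev)) x0 := by
          apply hPmove (x0 + u) huD x0 hx0 x0 hx0 (x0 + (v - δk k • onev)) hwD ?_ hP
          rw [hudef]
          abel
        exact ⟨(hF2mem _ hwD).2 hPmoved.1, hwD⟩
      have htendpt : Filter.Tendsto (fun k => x0 + (v - δk k • onev)) Filter.atTop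
          (nhds (x0 + v)) := by
        have h1 : Filter.Tendsto (fun k => δk k • onev) Filter.atTop (nhds ((0:ℝ) • onev)) :=
          hδktend.smul_const onev
        rw [zero_smul] at h1
        have h2 := h1.const_sub v
        rw [sub_zero] at h2
        exact h2.const_add x0
      have hmemF2 : x0 + v ∈ F2 :=
        hF2closed.mem_of_tendsto htendpt (Filter.Eventually.of_forall (fun k => (hF k).1))
      exact (hF2mem _ hvD).1 hmemF2
    exact ⟨hpart1, hpart2⟩
  -- global strict preference
  have hglobP : ∀ x ∈ D, ∀ y ∈ D, 0 < ∑ i, lam i * (x i - y i) →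
      (R x y ∧ ¬ R y x) := by
    intro x hx y hy hsum
    obtain ⟨N, hN⟩ := exists_nat_gt (‖x - y‖ / ρ)
    have hN0 : 0 < (N:ℝ) := lt_of_le_of_lt (by positivity) hN
    have hNnat : 0 < N := by exact_mod_cast hN0
    set d : Fin n → ℝ := (N:ℝ)⁻¹ • (x - y) with hd
    have hdn : ‖d‖ < ρ := by
      rw [hd, norm_smul, Real.norm_eq_abs, abs_of_pos (by positivity)]
      have h1 : ‖x - y‖ < (N:ℝ) * ρ := by
        have := (div_lt_iff₀ hρ).mp hN
        linarith
      rw [inv_mul_lt_iff₀ hN0]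
      linarith
    have hdsum : 0 < ∑ i, lam i * d i := by
      have heq : ∑ i, lam i * d i = (N:ℝ)⁻¹ * ∑ i, lam i * (x i - y i) := by
        rw [Finset.mul_sum]
        refine Finset.sum_congr rfl (fun i _ => ?_)
        simp only [hd, Pi.smul_apply, Pi.sub_apply, smul_eq_mul]
        ring
      rw [heq]
      positivity
    have hstep0 := hlocP d hdn hdsum
    set z : ℕ → (Fin n → ℝ) := fun k => y + ((k:ℝ)/(N:ℝ)) • (x - y) with hz
    have hzD : ∀ k : ℕ, k ≤ N → z k ∈ D := by
      intro k hk
      have h1 : (0:ℝ) ≤ 1 - (k:ℝ)/(N:ℝ) := by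
        have : (k:ℝ)/(N:ℝ) ≤ 1 := by
          rw [div_le_one hN0]
          exact_mod_cast hk
        linarith
      have h2 : (0:ℝ) ≤ (k:ℝ)/(N:ℝ) := by positivity
      have h3 := hconv hy hx h1 h2 (by ring)
      have h4 : (1 - (k:ℝ)/(N:ℝ)) • y + ((k:ℝ)/(N:ℝ)) • x = z k := by
        rw [hz]
        module
      rwa [h4] at h3
    have hstep : ∀ k : ℕ, k < N → R (z (k+1)) (z k) ∧ ¬ R (z k) (z (k+1)) := by
      intro k hk
      apply hPmove (x0 + d) (hmem d (by linarith)) x0 hx0 (z (k+1)) (hzD (k+1) hk)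
        (z k) (hzD k hk.le) ?_ hstep0
      rw [hz, hd]
      simp only
      push_cast
      match_scalars <;> field_simp <;> ring
    have hchain : ∀ k : ℕ, k < N → R (z (k+1)) y ∧ ¬ R y (z (k+1)) := by
      intro k
      induction k with
      | zero =>
        intro hk
        have h := hstep 0 hk
        have hz0 : z 0 = y := by
          rw [hz]
          simp
        rwa [hz0] at h
      | succ k ih =>
        intro hk
        have h1 := ih (by omega)
        have h2 := hstep (k+1) hk
        have hky : z (k+1) ∈ D := hzD (k+1) (by omega)
        have hk2 : z (k+1+1) ∈ D := hzD (k+1+1) hk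
        refine ⟨htrans _ hk2 _ hky _ hy h2.1 h1.1, fun hyz => ?_⟩
        exact h1.2 (htrans _ hy _ hk2 _ hky hyz h2.1)
    obtain ⟨M, hM⟩ : ∃ M, N = M + 1 := ⟨N - 1, by omega⟩
    have hfin := hchain M (by omega)
    have hzN : z (M+1) = x := by
      simp only [hz]
      have h1 : ((M+1:ℕ):ℝ)/(N:ℝ) = 1 := by
        rw [hM]
        have : ((M+1:ℕ):ℝ) ≠ 0 := by positivity
        field_simp
      rw [h1, one_smul]
      abel
    rwa [hzN] at hfin
  -- global weak preference for equal values
  have hglobR : ∀ x ∈ D, ∀ y ∈ D, (∑ i, lam i * (x i - y i)) = 0 → R x y := by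
    intro x hx y hy hsum
    obtain ⟨N, hN⟩ := exists_nat_gt (‖x - y‖ / ρ)
    have hN0 : 0 < (N:ℝ) := lt_of_le_of_lt (by positivity) hN
    have hNnat : 0 < N := by exact_mod_cast hN0
    set d : Fin n → ℝ := (N:ℝ)⁻¹ • (x - y) with hd
    have hdn : ‖d‖ < ρ := by
      rw [hd, norm_smul, Real.norm_eq_abs, abs_of_pos (by positivity)]
      have h1 : ‖x - y‖ < (N:ℝ) * ρ := by
        have := (div_lt_iff₀ hρ).mp hN
        linarith
      rw [inv_mul_lt_iff₀ hN0]
      linarith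
    have hdsum : ∑ i, lam i * d i = 0 := by
      have heq : ∑ i, lam i * d i = (N:ℝ)⁻¹ * ∑ i, lam i * (x i - y i) := by
        rw [Finset.mul_sum]
        refine Finset.sum_congr rfl (fun i _ => ?_)
        simp only [hd, Pi.smul_apply, Pi.sub_apply, smul_eq_mul]
        ring
      rw [heq, hsum, mul_zero]
    have hstep0 := (hlocI d hdn hdsum).1
    set z : ℕ → (Fin n → ℝ) := fun k => y + ((k:ℝ)/(N:ℝ)) • (x - y) with hz
    have hzD : ∀ k : ℕ, k ≤ N → z k ∈ D := by
      intro k hk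
      have h1 : (0:ℝ) ≤ 1 - (k:ℝ)/(N:ℝ) := by
        have : (k:ℝ)/(N:ℝ) ≤ 1 := by
          rw [div_le_one hN0]
          exact_mod_cast hk
        linarith
      have h2 : (0:ℝ) ≤ (k:ℝ)/(N:ℝ) := by positivity
      have h3 := hconv hy hx h1 h2 (by ring)
      have h4 : (1 - (k:ℝ)/(N:ℝ)) • y + ((k:ℝ)/(N:ℝ)) • x = z k := by
        rw [hz]
        module
      rwa [h4] at h3
    have hstep : ∀ k : ℕ, k < N → R (z (k+1)) (z k) := by
      intro k hk
      apply hRmove (x0 + d) (hmem d (by linarith)) x0 hx0 (z (k+1)) (hzD (k+1) hk)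
        (z k) (hzD k hk.le) ?_ hstep0
      rw [hz, hd]
      simp only
      push_cast
      match_scalars <;> field_simp <;> ring
    have hchain : ∀ k : ℕ, k < N → R (z (k+1)) y := by
      intro k
      induction k with
      | zero =>
        intro hk
        have h := hstep 0 hk
        have hz0 : z 0 = y := by
          rw [hz]
          simp
        rwa [hz0] at h
      | succ k ih =>
        intro hk
        have h1 := ih (by omega)
        have h2 := hstep (k+1) hk
        have hky : z (k+1) ∈ D := hzD (k+1) (by omega)
        have hk2 : z (k+1+1) ∈ D := hzD (k+1+1) hk
        exact htrans _ hk2 _ hky _ hy h2 h1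
    obtain ⟨M, hM⟩ : ∃ M, N = M + 1 := ⟨N - 1, by omega⟩
    have hfin := hchain M (by omega)
    have hzN : z (M+1) = x := by
      simp only [hz]
      have h1 : ((M+1:ℕ):ℝ)/(N:ℝ) = 1 := by
        rw [hM]
        have : ((M+1:ℕ):ℝ) ≠ 0 := by positivity
        field_simp
      rw [h1, one_smul]
      abel
    rwa [hzN] at hfin
  -- conclusion
  refine ⟨lam, hlamnn, hlamne, ?_⟩
  intro x hx y hy
  have hdiff : ∀ a b : Fin n → ℝ, ∑ i, lam i * (a i - b i) =
      ∑ i, lam i * a i - ∑ i, lam i * b i := by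
    intro a b
    rw [← Finset.sum_sub_distrib]
    exact Finset.sum_congr rfl (fun i _ => by ring)
  constructor
  · intro hR
    by_contra hlt
    push_neg at hlt
    have h1 : 0 < ∑ i, lam i * (y i - x i) := by
      rw [hdiff]
      linarith
    exact (hglobP y hy x hx h1).2 hR
  · intro hle
    rcases eq_or_lt_of_le hle with heq | hlt
    · exact hglobR x hx y hy (by rw [hdiff]; linarith)
    · exact (hglobP x hx y hy (by rw [hdiff]; linarith)).1
end
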